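/- arXiv:2304.11021 — 8 statements merged into one kernel-verified Lean document; each statement's English description precedes it below -/
import Mathlib

section
/- There is no doubly Eulerian graph of odd order n ≥ 3 containing a vertex of degree n − 1. -/
open SimpleGraph

/-- Two closed walks from the same vertex are *avoiding* if at every intermediate
step their current vertices are distinct and non-adjacent. -/
def Avoiding {V : Type*} (G : SimpleGraph V) {u : V} (p q : G.Walk u u) : Prop :=
  ∀ i : ℕ, 0 < i → i < p.length →
    p.getVert i ≠ q.getVert i ∧ ¬ G.Adj (p.getVert i) (q.getVert i)

/-- A graph is *doubly Eulerian* if from every vertex there exist two avoiding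
Eulerian circuits. -/
def DoublyEulerian {V : Type*} [DecidableEq V] (G : SimpleGraph V) : Prop :=
  ∀ u : V, ∃ p q : G.Walk u u, p.IsEulerian ∧ q.IsEulerian ∧ Avoiding G p q



lemma edge_count_aux {V : Type*} [DecidableEq V] {G : SimpleGraph V} (v : V) :
    ∀ {a b : V} (p : G.Walk a b),
      (∀ i, 0 < i → i < p.length → p.getVert i ≠ v) →
      p.edges.countP (fun e => v ∈ e) ≤
        (if a = v then 1 else 0) + (if b = v then 1 else 0) := by
  intro a b p
  induction p with
  | nil => intro _; simp
  | @cons a c b h q ih =>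
    intro hint
    rcases Nat.eq_zero_or_pos q.length with h0 | hpos
    · have hcb : c = b := by
        have := q.getVert_length
        rw [h0, q.getVert_zero] at this; exact this
      have : q.edges = [] := List.length_eq_zero_iff.mp (by rw [q.length_edges, h0])
      rw [Walk.edges_cons, this]
      by_cases hav : v ∈ s(a, c)
      · rcases Sym2.mem_iff.mp hav with rfl | rfl
        · simp [List.countP_cons, hav]
        · simp [List.countP_cons, hav, hcb.symm]
      · simp [List.countP_cons, hav]
    · have hc : c ≠ v := by
        have := hint 1 one_pos (by simp [Walk.length_cons]; omega)
        rwa [Walk.getVert_cons q h one_ne_zero, Nat.sub_self, Walk.getVert_zero] at this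
      have hq : ∀ i, 0 < i → i < q.length → q.getVert i ≠ v := by
        intro i hi hil
        have := hint (i + 1) (by omega) (by simp [Walk.length_cons]; omega)
        rwa [Walk.getVert_cons_succ q h] at this
      have hiq := ih hq
      rw [Walk.edges_cons, List.countP_cons]
      by_cases hav : v ∈ s(a, c)
      · have ha : a = v := by
          rcases Sym2.mem_iff.mp hav with rfl | rfl
          · rfl
          · exact absurd rfl hc
        simp only [if_neg hc] at hiq
        simp [hav, ha]
        omega
      · simp only [if_neg hc] at hiq
        simp [hav]
        omega

lemma countP_filter_aux {α} [DecidableEq α] (l : List α) (hl : l.Nodup) (pr : α → Prop)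
    [DecidablePred pr] :
    (Finset.filter pr ⟨↑l, hl⟩).card = l.countP (fun a => decide (pr a)) := by
  simp [Finset.filter, List.countP_eq_length_filter]

/-- There is no doubly Eulerian graph of odd order `n ≥ 3` containing a vertex of
degree `n - 1`. -/
theorem not_doublyEulerian_of_odd_order_max_degree
    {V : Type*} [Fintype V] [DecidableEq V] (G : SimpleGraph V) [DecidableRel G.Adj]
    (n : ℕ) (hcard : Fintype.card V = n) (hodd : Odd n) (hn : 3 ≤ n)
    (hconn : G.Connected) (heven : ∀ v : V, Even (G.degree v))
    (v : V) (hdeg : G.degree v = n - 1) :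
    ¬ DoublyEulerian G := by
  intro hDE
  obtain ⟨p, q, hp, hq, hav⟩ := hDE v
  -- v is adjacent to every other vertex
  have hne : G.neighborFinset v = Finset.univ.erase v := by
    apply Finset.eq_of_subset_of_card_le
    · intro x hx
      refine Finset.mem_erase.mpr ⟨?_, Finset.mem_univ x⟩
      intro h
      exact G.irrefl (h ▸ (G.mem_neighborFinset v x).mp hx)
    · rw [Finset.card_erase_of_mem (Finset.mem_univ v), Finset.card_univ, hcard,
        G.card_neighborFinset_eq_degree, hdeg]
  have hadj : ∀ x : V, x ≠ v → G.Adj v x := by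
    intro x hx
    exact (G.mem_neighborFinset v x).mp
      (hne ▸ Finset.mem_erase.mpr ⟨hx, Finset.mem_univ x⟩)
  -- lengths agree
  have hlenp : p.length = G.edgeFinset.card := by
    rw [← p.length_edges, ← hp.edgesFinset_eq]; rfl
  have hlenq : q.length = G.edgeFinset.card := by
    rw [← q.length_edges, ← hq.edgesFinset_eq]; rfl
  have hlen : p.length = q.length := by rw [hlenp, hlenq]
  -- interior vertices avoid v
  have hpint : ∀ i, 0 < i → i < p.length → p.getVert i ≠ v := by
    intro i hi hil heq
    obtain ⟨h1, h2⟩ := hav i hi hil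
    rw [heq] at h1 h2
    exact h2 (hadj _ (Ne.symm h1))
  have hqint : ∀ i, 0 < i → i < q.length → q.getVert i ≠ v := by
    intro i hi hil heq
    obtain ⟨h1, h2⟩ := hav i hi (hlen ▸ hil)
    rw [heq] at h1 h2
    exact h2 ((hadj _ h1).symm)
  -- degree of v is at most 2
  have hd2 : G.degree v ≤ 2 := by
    have h1 := edge_count_aux v p hpint
    have h2 : G.degree v = p.edges.countP (fun e => v ∈ e) := by
      rw [← G.card_incidenceFinset_eq_degree, G.incidenceFinset_eq_filter,
        ← hp.edgesFinset_eq]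
      exact countP_filter_aux p.edges hp.isTrail.edges_nodup (fun e => v ∈ e)
    simp at h1
    omega
  have hn3 : n = 3 := by omega
  have hV3 : Fintype.card V = 3 := by rw [hcard, hn3]
  -- any two distinct non-v vertices are adjacent
  have hadj2 : ∀ x y : V, x ≠ v → y ≠ v → x ≠ y → G.Adj x y := by
    intro x y hxv hyv hxy
    have hx1 : G.Adj v x := hadj x hxv
    have hdx : G.degree x = 2 := by
      have hlt : G.degree x < Fintype.card V := G.degree_lt_card_verts x
      have hpos : 0 < G.degree x := by
        rw [← G.card_neighborFinset_eq_degree]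
        exact Finset.card_pos.mpr ⟨v, (G.mem_neighborFinset x v).mpr hx1.symm⟩
      obtain ⟨k, hk⟩ := heven x
      omega
    have hnx : G.neighborFinset x = Finset.univ.erase x := by
      apply Finset.eq_of_subset_of_card_le
      · intro z hz
        refine Finset.mem_erase.mpr ⟨?_, Finset.mem_univ z⟩
        intro h
        exact G.irrefl (h ▸ (G.mem_neighborFinset x z).mp hz)
      · rw [Finset.card_erase_of_mem (Finset.mem_univ x), Finset.card_univ, hV3,
          G.card_neighborFinset_eq_degree, hdx]
    exact (G.mem_neighborFinset x y).mp
      (hnx ▸ Finset.mem_erase.mpr ⟨hxy.symm, Finset.mem_univ y⟩)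
  -- p has length at least 2
  have hppos : 0 < p.length := by
    obtain ⟨x, hx⟩ := Fintype.exists_ne_of_one_lt_card (by omega : 1 < Fintype.card V) v
    have he : s(v, x) ∈ G.edgeSet := hadj x hx
    have : s(v, x) ∈ p.edges := hp.mem_edges_iff.mpr he
    rw [← p.length_edges]
    exact List.length_pos_iff.mpr (List.ne_nil_of_mem this)
  have hqpos : 0 < q.length := hlen ▸ hppos
  have hp1 : p.length ≠ 1 := by
    intro h
    have := p.adj_getVert_succ (by omega : 0 < p.length)
    rw [p.getVert_zero] at this
    have h2 : p.getVert 1 = v := by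
      have := p.getVert_length
      rwa [h] at this
    rw [h2] at this
    exact G.irrefl this
  have hp2 : 1 < p.length := by omega
  -- final contradiction at step 1
  have hxp : G.Adj v (p.getVert 1) := by
    have := p.adj_getVert_succ hppos
    rwa [p.getVert_zero] at this
  have hxq : G.Adj v (q.getVert 1) := by
    have := q.adj_getVert_succ hqpos
    rwa [q.getVert_zero] at this
  obtain ⟨h1, h2⟩ := hav 1 one_pos hp2
  exact h2 (hadj2 _ _ (G.ne_of_adj hxp).symm (G.ne_of_adj hxq).symm h1)
end

section
/- There is no doubly Eulerian graph of even order n ≥ 4 containing a vertex of degree n − 2. -/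
open SimpleGraph

section Aux

variable {V : Type*} [DecidableEq V] {G : SimpleGraph V}

lemma count_aux' {x y : V} (p : G.Walk x y) (w : V) :
    p.edges.countP (fun e => decide (w ∈ e)) + (if x = w then 1 else 0) + (if y = w then 1 else 0)
      = 2 * ∑ i ∈ Finset.range (p.length + 1), (if p.getVert i = w then 1 else 0) := by
  induction p with
  | nil =>
    simp only [SimpleGraph.Walk.length_nil, zero_add, Finset.sum_range_one,
      SimpleGraph.Walk.getVert_zero, SimpleGraph.Walk.edges_nil, List.countP_nil]
    omega
  | @cons a b c h p ih =>
    rw [SimpleGraph.Walk.edges_cons, List.countP_cons, SimpleGraph.Walk.length_cons,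
      Finset.sum_range_succ']
    simp only [SimpleGraph.Walk.getVert_cons_succ, SimpleGraph.Walk.getVert_zero]
    have hsplit : (if (fun e => decide (w ∈ e)) s(a, b) = true then 1 else 0)
        = (if a = w then 1 else 0) + (if b = w then 1 else 0) := by
      have hne : a ≠ b := h.ne
      simp only [decide_eq_true_eq, Sym2.mem_iff]
      split_ifs <;> aesop
    rw [hsplit, Nat.mul_add]
    grind

lemma countP_eulerian' [Fintype V] [DecidableRel G.Adj] {x y : V} {p : G.Walk x y}
    (hp : p.IsEulerian) (w : V) :
    p.edges.countP (fun e => decide (w ∈ e)) = G.degree w := by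
  have h1 : p.edges.countP (fun e => decide (w ∈ e))
      = (hp.isTrail.edgesFinset.filter (fun e => w ∈ e)).card := by
    rw [← Multiset.coe_countP, Multiset.countP_eq_card_filter]
    rfl
  rw [h1, hp.edgesFinset_eq, ← SimpleGraph.incidenceFinset_eq_filter,
    SimpleGraph.card_incidenceFinset_eq_degree]

lemma length_eulerian' [Fintype V] [DecidableRel G.Adj] {x y : V} {p : G.Walk x y}
    (hp : p.IsEulerian) : p.length = G.edgeFinset.card := by
  rw [← SimpleGraph.Walk.length_edges, ← hp.edgesFinset_eq]
  rfl

end Aux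

/-- There is no doubly Eulerian graph of even order `n ≥ 4` containing a vertex of
degree `n - 2`. -/
theorem not_doublyEulerian_of_even_order_degree_sub_two
    {V : Type*} [Fintype V] [DecidableEq V] (G : SimpleGraph V) [DecidableRel G.Adj]
    (n : ℕ) (hcard : Fintype.card V = n) (heven_n : Even n) (hn : 4 ≤ n)
    (hconn : G.Connected) (heven : ∀ v : V, Even (G.degree v))
    (u : V) (hdeg : G.degree u = n - 2) :
    ¬ DoublyEulerian G := by
  intro hDE
  classical
  -- the set of non-neighbors of u (other than u itself) has exactly one element v
  set s : Finset V := Finset.univ \ insert u (G.neighborFinset u) with hs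
  have hins : (insert u (G.neighborFinset u)).card = n - 1 := by
    rw [Finset.card_insert_of_notMem (G.notMem_neighborFinset_self u),
      SimpleGraph.card_neighborFinset_eq_degree, hdeg]
    omega
  have hscard : s.card = 1 := by
    rw [hs, Finset.card_sdiff_of_subset (Finset.subset_univ _), Finset.card_univ, hcard, hins]
    omega
  obtain ⟨v, hv⟩ := Finset.card_eq_one.mp hscard
  have hvmem : v ∈ s := by rw [hv]; exact Finset.mem_singleton_self v
  have hvprop : v ≠ u ∧ ¬ G.Adj u v := by
    rw [hs, Finset.mem_sdiff, Finset.mem_insert, SimpleGraph.mem_neighborFinset] at hvmem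
    tauto
  have hvu : v ≠ u := hvprop.1
  have huniq : ∀ w : V, w ≠ u → ¬ G.Adj u w → w = v := by
    intro w h1 h2
    have hwmem : w ∈ s := by
      rw [hs, Finset.mem_sdiff, Finset.mem_insert, SimpleGraph.mem_neighborFinset]
      exact ⟨Finset.mem_univ w, by tauto⟩
    rw [hv, Finset.mem_singleton] at hwmem
    exact hwmem
  obtain ⟨p, q, hp, hq, hav⟩ := hDE v
  set m := G.edgeFinset.card with hm
  have hlp : p.length = m := length_eulerian' hp
  have hlq : q.length = m := length_eulerian' hq
  -- m ≥ 1
  have hdegpos : 0 < G.degree u := by omega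
  have hne : (G.neighborFinset u).Nonempty := Finset.card_pos.mp
    (by rw [SimpleGraph.card_neighborFinset_eq_degree]; omega)
  obtain ⟨a, ha⟩ := hne
  have hm1 : 1 ≤ m := by
    apply Finset.card_pos.mpr
    exact ⟨s(u, a), by rw [SimpleGraph.mem_edgeFinset]; exact (SimpleGraph.mem_neighborFinset G u a).mp ha⟩
  obtain ⟨k, hk⟩ : ∃ k, m = k + 1 := ⟨m - 1, by omega⟩
  -- count for p at u
  have e1 := count_aux' p u
  rw [countP_eulerian' hp u, if_neg hvu, hlp, hk,
    Finset.sum_range_succ, Finset.sum_range_succ'] at e1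
  have hpz : p.getVert 0 = v := SimpleGraph.Walk.getVert_zero p
  have hpl : p.getVert (k + 1) = v := by
    have h := SimpleGraph.Walk.getVert_length p
    rwa [hlp, hk] at h
  rw [if_neg (show ¬ p.getVert 0 = u by rw [hpz]; exact hvu),
    if_neg (show ¬ p.getVert (k + 1) = u by rw [hpl]; exact hvu)] at e1
  -- count for q at v
  have e2 := count_aux' q v
  rw [countP_eulerian' hq v, if_pos rfl, hlq, hk,
    Finset.sum_range_succ, Finset.sum_range_succ'] at e2
  have hqz : q.getVert 0 = v := SimpleGraph.Walk.getVert_zero q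
  have hql : q.getVert (k + 1) = v := by
    have : q.getVert q.length = v := SimpleGraph.Walk.getVert_length q
    rwa [hlq, hk] at this
  rw [if_pos hqz, if_pos hql] at e2
  -- pointwise comparison on interior indices
  have hle : (∑ i ∈ Finset.range k, if p.getVert (i + 1) = u then 1 else 0)
      ≤ (∑ i ∈ Finset.range k, if q.getVert (i + 1) = v then 1 else 0) := by
    apply Finset.sum_le_sum
    intro i hi
    by_cases hpi : p.getVert (i + 1) = u
    · have hi' : i + 1 < p.length := by
        rw [hlp, hk]; exact Nat.succ_lt_succ (Finset.mem_range.mp hi)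
      have h := hav (i + 1) (Nat.succ_pos i) hi'
      rw [hpi] at h
      have hqv : q.getVert (i + 1) = v :=
        huniq _ (Ne.symm h.1) h.2
      simp [hpi, hqv]
    · simp [hpi]
  -- degree of v is at most n - 2
  have hdegv : G.degree v ≤ n - 2 := by
    have hsub : G.neighborFinset v ⊆ Finset.univ \ {u, v} := by
      intro w hw
      rw [SimpleGraph.mem_neighborFinset] at hw
      rw [Finset.mem_sdiff, Finset.mem_insert, Finset.mem_singleton]
      refine ⟨Finset.mem_univ w, ?_⟩
      rintro (rfl | rfl)
      · exact hvprop.2 hw.symm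
      · exact G.irrefl hw
    have hcard2 : (Finset.univ \ ({u, v} : Finset V)).card = n - 2 := by
      rw [Finset.card_sdiff_of_subset (Finset.subset_univ _), Finset.card_univ, hcard,
        Finset.card_pair (Ne.symm hvu)]
    rw [← SimpleGraph.card_neighborFinset_eq_degree]
    exact le_trans (Finset.card_le_card hsub) (le_of_eq hcard2)
  omega
end

section
/- Let G be a bipartite Eulerian graph admitting a subgraph K isomorphic to K_{3,2} such that removing the edges of K leaves G connected. Then for any vertex v of G lying in the 3-element part of K, there exist two avoiding Eulerian circuits of G starting and ending at v. -/
set_option linter.unusedSectionVars false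
set_option linter.unusedVariables false
set_option linter.unreachableTactic false
set_option linter.unusedTactic false
set_option maxHeartbeats 1000000


open SimpleGraph

section EulerAux

variable {V : Type*} [Fintype V] [DecidableEq V]

namespace AvoidAux

/-- incidence set of a delete-one-edge graph -/
lemma inc_delete (G : SimpleGraph V) (a b z : V) :
    ((G.deleteEdges {s(a,b)}).incidenceSet z) = G.incidenceSet z \ {s(a,b)} := by
  ext e
  simp only [incidenceSet, edgeSet_deleteEdges, Set.mem_setOf_eq, Set.mem_diff,
    Set.mem_singleton_iff, Set.mem_sep_iff]
  tauto

lemma odd_inc_delete (G : SimpleGraph V) {a b : V} (hab : G.Adj a b) (z : V) :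
    Odd (((G.deleteEdges {s(a,b)}).incidenceSet z).ncard) ↔
      ((z = a ∨ z = b) ↔ Even ((G.incidenceSet z).ncard)) := by
  rw [inc_delete]
  by_cases hz : z = a ∨ z = b
  · have hmem : s(a,b) ∈ G.incidenceSet z := by
      rcases hz with rfl | rfl
      · exact G.mk'_mem_incidenceSet_left_iff.mpr hab
      · exact G.mk'_mem_incidenceSet_right_iff.mpr hab
    have hfin : (G.incidenceSet z).Finite := Set.toFinite _
    have := Set.ncard_diff_singleton_add_one hmem hfin
    rw [iff_true_intro hz, true_iff, ← this, Nat.even_add_one, Nat.not_even_iff_odd]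
  · have : s(a,b) ∉ G.incidenceSet z := fun h => hz (Sym2.mem_iff.mp h.2)
    rw [Set.diff_singleton_eq_self this, iff_false_intro hz, false_iff, Nat.not_even_iff_odd]

end AvoidAux

namespace AvoidAux

lemma ncard_inc_eq_degree (G : SimpleGraph V) [DecidableRel G.Adj] (z : V) :
    (G.incidenceSet z).ncard = G.degree z := by
  rw [← card_incidenceSet_eq_degree, Set.ncard_eq_toFinset_card', Set.toFinset_card]

lemma not_unique_odd (G : SimpleGraph V) [DecidableRel G.Adj] (z₀ : V)
    (h : ∀ z, Odd ((G.incidenceSet z).ncard) ↔ z = z₀) : False := by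
  have hh := G.even_card_odd_degree_vertices
  have : (Finset.univ.filter fun v => Odd (G.degree v)) = {z₀} := by
    ext z
    simp [← ncard_inc_eq_degree, h]
  rw [this] at hh
  simp at hh

/-- The "component" of `w` in `H`, as a spanning subgraph keeping only edges whose
endpoints reach `w`. -/
def comp (H : SimpleGraph V) (w : V) : SimpleGraph V where
  Adj a b := H.Adj a b ∧ H.Reachable a w
  symm := ⟨fun a b ⟨hab, har⟩ => ⟨hab.symm, hab.symm.reachable.trans har⟩⟩
  loopless := ⟨fun a ⟨hab, _⟩ => H.loopless.irrefl a hab⟩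

lemma comp_le (H : SimpleGraph V) (w : V) : comp H w ≤ H := fun _ _ h => h.1

def comp_walk (H : SimpleGraph V) (w : V) : ∀ {a : V}, H.Walk a w → (comp H w).Walk a w
  | _, SimpleGraph.Walk.nil => SimpleGraph.Walk.nil
  | _, SimpleGraph.Walk.cons h p => SimpleGraph.Walk.cons ⟨h, ⟨SimpleGraph.Walk.cons h p⟩⟩ (comp_walk H w p)

lemma comp_reachable (H : SimpleGraph V) (w : V) {a : V} (h : H.Reachable a w) :
    (comp H w).Reachable a w := ⟨comp_walk H w h.some⟩

lemma comp_inc_of_reach (H : SimpleGraph V) (w : V) {z : V} (h : H.Reachable z w) :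
    (comp H w).incidenceSet z = H.incidenceSet z := by
  ext e
  induction e with
  | h a b =>
    simp only [incidenceSet, Set.mem_setOf_eq, mem_edgeSet, comp]
    constructor
    · rintro ⟨ha, hz⟩; exact ⟨ha.1, hz⟩
    · rintro ⟨ha, hz⟩
      refine ⟨⟨ha, ?_⟩, hz⟩
      rcases Sym2.mem_iff.mp hz with h1 | h1
      · exact h1 ▸ h
      · exact ha.reachable.trans (h1 ▸ h)

lemma comp_inc_of_not_reach (H : SimpleGraph V) (w : V) {z : V} (h : ¬ H.Reachable z w) :
    (comp H w).incidenceSet z = ∅ := by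
  ext e
  induction e with
  | h a b =>
    simp only [incidenceSet, Set.mem_setOf_eq, mem_edgeSet, comp, Set.mem_empty_iff_false,
      iff_false]
    rintro ⟨⟨ha, hr⟩, hz⟩
    rcases Sym2.mem_iff.mp hz with rfl | rfl
    · exact h hr
    · exact h (ha.symm.reachable.trans hr)

/-- rerouting: in `H = G - wy`, reachability to `w` in `G` splits. -/
lemma reach_split (G : SimpleGraph V) (w y : V) :
    ∀ {a : V}, G.Walk a w →
    (G.deleteEdges {s(w,y)}).Reachable a w ∨ (G.deleteEdges {s(w,y)}).Reachable a y
  | _, SimpleGraph.Walk.nil => Or.inl (SimpleGraph.Reachable.refl _)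
  | a, SimpleGraph.Walk.cons (v := c) h p => by
    have ih := reach_split G w y p
    by_cases he : s(a, c) = s(w, y)
    · rcases Sym2.eq_iff.mp he with ⟨h1, h2⟩ | ⟨h1, h2⟩
      · exact Or.inl (h1 ▸ SimpleGraph.Reachable.refl _)
      · exact Or.inr (h1 ▸ SimpleGraph.Reachable.refl _)
    · have hadj : (G.deleteEdges {s(w,y)}).Adj a c := by
        simp only [deleteEdges_adj, Set.mem_singleton_iff]
        exact ⟨h, he⟩
      rcases ih with h1 | h1
      · exact Or.inl (hadj.reachable.trans h1)
      · exact Or.inr (hadj.reachable.trans h1)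

lemma neighbor_of_reach {G : SimpleGraph V} {a w : V} (p : G.Walk a w) :
    a = w ∨ ∃ c, G.Adj w c := by
  induction p with
  | nil => exact Or.inl rfl
  | @cons a c _ h p ih =>
    rcases ih with rfl | hc
    · exact Or.inr ⟨a, h.symm⟩
    · exact Or.inr hc

end AvoidAux

namespace AvoidAux
open SimpleGraph.Walk

lemma mapLe_edges {G G' : SimpleGraph V} (h : G ≤ G') {a b : V} (p : G.Walk a b) :
    (p.mapLe h).edges = p.edges := by
  induction p with
  | nil => rfl
  | cons hadj p ih => simp [Walk.mapLe, ih]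

lemma mapLe_length {G G' : SimpleGraph V} (h : G ≤ G') {a b : V} (p : G.Walk a b) :
    (p.mapLe h).length = p.length := by
  induction p with
  | nil => rfl
  | cons hadj p ih => simp [Walk.mapLe, ih]

lemma mapLe_getVert {G G' : SimpleGraph V} (h : G ≤ G') {a b : V} (p : G.Walk a b) (i : ℕ) :
    (p.mapLe h).getVert i = p.getVert i := by
  induction p generalizing i with
  | nil => rfl
  | cons hadj p ih =>
    cases i with
    | zero => rfl
    | succ n => simpa [Walk.mapLe, Walk.getVert] using ih n

/-- A trail never has the same vertex two steps apart. -/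
lemma trail_getVert_ne {G : SimpleGraph V} {a b : V} {p : G.Walk a b} (hp : p.IsTrail)
    {j : ℕ} (hj : j + 2 ≤ p.length) : p.getVert j ≠ p.getVert (j + 2) := by
  induction p generalizing j with
  | nil => simp at hj
  | @cons a c b hadj p ih =>
    cases j with
    | zero =>
      simp only [Walk.getVert_zero]
      cases p with
      | nil => simp at hj
      | @cons c d b hadj2 q =>
        have h2 : (Walk.cons hadj (Walk.cons hadj2 q)).getVert 2 = d := by
          simp [Walk.getVert_cons_succ]
        rw [h2]
        intro hEq
        subst hEq
        have := hp.edges_nodup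
        simp [Sym2.eq_iff] at this
    | succ n =>
      have hp' : p.IsTrail := (Walk.isTrail_cons _ _).mp hp |>.1
      have hn : n + 2 ≤ p.length := by
        simpa [Walk.length_cons, Nat.succ_le_succ_iff] using hj
      simpa [Walk.getVert] using ih hp' hn

end AvoidAux

namespace AvoidAux

lemma count_eq_zero_of_not_edge {G1 : SimpleGraph V} {a b : V} {p : G1.Walk a b}
    {e : Sym2 V} (he : e ∉ G1.edgeSet) : p.edges.count e = 0 :=
  List.count_eq_zero_of_not_mem fun h => he (p.edges_subset_edgeSet h)

lemma euler_cons {G : SimpleGraph V} {w y x : V} (hwy : G.Adj w y)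
    (p : (G.deleteEdges {s(w,y)}).Walk y x) (hp : p.IsEulerian) :
    (Walk.cons hwy (p.mapLe (deleteEdges_le _))).IsEulerian := by
  intro e he
  rw [Walk.edges_cons, mapLe_edges, List.count_cons]
  by_cases hew : e = s(w,y)
  · have h0 : p.edges.count (s(w,y)) = 0 := by
      apply count_eq_zero_of_not_edge
      rw [edgeSet_deleteEdges]
      rintro ⟨-, h⟩
      exact h rfl
    subst hew
    simp [h0]
  · have h1 : p.edges.count e = 1 := by
      apply hp
      rw [edgeSet_deleteEdges]
      exact ⟨he, by simpa using hew⟩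
    simp [h1, Ne.symm hew]

lemma euler_glue {G G1 G2 : SimpleGraph V} {w y x : V} (hwy : G.Adj w y)
    (h1 : G1 ≤ G) (h2 : G2 ≤ G)
    (hpart : ∀ e, e ∈ G.edgeSet → (e = s(w,y) ∨ e ∈ G1.edgeSet ∨ e ∈ G2.edgeSet))
    (hd1 : s(w,y) ∉ G1.edgeSet) (hd2 : s(w,y) ∉ G2.edgeSet)
    (hdisj : ∀ e, e ∈ G1.edgeSet → e ∉ G2.edgeSet)
    {p1 : G1.Walk w w} (hp1 : p1.IsEulerian) {p2 : G2.Walk y x} (hp2 : p2.IsEulerian) :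
    ((p1.mapLe h1).append (Walk.cons hwy (p2.mapLe h2))).IsEulerian := by
  intro e he
  rw [Walk.edges_append, Walk.edges_cons, mapLe_edges, mapLe_edges, List.count_append,
    List.count_cons]
  rcases hpart e he with rfl | hmem | hmem
  · rw [count_eq_zero_of_not_edge hd1, count_eq_zero_of_not_edge hd2]
    simp
  · have hne : ¬ (e = s(w,y)) := fun h => hd1 (h ▸ hmem)
    rw [hp1 e hmem, count_eq_zero_of_not_edge (hdisj e hmem)]
    simp [Ne.symm hne]
  · have hne : ¬ (e = s(w,y)) := fun h => hd2 (h ▸ hmem)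
    rw [hp2 e hmem, count_eq_zero_of_not_edge (fun h => hdisj e h hmem)]
    simp [Ne.symm hne]

end AvoidAux

namespace AvoidAux

theorem euler_exists : ∀ n : ℕ, ∀ (G : SimpleGraph V) (w x : V),
    G.edgeSet.ncard = n →
    (∀ ⦃a b : V⦄, G.Adj a b → G.Reachable a w) →
    (∀ z : V, Odd ((G.incidenceSet z).ncard) ↔ (w ≠ x ∧ (z = w ∨ z = x))) →
    ∃ p : G.Walk w x, p.IsEulerian := by
  intro n
  induction n using Nat.strong_induction_on with
  | _ n IH =>
  intro G w x hn hreach hodd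
  by_cases hne : ∃ y, G.Adj w y
  swap
  · have hE : G.edgeSet = ∅ := by
      rw [Set.eq_empty_iff_forall_notMem]
      intro e he
      induction e with
      | h a b =>
        have hadj : G.Adj a b := he
        rcases neighbor_of_reach (hreach hadj).some with rfl | ⟨c, hc⟩
        · exact hne ⟨b, hadj⟩
        · exact hne ⟨c, hc⟩
    have hwx : w = x := by
      by_contra hwx
      have h1 := (hodd w).mpr ⟨hwx, Or.inl rfl⟩
      have h2 : G.incidenceSet w = ∅ :=
        Set.eq_empty_of_subset_empty (hE ▸ G.incidenceSet_subset w)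
      rw [h2] at h1
      simp at h1
    subst hwx
    exact ⟨Walk.nil, fun e he => absurd he (by simp [hE])⟩
  obtain ⟨y, hwy⟩ := hne
  have hHle : (G.deleteEdges {s(w,y)}) ≤ G := deleteEdges_le _
  set H := G.deleteEdges {s(w,y)} with hH
  have hesub : H.edgeSet = G.edgeSet \ {s(w,y)} := edgeSet_deleteEdges _
  have hmem : s(w,y) ∈ G.edgeSet := hwy
  have hlt : H.edgeSet.ncard < n := by
    rw [hesub, ← hn]
    exact Set.ncard_diff_singleton_lt_of_mem hmem (Set.toFinite _)
  have hwny : w ≠ y := hwy.ne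
  have hodd' : ∀ z : V, Odd ((H.incidenceSet z).ncard) ↔ (y ≠ x ∧ (z = y ∨ z = x)) := by
    intro z
    rw [hH, odd_inc_delete G hwy z, ← Nat.not_odd_iff_even, hodd z]
    by_cases h1 : z = w <;> by_cases h2 : z = y <;> by_cases h3 : z = x <;>
      by_cases h4 : w = x <;> by_cases h5 : y = x <;> subst_eqs <;> tauto
  have hsplit : ∀ a : V, G.Reachable a w → (H.Reachable a w ∨ H.Reachable a y) :=
    fun a h => reach_split G w y h.some
  by_cases hyw : H.Reachable y w
  · have hreach' : ∀ ⦃a b : V⦄, H.Adj a b → H.Reachable a y := by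
      intro a b hab
      rcases hsplit a (hreach (hHle hab)) with h | h
      · exact h.trans hyw.symm
      · exact h
    obtain ⟨p, hp⟩ := IH _ hlt H y x rfl hreach' hodd'
    exact ⟨Walk.cons hwy (p.mapLe hHle), euler_cons hwy p hp⟩
  · set G1 := comp H w with hG1
    set G2 := comp H y with hG2
    have h1le : G1 ≤ G := fun a b h => hHle h.1
    have h2le : G2 ≤ G := fun a b h => hHle h.1
    have hadj_mem : ∀ {a b : V} {GG : SimpleGraph V}, GG.Adj a b → s(a,b) ∈ GG.edgeSet :=
      fun h => h
    have hxy : y ≠ x → H.Reachable x y := by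
      intro hyx
      by_contra hxyr
      have hxodd : Odd ((H.incidenceSet x).ncard) := (hodd' x).mpr ⟨hyx, Or.inr rfl⟩
      have hxe : ∃ b, H.Adj x b := by
        have hpos : (H.incidenceSet x).Nonempty := by
          rw [Set.nonempty_iff_ne_empty]
          intro hemp
          rw [hemp] at hxodd
          simp at hxodd
        obtain ⟨e, he⟩ := hpos
        induction e with
        | h a b =>
          have hadjx : H.Adj a b := he.1
          rcases Sym2.mem_iff.mp he.2 with rfl | rfl
          · exact ⟨b, hadjx⟩
          · exact ⟨a, hadjx.symm⟩
      obtain ⟨b, hxb⟩ := hxe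
      have hxw : H.Reachable x w := by
        rcases hsplit x (hreach (hHle hxb)) with h | h
        · exact h
        · exact absurd h hxyr
      have : DecidableRel G1.Adj := Classical.decRel _
      refine not_unique_odd G1 x ?_
      intro z
      by_cases hz : H.Reachable z w
      · rw [hG1, comp_inc_of_reach H w hz, hodd' z]
        constructor
        · rintro ⟨h5, rfl | rfl⟩
          · exact absurd hz hyw
          · rfl
        · rintro rfl
          exact ⟨hyx, Or.inr rfl⟩
      · rw [hG1, comp_inc_of_not_reach H w hz]
        simp only [Set.ncard_empty]
        constructor
        · intro h; simp at h
        · rintro rfl; exact absurd hxw hz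
    have hodd1 : ∀ z : V, Odd ((G1.incidenceSet z).ncard) ↔ (w ≠ w ∧ (z = w ∨ z = w)) := by
      intro z
      simp only [ne_eq, not_true_eq_false, false_and, iff_false]
      by_cases hz : H.Reachable z w
      · rw [hG1, comp_inc_of_reach H w hz, hodd' z]
        rintro ⟨h5, rfl | rfl⟩
        · exact hyw hz
        · exact hyw ((hxy h5).symm.trans hz)
      · rw [hG1, comp_inc_of_not_reach H w hz]
        simp
    have hodd2 : ∀ z : V, Odd ((G2.incidenceSet z).ncard) ↔ (y ≠ x ∧ (z = y ∨ z = x)) := by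
      intro z
      by_cases hz : H.Reachable z y
      · rw [hG2, comp_inc_of_reach H y hz, hodd' z]
      · rw [hG2, comp_inc_of_not_reach H y hz]
        simp only [Set.ncard_empty]
        constructor
        · intro h; simp at h
        · rintro ⟨h5, rfl | rfl⟩
          · exact (hz (SimpleGraph.Reachable.refl _)).elim
          · exact (hz (hxy h5)).elim
    have hreach1 : ∀ ⦃a b : V⦄, G1.Adj a b → G1.Reachable a w :=
      fun a b h => comp_reachable H w h.2
    have hreach2 : ∀ ⦃a b : V⦄, G2.Adj a b → G2.Reachable a y :=
      fun a b h => comp_reachable H y h.2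
    have hlt1 : G1.edgeSet.ncard < n :=
      lt_of_le_of_lt (Set.ncard_le_ncard (edgeSet_mono (comp_le H w)) (Set.toFinite _)) hlt
    have hlt2 : G2.edgeSet.ncard < n :=
      lt_of_le_of_lt (Set.ncard_le_ncard (edgeSet_mono (comp_le H y)) (Set.toFinite _)) hlt
    obtain ⟨p1, hp1⟩ := IH _ hlt1 G1 w w rfl hreach1 hodd1
    obtain ⟨p2, hp2⟩ := IH _ hlt2 G2 y x rfl hreach2 hodd2
    have hd1 : s(w,y) ∉ G1.edgeSet := by
      intro h
      have : s(w,y) ∈ H.edgeSet := edgeSet_mono (comp_le H w) h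
      rw [hesub] at this
      exact this.2 rfl
    have hd2 : s(w,y) ∉ G2.edgeSet := by
      intro h
      have : s(w,y) ∈ H.edgeSet := edgeSet_mono (comp_le H y) h
      rw [hesub] at this
      exact this.2 rfl
    have hdisj : ∀ e, e ∈ G1.edgeSet → e ∉ G2.edgeSet := by
      intro e
      induction e with
      | h a b =>
        intro he1 he2
        have h1 : H.Reachable a w := he1.2
        have h2 : H.Reachable a y := he2.2
        exact hyw (h2.symm.trans h1)
    have hpart : ∀ e, e ∈ G.edgeSet → (e = s(w,y) ∨ e ∈ G1.edgeSet ∨ e ∈ G2.edgeSet) := by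
      intro e he
      by_cases hew : e = s(w,y)
      · exact Or.inl hew
      · right
        have heH : e ∈ H.edgeSet := by rw [hesub]; exact ⟨he, hew⟩
        revert heH
        induction e with
        | h a b =>
          intro heH
          have hADJ : H.Adj a b := heH
          rcases hsplit a (hreach (hHle hADJ)) with h | h
          · exact Or.inl ⟨hADJ, h⟩
          · exact Or.inr ⟨hADJ, h⟩
    exact ⟨(p1.mapLe h1le).append (Walk.cons hwy (p2.mapLe h2le)),
      euler_glue hwy h1le h2le hpart hd1 hd2 hdisj hp1 hp2⟩

end AvoidAux

end EulerAux

open AvoidAux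

/-- If a bipartite Eulerian graph `G` contains a copy of `K_{3,2}` (on vertices
`t, u, v` and `w, x`) whose edge removal leaves `G` connected, then from the
vertex `v` of the 3-element part there exist two avoiding Eulerian circuits. -/
theorem bipartite_K32_avoiding_circuits
    {V : Type*} [Fintype V] [DecidableEq V] (G : SimpleGraph V) [DecidableRel G.Adj]
    (hbip : G.Colorable 2) (hconn : G.Connected)
    (heven : ∀ y : V, Even (G.degree y))
    (t u v w x : V) (htu : t ≠ u) (htv : t ≠ v) (huv : u ≠ v) (hwx : w ≠ x)
    (htw : G.Adj t w) (htx : G.Adj t x) (huw : G.Adj u w) (hux : G.Adj u x)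
    (hvw : G.Adj v w) (hvx : G.Adj v x)
    (hdel : (G.deleteEdges {s(t, w), s(t, x), s(u, w), s(u, x), s(v, w), s(v, x)}).Connected) :
    ∃ p q : G.Walk v v, p.IsEulerian ∧ q.IsEulerian ∧ Avoiding G p q := by
  classical
  set S : Set (Sym2 V) := {s(t, w), s(t, x), s(u, w), s(u, x), s(v, w), s(v, x)} with hS
  set G' := G.deleteEdges S with hG'
  -- basic distinctness
  have htw' : t ≠ w := htw.ne
  have htx' : t ≠ x := htx.ne
  have huw' : u ≠ w := huw.ne
  have hux' : u ≠ x := hux.ne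
  have hvw' : v ≠ w := hvw.ne
  have hvx' : v ≠ x := hvx.ne
  -- chain of single deletions
  set D1 := G.deleteEdges {s(t,w)} with hD1
  set D2 := D1.deleteEdges {s(t,x)} with hD2
  set D3 := D2.deleteEdges {s(u,w)} with hD3
  set D4 := D3.deleteEdges {s(u,x)} with hD4
  set D5 := D4.deleteEdges {s(v,w)} with hD5
  set D6 := D5.deleteEdges {s(v,x)} with hD6
  have hchain : G' = D6 := by
    rw [hD6, hD5, hD4, hD3, hD2, hD1, deleteEdges_deleteEdges, deleteEdges_deleteEdges,
      deleteEdges_deleteEdges, deleteEdges_deleteEdges, deleteEdges_deleteEdges, hG', hS]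
    congr 1
  have ha1 : D1.Adj t x := by
    rw [hD1]; simp only [deleteEdges_adj, Set.mem_singleton_iff, Sym2.eq_iff]
    exact ⟨htx, by tauto⟩
  have ha2 : D2.Adj u w := by
    rw [hD2, hD1]
    simp only [deleteEdges_adj, Set.mem_singleton_iff, Sym2.eq_iff]
    refine ⟨⟨huw, ?_⟩, ?_⟩ <;> tauto
  have ha3 : D3.Adj u x := by
    rw [hD3, hD2, hD1]
    simp only [deleteEdges_adj, Set.mem_singleton_iff, Sym2.eq_iff]
    refine ⟨⟨⟨hux, ?_⟩, ?_⟩, ?_⟩ <;> tauto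
  have ha4 : D4.Adj v w := by
    rw [hD4, hD3, hD2, hD1]
    simp only [deleteEdges_adj, Set.mem_singleton_iff, Sym2.eq_iff]
    refine ⟨⟨⟨⟨hvw, ?_⟩, ?_⟩, ?_⟩, ?_⟩ <;> tauto
  have ha5 : D5.Adj v x := by
    rw [hD5, hD4, hD3, hD2, hD1]
    simp only [deleteEdges_adj, Set.mem_singleton_iff, Sym2.eq_iff]
    refine ⟨⟨⟨⟨⟨hvx, ?_⟩, ?_⟩, ?_⟩, ?_⟩, ?_⟩ <;> tauto
  have heven0 : ∀ z : V, Even ((G.incidenceSet z).ncard) := by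
    intro z; rw [ncard_inc_eq_degree]; exact heven z
  have hoddG' : ∀ z : V, Odd ((G'.incidenceSet z).ncard) ↔ (w ≠ x ∧ (z = w ∨ z = x)) := by
    intro z
    rw [hchain, hD6, odd_inc_delete D5 ha5 z, ← Nat.not_odd_iff_even, hD5,
      odd_inc_delete D4 ha4 z, ← Nat.not_odd_iff_even, hD4,
      odd_inc_delete D3 ha3 z, ← Nat.not_odd_iff_even, hD3,
      odd_inc_delete D2 ha2 z, ← Nat.not_odd_iff_even, hD2,
      odd_inc_delete D1 ha1 z, ← Nat.not_odd_iff_even, hD1,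
      odd_inc_delete G htw z, iff_true_intro (heven0 z), iff_true]
    by_cases h1 : z = t <;> by_cases h2 : z = u <;> by_cases h3 : z = v <;>
      by_cases h4 : z = w <;> by_cases h5 : z = x <;> subst_eqs <;>
      simp_all <;> tauto
  have hreachG' : ∀ ⦃a b : V⦄, G'.Adj a b → G'.Reachable a w :=
    fun a b _ => hdel.preconnected a w
  obtain ⟨T, hT⟩ := euler_exists (G'.edgeSet.ncard) G' w x rfl hreachG' hoddG'
  have hle : G' ≤ G := deleteEdges_le _
  -- coloring
  obtain ⟨C⟩ := hbip
  have fin2 : ∀ a b c : Fin 2, a ≠ c → b ≠ c → a = b := by decide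
  have hnadj : ∀ a b : V, C a = C b → ¬ G.Adj a b := fun a b hc hadj => (C.valid hadj) hc
  have hcwx : C w = C x := fin2 _ _ _ (C.valid htw.symm) (C.valid htx.symm)
  have hctu : C t = C u := fin2 _ _ _ (C.valid htw) (C.valid huw)
  -- the trail has length ≥ 2
  set L := T.length with hLdef
  have hG'edge : G'.edgeSet = G.edgeSet \ S := edgeSet_deleteEdges S
  have hG'adj : ∀ {a b : V}, G'.Adj a b → G.Adj a b ∧ s(a,b) ∉ S := by
    intro a b h
    rw [hG', deleteEdges_adj] at h
    exact h
  have hL2 : 2 ≤ L := by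
    by_contra hcon
    have : L = 0 ∨ L = 1 := by omega
    rcases this with hLL | hLL
    · have h0 : T.length = 0 := by rw [← hLdef]; exact hLL
      exact hwx (Walk.eq_of_length_eq_zero h0)
    · have h0 : 0 < T.length := by rw [← hLdef, hLL]; norm_num
      have hadj : G'.Adj (T.getVert 0) (T.getVert 1) := T.adj_getVert_succ h0
      rw [Walk.getVert_zero] at hadj
      have h1 : T.getVert 1 = x := by
        have h2 := T.getVert_length
        rw [← hLdef, hLL] at h2
        exact h2
      rw [h1] at hadj
      exact (hnadj _ _ hcwx) (hG'adj hadj).1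
  -- the two circuits
  set A := T.mapLe hle with hAdef
  have hAlen : A.length = L := mapLe_length hle T
  set tail1 : G.Walk x v :=
    Walk.cons hux.symm (Walk.cons huw (Walk.cons htw.symm (Walk.cons htx
      (Walk.cons hvx.symm Walk.nil)))) with htail1
  set tail2 : G.Walk x v :=
    Walk.cons hux.symm (Walk.cons huw (Walk.cons hvw.symm Walk.nil)) with htail2
  set p : G.Walk v v := Walk.cons hvw (A.append tail1) with hp
  set q : G.Walk v v := Walk.cons hvx (Walk.cons htx.symm (Walk.cons htw (A.append tail2)))
    with hq
  -- edge lists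
  have hAedges : A.edges = T.edges := mapLe_edges hle T
  have hpedges : p.edges = s(v,w) :: (T.edges ++ [s(x,u), s(u,w), s(w,t), s(t,x), s(x,v)]) := by
    rw [hp, Walk.edges_cons, Walk.edges_append, hAedges, htail1]
    simp
  have hqedges : q.edges
      = s(v,x) :: s(x,t) :: s(t,w) :: (T.edges ++ [s(x,u), s(u,w), s(w,v)]) := by
    rw [hq, Walk.edges_cons, Walk.edges_cons, Walk.edges_cons, Walk.edges_append, hAedges,
      htail2]
    simp
  -- counting facts
  have hTcount0 : ∀ e ∈ S, T.edges.count e = 0 := by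
    intro e he
    apply count_eq_zero_of_not_edge
    rw [hG'edge]
    rintro ⟨-, h⟩
    exact h he
  have hSmem : ∀ e : Sym2 V, e ∈ S ↔ (e = s(t,w) ∨ e = s(t,x) ∨ e = s(u,w) ∨ e = s(u,x)
      ∨ e = s(v,w) ∨ e = s(v,x)) := by
    intro e
    simp [hS]
  have hut : u ≠ t := htu.symm
  have hvt : v ≠ t := htv.symm
  have hvu : v ≠ u := huv.symm
  have hxw : x ≠ w := hwx.symm
  have hwt : w ≠ t := htw'.symm
  have hxt : x ≠ t := htx'.symm
  have hwu : w ≠ u := huw'.symm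
  have hxu : x ≠ u := hux'.symm
  have hwv : w ≠ v := hvw'.symm
  have hxv : x ≠ v := hvx'.symm
  have hpeul : p.IsEulerian := by
    intro e he
    rw [hpedges]
    by_cases heS : e ∈ S
    · have h0 := hTcount0 e heS
      rcases (hSmem e).mp heS with rfl | rfl | rfl | rfl | rfl | rfl <;>
        simp [List.count_cons, List.count_append, h0, Sym2.eq_iff, htu, htv, huv, hwx, htw',
          htx', huw', hux', hvw', hvx', hut, hvt, hvu, hxw, hwt, hxt, hwu, hxu, hwv, hxv]
    · have h1 : T.edges.count e = 1 := by
        apply hT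
        rw [hG'edge]
        exact ⟨he, heS⟩
      have hne : ∀ a b : V, s(a,b) ∈ S → ¬ (s(a,b) = e) := fun a b hab h => heS (h ▸ hab)
      have e1 : ¬ (s(v,w) = e) := hne v w (by simp [hS, Sym2.eq_iff])
      have e2 : ¬ (s(x,u) = e) := hne x u (by simp [hS, Sym2.eq_iff])
      have e3 : ¬ (s(u,w) = e) := hne u w (by simp [hS, Sym2.eq_iff])
      have e4 : ¬ (s(w,t) = e) := hne w t (by simp [hS, Sym2.eq_iff])
      have e5 : ¬ (s(t,x) = e) := hne t x (by simp [hS, Sym2.eq_iff])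
      have e6 : ¬ (s(x,v) = e) := hne x v (by simp [hS, Sym2.eq_iff])
      simp [List.count_cons, List.count_append, h1, e1, e2, e3, e4, e5, e6]
  have hqeul : q.IsEulerian := by
    intro e he
    rw [hqedges]
    by_cases heS : e ∈ S
    · have h0 := hTcount0 e heS
      rcases (hSmem e).mp heS with rfl | rfl | rfl | rfl | rfl | rfl <;>
        simp [List.count_cons, List.count_append, h0, Sym2.eq_iff, htu, htv, huv, hwx, htw',
          htx', huw', hux', hvw', hvx', hut, hvt, hvu, hxw, hwt, hxt, hwu, hxu, hwv, hxv]
    · have h1 : T.edges.count e = 1 := by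
        apply hT
        rw [hG'edge]
        exact ⟨he, heS⟩
      have hne : ∀ a b : V, s(a,b) ∈ S → ¬ (s(a,b) = e) := fun a b hab h => heS (h ▸ hab)
      have e1 : ¬ (s(v,x) = e) := hne v x (by simp [hS, Sym2.eq_iff])
      have e2 : ¬ (s(x,t) = e) := hne x t (by simp [hS, Sym2.eq_iff])
      have e3 : ¬ (s(t,w) = e) := hne t w (by simp [hS, Sym2.eq_iff])
      have e4 : ¬ (s(x,u) = e) := hne x u (by simp [hS, Sym2.eq_iff])
      have e5 : ¬ (s(u,w) = e) := hne u w (by simp [hS, Sym2.eq_iff])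
      have e6 : ¬ (s(w,v) = e) := hne w v (by simp [hS, Sym2.eq_iff])
      simp [List.count_cons, List.count_append, h1, e1, e2, e3, e4, e5, e6]
  -- length and getVert computations
  have htail1len : tail1.length = 5 := by simp [htail1]
  have htail2len : tail2.length = 3 := by simp [htail2]
  have hplen : p.length = L + 6 := by
    rw [hp]
    simp only [Walk.length_cons, Walk.length_append, hAlen, htail1len]
  have hTlast : T.getVert L = x := by
    have h2 := T.getVert_length
    rw [← hLdef] at h2
    exact h2
  have hpmid : ∀ i : ℕ, 1 ≤ i → i ≤ L + 1 → p.getVert i = T.getVert (i - 1) := by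
    intro i h1 h2
    rw [hp, Walk.getVert_cons _ _ (by omega), Walk.getVert_append]
    by_cases hiL : i - 1 < A.length
    · rw [if_pos hiL, hAdef, mapLe_getVert]
    · rw [if_neg hiL]
      rw [hAlen] at hiL
      have hi1 : i - 1 = L := by omega
      have hz : i - 1 - A.length = 0 := by rw [hAlen]; omega
      rw [hz, Walk.getVert_zero, hi1, hTlast]
  have hptail : ∀ k : ℕ, 2 ≤ k → k ≤ 5 → p.getVert (L + k) = tail1.getVert (k - 1) := by
    intro k h1 h2
    rw [hp, Walk.getVert_cons _ _ (by omega), Walk.getVert_append]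
    rw [if_neg (by rw [hAlen]; omega)]
    congr 1
    rw [hAlen]
    omega
  have hp2 : p.getVert (L + 2) = u := by rw [hptail 2 (by omega) (by omega)]; simp [htail1]
  have hp3 : p.getVert (L + 3) = w := by rw [hptail 3 (by omega) (by omega)]; simp [htail1]
  have hp4 : p.getVert (L + 4) = t := by rw [hptail 4 (by omega) (by omega)]; simp [htail1]
  have hp5 : p.getVert (L + 5) = x := by rw [hptail 5 (by omega) (by omega)]; simp [htail1]
  have hq1 : q.getVert 1 = x := by rw [hq]; rfl
  have hq2 : q.getVert 2 = t := by rw [hq]; rfl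
  have hqmid : ∀ i : ℕ, 3 ≤ i → i ≤ L + 3 → q.getVert i = T.getVert (i - 3) := by
    intro i h1 h2
    rw [hq, Walk.getVert_cons _ _ (by omega), Walk.getVert_cons _ _ (by omega),
      Walk.getVert_cons _ _ (by omega), Walk.getVert_append]
    have h3 : i - 1 - 1 - 1 = i - 3 := by omega
    rw [h3]
    by_cases hiL : i - 3 < A.length
    · rw [if_pos hiL, hAdef, mapLe_getVert]
    · rw [if_neg hiL]
      rw [hAlen] at hiL
      have hi1 : i - 3 = L := by omega
      have hz : i - 3 - A.length = 0 := by rw [hAlen]; omega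
      rw [hz, Walk.getVert_zero, hi1, hTlast]
  have hqtail : ∀ k : ℕ, 4 ≤ k → k ≤ 5 → q.getVert (L + k) = tail2.getVert (k - 3) := by
    intro k h1 h2
    rw [hq, Walk.getVert_cons _ _ (by omega), Walk.getVert_cons _ _ (by omega),
      Walk.getVert_cons _ _ (by omega), Walk.getVert_append]
    rw [if_neg (by rw [hAlen]; omega)]
    congr 1
    rw [hAlen]
    omega
  have hq4 : q.getVert (L + 4) = u := by rw [hqtail 4 (by omega) (by omega)]; simp [htail2]
  have hq5 : q.getVert (L + 5) = w := by rw [hqtail 5 (by omega) (by omega)]; simp [htail2]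
  -- color facts about the trail
  have hTadj : ∀ j : ℕ, j < L → G'.Adj (T.getVert j) (T.getVert (j + 1)) := by
    intro j hj
    exact T.adj_getVert_succ (by rw [← hLdef]; exact hj)
  refine ⟨p, q, hpeul, hqeul, ?_⟩
  intro i hi0 hilen
  rw [hplen] at hilen
  have hcases : i = 1 ∨ i = 2 ∨ (3 ≤ i ∧ i ≤ L + 1) ∨ i = L + 2 ∨ i = L + 3 ∨ i = L + 4
      ∨ i = L + 5 := by omega
  rcases hcases with rfl | rfl | ⟨h3, h4⟩ | rfl | rfl | rfl | rfl
  · -- i = 1 : (w, x)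
    have hpg : p.getVert 1 = w := by
      rw [hpmid 1 (by omega) (by omega)]
      simp [Walk.getVert_zero]
    rw [hpg, hq1]
    exact ⟨hwx, hnadj _ _ hcwx⟩
  · -- i = 2 : (T₁, t)
    have hpg : p.getVert 2 = T.getVert 1 := by rw [hpmid 2 (by omega) (by omega)]
    rw [hpg, hq2]
    have hadj1 : G'.Adj w (T.getVert 1) := by
      have := hTadj 0 (by omega)
      rwa [Walk.getVert_zero] at this
    constructor
    · intro hEq
      rw [hEq] at hadj1
      exact (hG'adj hadj1).2 (by simp [hS, Sym2.eq_iff])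
    · apply hnadj
      exact fin2 _ _ (C w) (Ne.symm (C.valid (hG'adj hadj1).1)) (C.valid htw)
  · -- mid : (T_{i-1}, T_{i-3})
    have hpg : p.getVert i = T.getVert (i - 1) := hpmid i (by omega) (by omega)
    have hqg : q.getVert i = T.getVert (i - 3) := hqmid i (by omega) (by omega)
    rw [hpg, hqg]
    have hadja : G'.Adj (T.getVert (i - 3)) (T.getVert (i - 2)) := by
      have := hTadj (i - 3) (by omega)
      rwa [show i - 3 + 1 = i - 2 by omega] at this
    have hadjb : G'.Adj (T.getVert (i - 2)) (T.getVert (i - 1)) := by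
      have := hTadj (i - 2) (by omega)
      rwa [show i - 2 + 1 = i - 1 by omega] at this
    constructor
    · have := trail_getVert_ne hT.isTrail (j := i - 3)
        (by rw [← hLdef]; omega)
      rw [show i - 3 + 2 = i - 1 by omega] at this
      exact this.symm
    · apply hnadj
      exact fin2 _ _ (C (T.getVert (i - 2))) (C.valid (hG'adj hadjb).1).symm
        (C.valid (hG'adj hadja).1)
  · -- i = L + 2 : (u, T_{L-1})
    have hqg : q.getVert (L + 2) = T.getVert (L - 1) := by
      rw [hqmid (L + 2) (by omega) (by omega)]
      congr 1
    rw [hp2, hqg]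
    have hadjL : G'.Adj (T.getVert (L - 1)) x := by
      have := hTadj (L - 1) (by omega)
      rwa [show L - 1 + 1 = L by omega, hTlast] at this
    constructor
    · intro hEq
      rw [← hEq] at hadjL
      exact (hG'adj hadjL).2 (by simp [hS, Sym2.eq_iff])
    · apply hnadj
      exact fin2 _ _ (C x) (C.valid hux) (C.valid (hG'adj hadjL).1)
  · -- i = L + 3 : (w, x)
    have hqg : q.getVert (L + 3) = x := by
      rw [hqmid (L + 3) (by omega) (by omega), show L + 3 - 3 = L by omega, hTlast]
    rw [hp3, hqg]
    exact ⟨hwx, hnadj _ _ hcwx⟩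
  · -- i = L + 4 : (t, u)
    rw [hp4, hq4]
    exact ⟨htu, hnadj _ _ hctu⟩
  · -- i = L + 5 : (x, w)
    rw [hp5, hq5]
    exact ⟨hxw, hnadj _ _ hcwx.symm⟩
end

section
/- The complete bipartite graph K_{2r,2s} with r, s ≥ 2 is doubly Eulerian. -/
open SimpleGraph

namespace DEaux



variable {V : Type*} {G : SimpleGraph V}

def walkFromFun (G : SimpleGraph V) (f : ℕ → V) :
    ∀ n, (∀ i, i < n → G.Adj (f i) (f (i+1))) → G.Walk (f 0) (f n)
  | 0, _ => Walk.nil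
  | n+1, h => Walk.cons (h 0 (Nat.succ_pos n))
      (walkFromFun G (fun i => f (i+1)) n (fun i hi => h (i+1) (by omega)))

lemma length_walkFromFun : ∀ (n : ℕ) (f : ℕ → V) h,
    (walkFromFun G f n h).length = n
  | 0, f, h => rfl
  | n+1, f, h => by
    simp only [walkFromFun, Walk.length_cons, length_walkFromFun n]

lemma getVert_walkFromFun : ∀ (n : ℕ) (f : ℕ → V) h (i : ℕ), i ≤ n →
    (walkFromFun G f n h).getVert i = f i
  | 0, f, h, i, hi => by
    interval_cases i
    rfl
  | n+1, f, h, i, hi => by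
    cases i with
    | zero => rfl
    | succ i =>
      show (walkFromFun G (fun i => f (i+1)) n _).getVert i = f (i+1)
      exact getVert_walkFromFun n _ _ i (by omega)

lemma edges_walkFromFun : ∀ (n : ℕ) (f : ℕ → V) h,
    (walkFromFun G f n h).edges = (List.range n).map (fun i => s(f i, f (i+1)))
  | 0, f, h => rfl
  | n+1, f, h => by
    show s(f 0, f 1) :: (walkFromFun G (fun i => f (i+1)) n _).edges = _
    rw [edges_walkFromFun n, List.range_succ_eq_map]
    simp [List.map_map, Function.comp]

lemma getVert_map {W : Type*} {H : SimpleGraph W} (φ : G →g H) {u v : V}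
    (p : G.Walk u v) (i : ℕ) : (p.map φ).getVert i = φ (p.getVert i) := by
  induction p generalizing i with
  | nil => rfl
  | cons h p ih =>
    cases i with
    | zero => rfl
    | succ i => simpa using ih i



lemma pairInj {R S : ℕ} {a a' : Fin R} {b b' : Fin S}
    (h : s(Sum.inl a, Sum.inr b) = s((Sum.inl a' : Fin R ⊕ Fin S), Sum.inr b')) :
    a = a' ∧ b = b' := by
  rw [Sym2.eq_iff] at h
  rcases h with ⟨h1, h2⟩ | ⟨h1, h2⟩
  · exact ⟨Sum.inl.inj h1, Sum.inr.inj h2⟩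
  · exact absurd h1 (by simp)

lemma mem_edgeSet_cbg {R S : ℕ} {e : Sym2 (Fin R ⊕ Fin S)}
    (he : e ∈ (completeBipartiteGraph (Fin R) (Fin S)).edgeSet) :
    ∃ a b, e = s(Sum.inl a, Sum.inr b) := by
  induction e with
  | _ x y =>
    rw [mem_edgeSet] at he
    rcases x with a | b <;> rcases y with a' | b' <;> simp [completeBipartiteGraph] at he
    · exact ⟨a, b', rfl⟩
    · exact ⟨a', b, Sym2.eq_swap⟩

lemma isEulerian_of_surj {R S : ℕ} {u : Fin R ⊕ Fin S}
    (w : (completeBipartiteGraph (Fin R) (Fin S)).Walk u u)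
    (g : ℕ → Sym2 (Fin R ⊕ Fin S))
    (hedges : w.edges = (List.range (R * S)).map g)
    (hsurj : ∀ (a : Fin R) (b : Fin S), ∃ i, i < R * S ∧ g i = s(Sum.inl a, Sum.inr b)) :
    w.IsEulerian := by
  rw [Walk.isEulerian_iff]
  constructor
  · -- trail
    rw [Walk.isTrail_def, hedges]
    apply List.Nodup.map_on _ List.nodup_range
    -- injectivity on range from cardinality
    have hinj : Set.InjOn g (Finset.range (R * S)) := by
      apply Finset.injOn_of_card_image_eq
      apply le_antisymm (Finset.card_image_le.trans (by simp))
      have hsub : Finset.image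
          (fun p : Fin R × Fin S => s((Sum.inl p.1 : Fin R ⊕ Fin S), Sum.inr p.2))
          Finset.univ ⊆ Finset.image g (Finset.range (R * S)) := by
        intro e he
        simp only [Finset.mem_image, Finset.mem_univ, true_and] at he
        obtain ⟨⟨a, b⟩, rfl⟩ := he
        obtain ⟨i, hi, hgi⟩ := hsurj a b
        exact Finset.mem_image.2 ⟨i, Finset.mem_range.2 hi, hgi⟩
      have hcard : (Finset.image
          (fun p : Fin R × Fin S => s((Sum.inl p.1 : Fin R ⊕ Fin S), Sum.inr p.2))
          Finset.univ).card = R * S := by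
        rw [Finset.card_image_of_injective _ ?_, Finset.card_univ]
        · simp
        · intro ⟨a, b⟩ ⟨a', b'⟩ h
          obtain ⟨h1, h2⟩ := pairInj h
          simp_all
      calc (Finset.range (R*S)).card = R * S := by simp
        _ = _ := hcard.symm
        _ ≤ _ := Finset.card_le_card hsub
    simp only [Finset.coe_range] at hinj
    intro x hx y hy hxy
    exact hinj (by simpa using List.mem_range.1 hx) (by simpa using List.mem_range.1 hy) hxy
  · intro e he
    obtain ⟨a, b, rfl⟩ := mem_edgeSet_cbg he
    obtain ⟨i, hi, hgi⟩ := hsurj a b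
    rw [hedges]
    exact List.mem_map.2 ⟨i, List.mem_range.2 hi, hgi⟩



def lamP (r m : ℕ) : ℕ := m % (2*r)
def rhoP (r s m : ℕ) : ℕ := 2 * (m / (2*r) % s) + m % 2

def lamQ (r s m : ℕ) : ℕ :=
  if m % (2*r*s) = 0 then 0
  else if m % (2*r*s) ≤ 2*r*(s-1) then ((m % (2*r*s) - 1) % (2*r) + 2) % (2*r)
  else if m % (2*r*s) = 2*r*s - 1 then 1
  else m % (2*r*s) - 2*r*(s-1) + 1

def rhoQ (r s m : ℕ) : ℕ :=
  if m % (2*r*s) = 0 then 1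
  else if m % (2*r*s) ≤ 2*r*(s-1) then 2*((m % (2*r*s) - 1)/(2*r) + 1) + (m % (2*r*s) + 1) % 2
  else (m % (2*r*s) + 1) % 2

lemma key (r : ℕ) {s : ℕ} (hs : 1 ≤ s) : 2*r*(s-1) + 2*r = 2*r*s := by
  obtain ⟨σ, rfl⟩ : ∃ σ, s = σ + 1 := ⟨s-1, by omega⟩
  simp only [Nat.add_sub_cancel]
  ring

lemma key2 (r : ℕ) {s : ℕ} (hs : 2 ≤ s) : (s-2)*(2*r) + 2*r = 2*r*(s-1) := by
  obtain ⟨σ, rfl⟩ : ∃ σ, s = σ + 2 := ⟨s-2, by omega⟩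
  simp only [Nat.add_sub_cancel, show σ+2-1 = σ+1 from rfl]
  ring

section evals
variable {r s : ℕ}

lemma lamP_eval (x t : ℕ) (hx : x < 2*r) : lamP r (x + t*(2*r)) = x := by
  unfold lamP; rw [Nat.add_mul_mod_self_right, Nat.mod_eq_of_lt hx]

lemma rhoP_eval (x t : ℕ) (hx : x < 2*r) (ht : t < s) :
    rhoP r s (x + t*(2*r)) = 2*t + x % 2 := by
  unfold rhoP
  rw [Nat.add_mul_div_right _ _ (show 0 < 2*r by omega), Nat.div_eq_of_lt hx,
    Nat.zero_add, Nat.mod_eq_of_lt ht]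
  have h : x + t*(2*r) = x + (t*r)*2 := by ring
  rw [h]
  omega

lemma lamQ_zero : lamQ r s 0 = 0 := by unfold lamQ; simp

lemma rhoQ_zero : rhoQ r s 0 = 1 := by unfold rhoQ; simp

lemma lamQ_top : lamQ r s (2*r*s) = 0 := by unfold lamQ; rw [Nat.mod_self]; simp

lemma lamQ_block (hs : 2 ≤ s) (t k : ℕ) (ht : t ≤ s-2) (hk : k < 2*r) :
    lamQ r s (1 + t*(2*r) + k) = (k + 2) % (2*r) := by
  have hkey := key r (by omega : 1 ≤ s)
  have hkey2 := key2 r hs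
  have hmul : t*(2*r) ≤ (s-2)*(2*r) := Nat.mul_le_mul_right _ ht
  have hle : 1 + t*(2*r) + k ≤ 2*r*(s-1) := by omega
  unfold lamQ
  rw [Nat.mod_eq_of_lt (by omega), if_neg (by omega), if_pos hle]
  congr 1
  have h : 1 + t*(2*r) + k - 1 = k + t*(2*r) := by omega
  rw [h, Nat.add_mul_mod_self_right, Nat.mod_eq_of_lt hk]

lemma rhoQ_block (hs : 2 ≤ s) (t k : ℕ) (ht : t ≤ s-2) (hk : k < 2*r) :
    rhoQ r s (1 + t*(2*r) + k) = 2*(t+1) + k % 2 := by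
  have hkey := key r (by omega : 1 ≤ s)
  have hkey2 := key2 r hs
  have hmul : t*(2*r) ≤ (s-2)*(2*r) := Nat.mul_le_mul_right _ ht
  have hle : 1 + t*(2*r) + k ≤ 2*r*(s-1) := by omega
  unfold rhoQ
  rw [Nat.mod_eq_of_lt (by omega), if_neg (by omega), if_pos hle]
  have h : 1 + t*(2*r) + k - 1 = k + t*(2*r) := by omega
  rw [h, Nat.add_mul_div_right _ _ (show 0 < 2*r by omega), Nat.div_eq_of_lt hk,
    Nat.zero_add]
  have h2 : 1 + t*(2*r) + k + 1 = k + 2 + (t*r)*2 := by ring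
  rw [h2]
  omega

lemma lamQ_tail (hr : 1 ≤ r) (hs : 1 ≤ s) (k : ℕ) (h1 : 1 ≤ k) (h2 : k ≤ 2*r-2) :
    lamQ r s (2*r*(s-1) + k) = k + 1 := by
  have hkey := key r hs
  unfold lamQ
  rw [Nat.mod_eq_of_lt (by omega)]
  rw [if_neg (by omega), if_neg (by omega), if_neg (by omega)]
  omega

lemma lamQ_last (hr : 1 ≤ r) (hs : 1 ≤ s) : lamQ r s (2*r*s - 1) = 1 := by
  have hkey := key r hs
  unfold lamQ
  rw [Nat.mod_eq_of_lt (by omega)]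
  rw [if_neg (by omega), if_neg (by omega), if_pos rfl]

lemma rhoQ_tail (hr : 1 ≤ r) (hs : 1 ≤ s) (k : ℕ) (h1 : 1 ≤ k) (h2 : k ≤ 2*r-1) :
    rhoQ r s (2*r*(s-1) + k) = (k+1) % 2 := by
  have hkey := key r hs
  unfold rhoQ
  rw [Nat.mod_eq_of_lt (by omega), if_neg (by omega), if_neg (by omega)]
  have h : 2*r*(s-1) + k + 1 = k + 1 + (r*(s-1))*2 := by ring
  rw [h]
  omega

lemma rhoP_parity (m : ℕ) : rhoP r s m % 2 = m % 2 := by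
  unfold rhoP; omega

lemma rhoQ_parity (hr : 1 ≤ r) (hs : 1 ≤ s) (m : ℕ) (hm : m < 2*r*s) :
    rhoQ r s m % 2 = (m+1) % 2 := by
  unfold rhoQ
  rw [Nat.mod_eq_of_lt hm]
  split
  · next h => subst h; rfl
  · split <;> omega

lemma rho_ne (hr : 1 ≤ r) (hs : 1 ≤ s) (m : ℕ) (hm : m < 2*r*s) :
    rhoQ r s m ≠ rhoP r s m := by
  have h1 := rhoP_parity (r := r) (s := s) m
  have h2 := rhoQ_parity hr hs m hm
  intro h
  rw [h, h1] at h2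
  omega

lemma consec_mod_ne {k : ℕ} (hk : 2 ≤ k) (x : ℕ) : x % k ≠ (x+1) % k := by
  intro h
  have h1 : (x+1) % k = (x % k + 1) % k := by
    rw [Nat.add_mod, Nat.mod_eq_of_lt (show 1 < k by omega)]
  have hx : x % k < k := Nat.mod_lt _ (by omega)
  rcases Nat.lt_or_ge (x % k + 1) k with h2 | h2
  · rw [h1, Nat.mod_eq_of_lt h2] at h; omega
  · have h3 : x % k + 1 = k := by omega
    rw [h1, h3, Nat.mod_self] at h; omega

lemma lam_ne (hr : 2 ≤ r) (hs : 2 ≤ s) (m : ℕ) (h0 : 0 < m) (hm : m < 2*r*s) :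
    lamQ r s m ≠ lamP r m := by
  have hkey := key r (by omega : 1 ≤ s)
  unfold lamQ lamP
  rw [Nat.mod_eq_of_lt hm, if_neg (by omega)]
  by_cases hble : m ≤ 2*r*(s-1)
  · rw [if_pos hble]
    have hm1 : m % (2*r) = ((m-1) % (2*r) + 1) % (2*r) := by
      conv_lhs => rw [show m = (m-1) + 1 by omega]
      rw [Nat.add_mod, Nat.mod_eq_of_lt (show 1 < 2*r by omega)]
    rw [hm1, show (m-1) % (2*r) + 2 = ((m-1) % (2*r) + 1) + 1 by omega]
    exact (consec_mod_ne (by omega) ((m-1) % (2*r) + 1)).symm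
  · rw [if_neg hble]
    have hD : 2*r*(s-1) = (s-1)*(2*r) := by ring
    have hmk : m = (m - 2*r*(s-1)) + (s-1)*(2*r) := by omega
    have hmod : m % (2*r) = m - 2*r*(s-1) := by
      conv_lhs => rw [hmk]
      rw [Nat.add_mul_mod_self_right, Nat.mod_eq_of_lt (by omega)]
    rw [hmod]
    split <;> omega

end evals


section bounds
variable {r s : ℕ} (hr : 1 ≤ r) (hs : 2 ≤ s)

include hr in
lemma lamP_lt (m : ℕ) : lamP r m < 2*r := Nat.mod_lt _ (by omega)

include hr hs in
lemma rhoP_lt (m : ℕ) : rhoP r s m < 2*s := by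
  have h1 : m / (2*r) % s < s := Nat.mod_lt _ (by omega)
  have h2 : m % 2 < 2 := Nat.mod_lt _ (by omega)
  unfold rhoP; omega

include hr hs in
lemma lamQ_lt (m : ℕ) : lamQ r s m < 2*r := by
  have hN : 0 < 2*r*s := by positivity
  have hM : m % (2*r*s) < 2*r*s := Nat.mod_lt _ hN
  have hkey := key r (by omega : 1 ≤ s)
  unfold lamQ
  split
  · omega
  · split
    · exact Nat.mod_lt _ (by omega)
    · split
      · omega
      · omega

include hr hs in
lemma rhoQ_lt (m : ℕ) : rhoQ r s m < 2*s := by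
  have hN : 0 < 2*r*s := by positivity
  have hkey := key r (by omega : 1 ≤ s)
  unfold rhoQ
  split
  · omega
  · split
    · next h0 hle =>
      have h1 : (m % (2*r*s) - 1) / (2*r) < s - 1 := by
        rw [Nat.div_lt_iff_lt_mul (by omega : 0 < 2*r)]
        have : (s-1) * (2*r) = 2*r*(s-1) := by ring
        omega
      have h2 : (m % (2*r*s) + 1) % 2 < 2 := Nat.mod_lt _ (by omega)
      omega
    · have h2 : (m % (2*r*s) + 1) % 2 < 2 := Nat.mod_lt _ (by omega)
      omega

end bounds

section walks
variable {r s : ℕ}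

lemma pair_eq {R S : ℕ} {a a' : Fin R} {b b' : Fin S} (h1 : a.1 = a'.1) (h2 : b.1 = b'.1) :
    s((Sum.inl a : Fin R ⊕ Fin S), Sum.inr b) = s(Sum.inl a', Sum.inr b') := by
  obtain rfl : a = a' := Fin.ext h1
  obtain rfl : b = b' := Fin.ext h2
  rfl

lemma pair_eq_swap {R S : ℕ} {a a' : Fin R} {b b' : Fin S} (h1 : a.1 = a'.1) (h2 : b.1 = b'.1) :
    s((Sum.inr b : Fin R ⊕ Fin S), Sum.inl a) = s(Sum.inl a', Sum.inr b') := by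
  obtain rfl : a = a' := Fin.ext h1
  obtain rfl : b = b' := Fin.ext h2
  exact Sym2.eq_swap

variable (hr : 2 ≤ r) (hs : 2 ≤ s)

def fP (i : ℕ) : Fin (2*r) ⊕ Fin (2*s) :=
  if i % 2 = 0 then .inl ⟨lamP r (i/2), lamP_lt (by omega) _⟩
  else .inr ⟨rhoP r s (i/2), rhoP_lt (by omega) hs _⟩

def fQ (i : ℕ) : Fin (2*r) ⊕ Fin (2*s) :=
  if i % 2 = 0 then .inl ⟨lamQ r s (i/2), lamQ_lt (by omega) hs _⟩
  else .inr ⟨rhoQ r s (i/2), rhoQ_lt (by omega) hs _⟩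

lemma fP_even (m : ℕ) : fP hr hs (2*m) = .inl ⟨lamP r m, lamP_lt (by omega) _⟩ := by
  have h1 : (2*m) % 2 = 0 := by omega
  have h2 : (2*m) / 2 = m := by omega
  simp [fP, h1, h2]

lemma fP_odd (m : ℕ) : fP hr hs (2*m+1) = .inr ⟨rhoP r s m, rhoP_lt (by omega) hs _⟩ := by
  have h1 : ¬((2*m+1) % 2 = 0) := by omega
  have h2 : (2*m+1) / 2 = m := by omega
  simp [fP, h1, h2]

lemma fQ_even (m : ℕ) : fQ hr hs (2*m) = .inl ⟨lamQ r s m, lamQ_lt (by omega) hs _⟩ := by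
  have h1 : (2*m) % 2 = 0 := by omega
  have h2 : (2*m) / 2 = m := by omega
  simp [fQ, h1, h2]

lemma fQ_odd (m : ℕ) : fQ hr hs (2*m+1) = .inr ⟨rhoQ r s m, rhoQ_lt (by omega) hs _⟩ := by
  have h1 : ¬((2*m+1) % 2 = 0) := by omega
  have h2 : (2*m+1) / 2 = m := by omega
  simp [fQ, h1, h2]

lemma surjP (a : Fin (2*r)) (b : Fin (2*s)) :
    ∃ i, i < 2*r*(2*s) ∧ s(fP hr hs i, fP hr hs (i+1)) = s(Sum.inl a, Sum.inr b) := by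
  have hkey := key r (show 1 ≤ s by omega)
  have ha := a.2
  have hb := b.2
  set t := b.1 / 2 with hts
  have htlt : t < s := by omega
  have htmul : t*(2*r) ≤ (s-1)*(2*r) := Nat.mul_le_mul_right _ (by omega)
  have hsmul : (s-1)*(2*r) = 2*r*(s-1) := by ring
  have h4 : 2*r*(2*s) = 2*(2*r*s) := by ring
  by_cases hpar : a.1 % 2 = b.1 % 2
  · refine ⟨2*(a.1 + t*(2*r)), by omega, ?_⟩
    rw [fP_even, fP_odd]
    refine pair_eq (lamP_eval _ _ ha) ?_
    show rhoP r s (a.1 + t*(2*r)) = b.1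
    rw [rhoP_eval _ _ ha htlt]
    omega
  · rcases Nat.eq_zero_or_pos a.1 with haz | haz
    · refine ⟨2*((2*r-1) + t*(2*r))+1, by omega, ?_⟩
      rw [fP_odd, show 2*((2*r-1) + t*(2*r))+1+1 = 2*((2*r-1) + t*(2*r)+1) by ring, fP_even]
      refine pair_eq_swap ?_ ?_
      · show lamP r ((2*r-1) + t*(2*r) + 1) = a.1
        rw [show (2*r-1) + t*(2*r) + 1 = 0 + (t+1)*(2*r) by
          have : (t+1)*(2*r) = t*(2*r) + 2*r := by ring
          omega]
        rw [lamP_eval _ _ (by omega)]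
        omega
      · show rhoP r s ((2*r-1) + t*(2*r)) = b.1
        rw [rhoP_eval _ _ (by omega) htlt]
        omega
    · refine ⟨2*((a.1-1) + t*(2*r))+1, by omega, ?_⟩
      rw [fP_odd, show 2*((a.1-1) + t*(2*r))+1+1 = 2*((a.1-1) + t*(2*r)+1) by ring, fP_even]
      refine pair_eq_swap ?_ ?_
      · show lamP r ((a.1-1) + t*(2*r) + 1) = a.1
        rw [show (a.1-1) + t*(2*r) + 1 = a.1 + t*(2*r) by omega, lamP_eval _ _ ha]
      · show rhoP r s ((a.1-1) + t*(2*r)) = b.1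
        rw [rhoP_eval _ _ (by omega) htlt]
        omega

lemma tau_inv {r : ℕ} (hr : 1 ≤ r) (a : ℕ) (ha : a < 2*r) :
    ((a + 2*r - 2) % (2*r) + 2) % (2*r) = a := by
  rcases Nat.lt_or_ge a 2 with h | h
  · rw [Nat.mod_eq_of_lt (show a + 2*r - 2 < 2*r by omega),
      show a + 2*r - 2 + 2 = a + 2*r by omega, Nat.add_mod_right, Nat.mod_eq_of_lt ha]
  · rw [show a + 2*r - 2 = (a-2) + 2*r by omega, Nat.add_mod_right,
      Nat.mod_eq_of_lt (show a - 2 < 2*r by omega),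
      show a - 2 + 2 = a by omega, Nat.mod_eq_of_lt ha]

lemma surjQ (a : Fin (2*r)) (b : Fin (2*s)) :
    ∃ i, i < 2*r*(2*s) ∧ s(fQ hr hs i, fQ hr hs (i+1)) = s(Sum.inl a, Sum.inr b) := by
  have hkey := key r (show 1 ≤ s by omega)
  have hkey2 := key2 r hs
  have ha := a.2
  have hb := b.2
  have h4 : 2*r*(2*s) = 2*(2*r*s) := by ring
  set t := b.1 / 2 with hts
  have htlt : t < s := by omega
  rcases Nat.eq_zero_or_pos t with ht0 | ht1
  · -- edge incident to right pair 0 : lies in the B₀ cycle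
    have hb1 : b.1 < 2 := by omega
    by_cases ha0 : a.1 = 0
    · by_cases hbb : b.1 = 1
      · refine ⟨0, by omega, ?_⟩
        rw [show (0:ℕ) = 2*0 from rfl, fQ_even, show 2*0+1 = 2*0+1 from rfl, fQ_odd]
        exact pair_eq (by show lamQ r s 0 = a.1; rw [lamQ_zero]; omega)
          (by show rhoQ r s 0 = b.1; rw [rhoQ_zero]; omega)
      · -- b.1 = 0 : wrap-around edge of B₀
        refine ⟨2*(2*r*(s-1) + (2*r-1))+1, by omega, ?_⟩
        rw [fQ_odd, show 2*(2*r*(s-1) + (2*r-1))+1+1 = 2*(2*r*(s-1) + (2*r-1) + 1) by ring,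
          fQ_even]
        refine pair_eq_swap ?_ ?_
        · show lamQ r s (2*r*(s-1) + (2*r-1) + 1) = a.1
          rw [show 2*r*(s-1) + (2*r-1) + 1 = 2*r*s by omega, lamQ_top]
          omega
        · show rhoQ r s (2*r*(s-1) + (2*r-1)) = b.1
          rw [rhoQ_tail (by omega) (by omega) _ (by omega) (by omega)]
          omega
    · by_cases ha1 : a.1 = 1
      · by_cases hbb : b.1 = 0
        · refine ⟨2*(2*r*(s-1) + (2*r-1)), by omega, ?_⟩
          rw [fQ_even, fQ_odd]
          refine pair_eq ?_ ?_
          · show lamQ r s (2*r*(s-1) + (2*r-1)) = a.1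
            rw [show 2*r*(s-1) + (2*r-1) = 2*r*s - 1 by omega, lamQ_last (by omega) (by omega)]
            omega
          · show rhoQ r s (2*r*(s-1) + (2*r-1)) = b.1
            rw [rhoQ_tail (by omega) (by omega) _ (by omega) (by omega)]
            omega
        · -- b.1 = 1
          refine ⟨2*(2*r*(s-1) + (2*r-2))+1, by omega, ?_⟩
          rw [fQ_odd, show 2*(2*r*(s-1) + (2*r-2))+1+1 = 2*(2*r*(s-1) + (2*r-2) + 1) by ring,
            fQ_even]
          refine pair_eq_swap ?_ ?_
          · show lamQ r s (2*r*(s-1) + (2*r-2) + 1) = a.1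
            rw [show 2*r*(s-1) + (2*r-2) + 1 = 2*r*s - 1 by omega, lamQ_last (by omega) (by omega)]
            omega
          · show rhoQ r s (2*r*(s-1) + (2*r-2)) = b.1
            rw [rhoQ_tail (by omega) (by omega) _ (by omega) (by omega)]
            omega
      · -- 2 ≤ a.1
        have ha2 : 2 ≤ a.1 := by omega
        by_cases hpar : a.1 % 2 = b.1
        · refine ⟨2*(2*r*(s-1) + (a.1-1)), by omega, ?_⟩
          rw [fQ_even, fQ_odd]
          refine pair_eq ?_ ?_
          · show lamQ r s (2*r*(s-1) + (a.1-1)) = a.1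
            rw [lamQ_tail (by omega) (by omega) _ (by omega) (by omega)]
            omega
          · show rhoQ r s (2*r*(s-1) + (a.1-1)) = b.1
            rw [rhoQ_tail (by omega) (by omega) _ (by omega) (by omega)]
            omega
        · by_cases ha2' : a.1 = 2
          · -- spliced edge from position 1
            refine ⟨1, by omega, ?_⟩
            rw [show (1:ℕ) = 2*0+1 from rfl, fQ_odd, show 2*0+1+1 = 2*1 from rfl, fQ_even]
            refine pair_eq_swap ?_ ?_
            · show lamQ r s 1 = a.1
              rw [show (1:ℕ) = 1 + 0*(2*r) + 0 by ring, lamQ_block hs 0 0 (by omega) (by omega)]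
              rw [Nat.mod_eq_of_lt (by omega)]
              omega
            · show rhoQ r s 0 = b.1
              rw [rhoQ_zero]
              omega
          · refine ⟨2*(2*r*(s-1) + (a.1-2))+1, by omega, ?_⟩
            rw [fQ_odd, show 2*(2*r*(s-1) + (a.1-2))+1+1 = 2*(2*r*(s-1) + (a.1-2) + 1) by ring,
              fQ_even]
            refine pair_eq_swap ?_ ?_
            · show lamQ r s (2*r*(s-1) + (a.1-2) + 1) = a.1
              rw [show 2*r*(s-1) + (a.1-2) + 1 = 2*r*(s-1) + (a.1-1) by omega,
                lamQ_tail (by omega) (by omega) _ (by omega) (by omega)]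
              omega
            · show rhoQ r s (2*r*(s-1) + (a.1-2)) = b.1
              rw [rhoQ_tail (by omega) (by omega) _ (by omega) (by omega)]
              omega
  · -- block case : right pair t ≥ 1
    have htm : t - 1 ≤ s - 2 := by omega
    have htmul : (t-1)*(2*r) ≤ (s-2)*(2*r) := Nat.mul_le_mul_right _ (by omega)
    set k0 := (a.1 + 2*r - 2) % (2*r) with hk0
    have hk0lt : k0 < 2*r := Nat.mod_lt _ (by omega)
    have htau : (k0 + 2) % (2*r) = a.1 := tau_inv (by omega) _ ha
    by_cases hpar : k0 % 2 = b.1 % 2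
    · refine ⟨2*(1 + (t-1)*(2*r) + k0), by omega, ?_⟩
      rw [fQ_even, fQ_odd]
      refine pair_eq ?_ ?_
      · show lamQ r s (1 + (t-1)*(2*r) + k0) = a.1
        rw [lamQ_block hs _ _ htm hk0lt, htau]
      · show rhoQ r s (1 + (t-1)*(2*r) + k0) = b.1
        rw [rhoQ_block hs _ _ htm hk0lt]
        omega
    · have hkval : (k0 = 0 ∧ (k0 + 2*r - 1) % (2*r) = 2*r - 1)
          ∨ (1 ≤ k0 ∧ (k0 + 2*r - 1) % (2*r) = k0 - 1) := by
        rcases Nat.eq_zero_or_pos k0 with h | h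
        · left
          refine ⟨h, ?_⟩
          rw [h, Nat.zero_add, Nat.mod_eq_of_lt (by omega)]
        · right
          refine ⟨h, ?_⟩
          rw [show k0 + 2*r - 1 = (k0 - 1) + 2*r by omega, Nat.add_mod_right,
            Nat.mod_eq_of_lt (by omega)]
      set k := (k0 + 2*r - 1) % (2*r) with hkdef
      have hklt : k < 2*r := Nat.mod_lt _ (by omega)
      refine ⟨2*(1 + (t-1)*(2*r) + k)+1, by omega, ?_⟩
      rw [fQ_odd, show 2*(1 + (t-1)*(2*r) + k)+1+1 = 2*(1 + (t-1)*(2*r) + k + 1) by ring, fQ_even]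
      refine pair_eq_swap ?_ ?_
      · show lamQ r s (1 + (t-1)*(2*r) + k + 1) = a.1
        rcases hkval with ⟨hk0z, hkv⟩ | ⟨hk0p, hkv⟩
        · have ha2 : a.1 = 2 := by
            rw [hk0z, Nat.zero_add, Nat.mod_eq_of_lt (by omega)] at htau
            omega
          have hsub : (t-1)*(2*r) = t*(2*r) - 1*(2*r) := Nat.sub_mul t 1 (2*r)
          have hge : 1*(2*r) ≤ t*(2*r) := Nat.mul_le_mul_right _ ht1
          have hm1 : 1 + (t-1)*(2*r) + k + 1 = 1 + t*(2*r) := by omega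
          rcases Nat.lt_or_ge t (s-1) with hts' | hts'
          · rw [hm1, show 1 + t*(2*r) = 1 + t*(2*r) + 0 by ring,
              lamQ_block hs t 0 (by omega) (by omega), Nat.mod_eq_of_lt (by omega)]
            omega
          · have hteq : t = s - 1 := by omega
            rw [hm1, show 1 + t*(2*r) = 2*r*(s-1) + 1 by rw [hteq]; ring,
              lamQ_tail (by omega) (by omega) 1 (by omega) (by omega)]
            omega
        · rw [show 1 + (t-1)*(2*r) + k + 1 = 1 + (t-1)*(2*r) + k0 by omega,
            lamQ_block hs _ _ htm hk0lt, htau]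
      · show rhoQ r s (1 + (t-1)*(2*r) + k) = b.1
        rw [rhoQ_block hs _ _ htm hklt]
        rcases hkval with ⟨hk0z, hkv⟩ | ⟨hk0p, hkv⟩ <;> omega

end walks

section assemble
variable {r s : ℕ} (hr : 2 ≤ r) (hs : 2 ≤ s)

lemma fP_adj (i : ℕ) :
    (completeBipartiteGraph (Fin (2*r)) (Fin (2*s))).Adj (fP hr hs i) (fP hr hs (i+1)) := by
  unfold fP
  rcases Nat.mod_two_eq_zero_or_one i with h | h
  · rw [if_pos h, if_neg (by omega)]
    simp [completeBipartiteGraph]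
  · rw [if_neg (by omega), if_pos (by omega)]
    simp [completeBipartiteGraph]

lemma fQ_adj (i : ℕ) :
    (completeBipartiteGraph (Fin (2*r)) (Fin (2*s))).Adj (fQ hr hs i) (fQ hr hs (i+1)) := by
  unfold fQ
  rcases Nat.mod_two_eq_zero_or_one i with h | h
  · rw [if_pos h, if_neg (by omega)]
    simp [completeBipartiteGraph]
  · rw [if_neg (by omega), if_pos (by omega)]
    simp [completeBipartiteGraph]

lemma fP_zero : fP hr hs 0 = Sum.inl ⟨0, by omega⟩ := by
  have h1 : (0:ℕ) % 2 = 0 := rfl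
  simp [fP, h1, lamP]

lemma fP_top : fP hr hs (2*(2*r*s)) = Sum.inl ⟨0, by omega⟩ := by
  have h1 : (2*(2*r*s)) % 2 = 0 := by omega
  have h2 : (2*(2*r*s))/2 = 2*r*s := by omega
  simp [fP, h1, h2, lamP, show 2*r*s = (2*r)*s by ring, Nat.mul_mod_right]

lemma fQ_zero : fQ hr hs 0 = Sum.inl ⟨0, by omega⟩ := by
  have h1 : (0:ℕ) % 2 = 0 := rfl
  simp [fQ, h1, lamQ_zero]

lemma fQ_top : fQ hr hs (2*(2*r*s)) = Sum.inl ⟨0, by omega⟩ := by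
  have h1 : (2*(2*r*s)) % 2 = 0 := by omega
  have h2 : (2*(2*r*s))/2 = 2*r*s := by omega
  simp [fQ, h1, h2, lamQ_top]

def wP : (completeBipartiteGraph (Fin (2*r)) (Fin (2*s))).Walk
    (Sum.inl ⟨0, by omega⟩) (Sum.inl ⟨0, by omega⟩) :=
  (walkFromFun _ (fP hr hs) (2*(2*r*s)) (fun i _ => fP_adj hr hs i)).copy
    (fP_zero hr hs) (fP_top hr hs)

def wQ : (completeBipartiteGraph (Fin (2*r)) (Fin (2*s))).Walk
    (Sum.inl ⟨0, by omega⟩) (Sum.inl ⟨0, by omega⟩) :=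
  (walkFromFun _ (fQ hr hs) (2*(2*r*s)) (fun i _ => fQ_adj hr hs i)).copy
    (fQ_zero hr hs) (fQ_top hr hs)

lemma wP_eulerian : (wP hr hs).IsEulerian := by
  apply isEulerian_of_surj _ (fun i => s(fP hr hs i, fP hr hs (i+1)))
  · rw [wP, Walk.edges_copy, edges_walkFromFun, show 2*(2*r*s) = 2*r*(2*s) by ring]
  · exact fun a b => (surjP hr hs a b).imp (fun i h => ⟨h.1, h.2⟩)

lemma wQ_eulerian : (wQ hr hs).IsEulerian := by
  apply isEulerian_of_surj _ (fun i => s(fQ hr hs i, fQ hr hs (i+1)))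
  · rw [wQ, Walk.edges_copy, edges_walkFromFun, show 2*(2*r*s) = 2*r*(2*s) by ring]
  · exact fun a b => (surjQ hr hs a b).imp (fun i h => ⟨h.1, h.2⟩)

lemma wPQ_avoiding :
    Avoiding (completeBipartiteGraph (Fin (2*r)) (Fin (2*s))) (wP hr hs) (wQ hr hs) := by
  intro i h0 hlen
  have hlenP : (wP hr hs).length = 2*(2*r*s) := by
    rw [wP, Walk.length_copy, length_walkFromFun]
  rw [hlenP] at hlen
  have hgvP : (wP hr hs).getVert i = fP hr hs i := by
    rw [wP, Walk.getVert_copy, getVert_walkFromFun _ _ _ i (by omega)]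
  have hgvQ : (wQ hr hs).getVert i = fQ hr hs i := by
    rw [wQ, Walk.getVert_copy, getVert_walkFromFun _ _ _ i (by omega)]
  rw [hgvP, hgvQ]
  rcases Nat.mod_two_eq_zero_or_one i with h | h
  · obtain ⟨m, rfl⟩ : ∃ m, i = 2*m := ⟨i/2, by omega⟩
    rw [fP_even, fQ_even]
    constructor
    · simp only [ne_eq, Sum.inl.injEq, Fin.mk.injEq]
      intro hcon
      exact lam_ne hr hs m (by omega) (by omega) hcon.symm
    · simp [completeBipartiteGraph]
  · obtain ⟨m, rfl⟩ : ∃ m, i = 2*m+1 := ⟨i/2, by omega⟩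
    rw [fP_odd, fQ_odd]
    constructor
    · simp only [ne_eq, Sum.inr.injEq, Fin.mk.injEq]
      intro hcon
      exact rho_ne (by omega) (by omega) m (by omega) hcon.symm
    · simp [completeBipartiteGraph]

end assemble

lemma core (r s : ℕ) (hr : 2 ≤ r) (hs : 2 ≤ s) :
    ∃ p q : (completeBipartiteGraph (Fin (2*r)) (Fin (2*s))).Walk
        (Sum.inl ⟨0, by omega⟩) (Sum.inl ⟨0, by omega⟩),
      p.IsEulerian ∧ q.IsEulerian ∧
        Avoiding (completeBipartiteGraph (Fin (2*r)) (Fin (2*s))) p q :=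
  ⟨wP hr hs, wQ hr hs, wP_eulerian hr hs, wQ_eulerian hr hs, wPQ_avoiding hr hs⟩



section transport
variable {V W : Type*} [DecidableEq V] [DecidableEq W] {G : SimpleGraph V} {H : SimpleGraph W}

lemma eulerian_map (e : G ≃g H) {u v : V} {p : G.Walk u v} (hp : p.IsEulerian) :
    (p.map e.toHom).IsEulerian := by
  rw [Walk.isEulerian_iff]
  constructor
  · rw [Walk.isTrail_def, Walk.edges_map]
    exact hp.isTrail.edges_nodup.map (Sym2.map.injective e.injective)
  · intro e' he'
    induction e' with
    | _ x y =>
      rw [mem_edgeSet] at he'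
      have hadj : G.Adj (e.symm x) (e.symm y) := by
        rw [← e.map_adj_iff]
        simpa using he'
      have hmem : s(e.symm x, e.symm y) ∈ p.edges :=
        hp.mem_edges_iff.2 (G.mem_edgeSet.2 hadj)
      rw [Walk.edges_map]
      refine List.mem_map.2 ⟨s(e.symm x, e.symm y), hmem, ?_⟩
      simp [Sym2.map_pair_eq]

lemma avoiding_map (e : G ≃g H) {u : V} {p q : G.Walk u u} (h : Avoiding G p q) :
    Avoiding H (p.map e.toHom) (q.map e.toHom) := by
  intro i h0 hlen
  rw [Walk.length_map] at hlen
  obtain ⟨h1, h2⟩ := h i h0 hlen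
  rw [getVert_map, getVert_map]
  refine ⟨fun hc => h1 (e.injective hc), fun hc => h2 ?_⟩
  rwa [show e.toHom (p.getVert i) = e (p.getVert i) from rfl,
    show e.toHom (q.getVert i) = e (q.getVert i) from rfl, e.map_adj_iff] at hc

lemma transport (e : G ≃g H) {u : V}
    (h : ∃ p q : G.Walk u u, p.IsEulerian ∧ q.IsEulerian ∧ Avoiding G p q) :
    ∃ p q : H.Walk (e u) (e u), p.IsEulerian ∧ q.IsEulerian ∧ Avoiding H p q := by
  obtain ⟨p, q, hp, hq, hav⟩ := h
  exact ⟨p.map e.toHom, q.map e.toHom, eulerian_map e hp, eulerian_map e hq,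
    avoiding_map e hav⟩

end transport

def isoCBG {α β α' β' : Type*} (ea : α ≃ α') (eb : β ≃ β') :
    completeBipartiteGraph α β ≃g completeBipartiteGraph α' β' where
  toEquiv := Equiv.sumCongr ea eb
  map_rel_iff' := by
    intro x y
    cases x <;> cases y <;> simp [completeBipartiteGraph]

def isoSwapCBG {α β : Type*} : completeBipartiteGraph α β ≃g completeBipartiteGraph β α where
  toEquiv := Equiv.sumComm α β
  map_rel_iff' := by
    intro x y
    cases x <;> cases y <;> simp [completeBipartiteGraph]

end DEaux

/-- The complete bipartite graph `K_{2r,2s}` with `r, s ≥ 2` is doubly Eulerian. -/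
theorem completeBipartite_even_doublyEulerian (r s : ℕ) (hr : 2 ≤ r) (hs : 2 ≤ s) :
    DoublyEulerian (completeBipartiteGraph (Fin (2 * r)) (Fin (2 * s))) := by
  intro u
  haveI : NeZero (2*r) := ⟨by omega⟩
  haveI : NeZero (2*s) := ⟨by omega⟩
  cases u with
  | inl a =>
    have h := DEaux.transport (u := Sum.inl ⟨0, by omega⟩)
      (DEaux.isoCBG (Equiv.addRight a) (Equiv.refl (Fin (2*s))))
      (DEaux.core r s hr hs)
    have hu : (DEaux.isoCBG (Equiv.addRight a) (Equiv.refl (Fin (2*s))))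
        (Sum.inl ⟨0, by omega⟩) = Sum.inl a := by
      simp [DEaux.isoCBG]
    rwa [hu] at h
  | inr b =>
    have h := DEaux.transport (u := Sum.inl ⟨0, by omega⟩)
      ((DEaux.isoCBG (Equiv.addRight b) (Equiv.refl (Fin (2*r)))).trans DEaux.isoSwapCBG)
      (DEaux.core s r hs hr)
    have hu : ((DEaux.isoCBG (Equiv.addRight b) (Equiv.refl (Fin (2*r)))).trans
        DEaux.isoSwapCBG) (Sum.inl ⟨0, by omega⟩) = Sum.inr b := by
      simp [DEaux.isoCBG, DEaux.isoSwapCBG]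
    rwa [hu] at h
end

section
/- The complete bipartite graph K_{2,2s} (s ≥ 1) is not doubly Eulerian: no two Eulerian circuits starting at a vertex of the 2-element part can be avoiding. -/
open SimpleGraph

section AuxLemmas
open Finset

instance myDecAdj (A B : Type*) [DecidableEq A] [DecidableEq B] :
    DecidableRel (completeBipartiteGraph A B).Adj := fun v w => by
  simp only [completeBipartiteGraph_adj]; infer_instance

lemma my_degree_inl (n : ℕ) (j : Fin 2) :
    (completeBipartiteGraph (Fin 2) (Fin n)).degree (Sum.inl j) = n := by
  rw [← card_neighborFinset_eq_degree]
  have : (completeBipartiteGraph (Fin 2) (Fin n)).neighborFinset (Sum.inl j)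
      = Finset.univ.image Sum.inr := by
    ext x; cases x <;> simp [mem_neighborFinset]
  rw [this, Finset.card_image_of_injective _ Sum.inr_injective, Finset.card_univ,
    Fintype.card_fin]

lemma my_parity {A B : Type*} {u v : A ⊕ B} (p : (completeBipartiteGraph A B).Walk u v)
    (hu : u.isLeft = true) :
    ∀ k, k ≤ p.length → ((p.getVert k).isLeft = true ↔ Even k) := by
  intro k
  induction k with
  | zero => intro _; simp [p.getVert_zero, hu]
  | succ k ih =>
    intro hk
    have hk' : k < p.length := hk
    have hadj := p.adj_getVert_succ hk'
    have ihh := ih hk'.le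
    rw [completeBipartiteGraph_adj] at hadj
    rw [Nat.even_add_one, ← ihh]
    rcases hadj with ⟨h1, h2⟩ | ⟨h1, h2⟩
    · rcases Sum.isRight_iff.mp h2 with ⟨b, hb⟩
      simp [hb, h1]
    · rcases Sum.isLeft_iff.mp h2 with ⟨a, ha⟩
      rcases Sum.isRight_iff.mp h1 with ⟨b, hb⟩
      simp [ha, hb]
lemma my_edges_eq {V : Type*} {G : SimpleGraph V} :
    ∀ {u v : V} (p : G.Walk u v),
      p.edges = (List.range p.length).map (fun j => s(p.getVert j, p.getVert (j+1)))
  | _, _, .nil => by simp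
  | u, v, .cons h p => by
    rw [Walk.edges_cons, my_edges_eq p]
    simp [Walk.length_cons, List.range_succ_eq_map, List.map_map, Function.comp,
      Walk.getVert_cons_succ]

lemma my_countP_degree {V : Type*} [Fintype V] [DecidableEq V] {G : SimpleGraph V}
    [DecidableRel G.Adj] {u v : V} {p : G.Walk u v} (h : p.IsEulerian) (x : V) :
    p.edges.countP (fun e => decide (x ∈ e)) = G.degree x := by
  rw [← card_incidenceFinset_eq_degree, incidenceFinset_eq_filter, ← h.edgesFinset_eq]
  simp [Walk.IsTrail.edgesFinset, Finset.card, Finset.filter,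
    Multiset.countP_eq_card_filter, List.countP_eq_length_filter]

lemma my_count {V : Type*} [Fintype V] [DecidableEq V] {G : SimpleGraph V}
    [DecidableRel G.Adj] {u v : V} {r : G.Walk u v} (hr : r.IsEulerian) (x : V) :
    ((Finset.range r.length).filter (fun k => r.getVert k = x)).card
      + ((Finset.Ioo 0 (r.length + 1)).filter (fun k => r.getVert k = x)).card
      = G.degree x := by
  have h1 := my_countP_degree hr x
  rw [my_edges_eq, List.countP_map] at h1
  have h2 : ((Finset.range r.length).filter
      (fun j => x ∈ s(r.getVert j, r.getVert (j+1)))).card = G.degree x := by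
    rw [← h1]
    simp only [Finset.card, Finset.filter_val, Finset.range, Multiset.range,
      Multiset.countP_eq_card_filter, List.countP_eq_length_filter, Multiset.filter_coe,
      Multiset.coe_card]
    rfl
  rw [← h2]
  have hsplit : (Finset.range r.length).filter
        (fun j => x ∈ s(r.getVert j, r.getVert (j+1)))
      = (Finset.range r.length).filter (fun j => r.getVert j = x)
        ∪ (Finset.range r.length).filter (fun j => r.getVert (j+1) = x) := by
    rw [← Finset.filter_or]
    apply Finset.filter_congr
    intro k _
    simp [Sym2.mem_iff, eq_comm]
  have hdisj : Disjoint
      ((Finset.range r.length).filter (fun j => r.getVert j = x))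
      ((Finset.range r.length).filter (fun j => r.getVert (j+1) = x)) := by
    rw [Finset.disjoint_left]
    intro k hk1 hk2
    simp only [Finset.mem_filter, Finset.mem_range] at hk1 hk2
    have := r.adj_getVert_succ hk1.1
    rw [hk1.2, hk2.2] at this
    exact G.loopless.irrefl x this
  have hbij : ((Finset.range r.length).filter (fun j => r.getVert (j+1) = x)).card
      = ((Finset.Ioo 0 (r.length + 1)).filter (fun k => r.getVert k = x)).card := by
    refine Finset.card_nbij' (fun k => k + 1) (fun k => k - 1) ?_ ?_ ?_ ?_
    · intro k hk
      simp only [Finset.mem_coe, Finset.mem_filter, Finset.mem_range] at hk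
      simp only [Finset.mem_coe, Finset.mem_filter, Finset.mem_Ioo]
      exact ⟨⟨Nat.succ_pos _, by omega⟩, hk.2⟩
    · intro k hk
      simp only [Finset.mem_coe, Finset.mem_filter, Finset.mem_Ioo] at hk
      simp only [Finset.mem_coe, Finset.mem_filter, Finset.mem_range]
      refine ⟨by omega, ?_⟩
      have hk1 : k - 1 + 1 = k := by omega
      rw [hk1]; exact hk.2
    · intro k _; simp
    · intro k hk
      simp only [Finset.mem_coe, Finset.mem_filter, Finset.mem_Ioo] at hk
      simp only []
      omega
  rw [hsplit, Finset.card_union_of_disjoint hdisj, hbij]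

lemma my_fin2 : ∀ (a t : Fin 2), t = a ∨ t = a + 1 := by decide
lemma my_fin2' : ∀ (a : Fin 2), a ≠ a + 1 := by decide

lemma my_walk_counts {s : ℕ} (hs : 1 ≤ s) {i : Fin 2}
    (r : (completeBipartiteGraph (Fin 2) (Fin (2*s))).Walk (Sum.inl i) (Sum.inl i))
    (hr : r.IsEulerian) :
    ((Finset.Ioo 0 r.length).filter (fun k => r.getVert k = Sum.inl i)).card + 1 = s ∧
    ((Finset.Ioo 0 r.length).filter (fun k => Even k)).card = 2*s - 1 := by
  have hmem : s(Sum.inl i, (Sum.inr ⟨0, by omega⟩ : Fin 2 ⊕ Fin (2*s)))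
      ∈ (completeBipartiteGraph (Fin 2) (Fin (2*s))).edgeSet := by simp
  have hL0 : 0 < r.length := by
    rw [← Walk.length_edges]
    exact List.length_pos_of_mem (hr.mem_edges_iff.mpr hmem)
  have par := my_parity r (u := Sum.inl i) rfl
  have hrange : Finset.range r.length = insert 0 (Finset.Ioo 0 r.length) := by
    rw [Finset.range_eq_Ico, Finset.Ioo_insert_left hL0]
  have hIoo : Finset.Ioo 0 (r.length + 1) = insert r.length (Finset.Ioo 0 r.length) := by
    ext k; simp only [Finset.mem_Ioo, Finset.mem_insert]; omega
  have hnotmem0 : (0 : ℕ) ∉ (Finset.Ioo 0 r.length).filter (fun k => r.getVert k = Sum.inl i) := by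
    simp
  have hnotmemL : r.length ∉ (Finset.Ioo 0 r.length).filter (fun k => r.getVert k = Sum.inl i) := by
    simp
  -- count for a = inl i
  have count_a := my_count hr (Sum.inl i)
  rw [my_degree_inl, hrange, hIoo, Finset.filter_insert, Finset.filter_insert,
    if_pos (r.getVert_zero), if_pos (r.getVert_length),
    Finset.card_insert_of_notMem hnotmem0, Finset.card_insert_of_notMem hnotmemL] at count_a
  -- count for b = inl (i+1)
  have hb0 : ¬ (r.getVert 0 = (Sum.inl (i+1) : Fin 2 ⊕ Fin (2*s))) := by
    rw [r.getVert_zero]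
    exact fun h => my_fin2' i (Sum.inl_injective h)
  have hbL : ¬ (r.getVert r.length = (Sum.inl (i+1) : Fin 2 ⊕ Fin (2*s))) := by
    rw [r.getVert_length]
    exact fun h => my_fin2' i (Sum.inl_injective h)
  have count_b := my_count hr (Sum.inl (i+1))
  rw [my_degree_inl, hrange, hIoo, Finset.filter_insert, Finset.filter_insert,
    if_neg hb0, if_neg hbL] at count_b
  -- evens
  have hevens : (Finset.Ioo 0 r.length).filter (fun k => Even k)
      = (Finset.Ioo 0 r.length).filter (fun k => r.getVert k = Sum.inl i)
        ∪ (Finset.Ioo 0 r.length).filter (fun k => r.getVert k = Sum.inl (i+1)) := by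
    rw [← Finset.filter_or]
    apply Finset.filter_congr
    intro k hk
    rw [Finset.mem_Ioo] at hk
    constructor
    · intro hek
      have hl := (par k hk.2.le).mpr hek
      rcases Sum.isLeft_iff.mp hl with ⟨t, ht⟩
      rcases my_fin2 i t with h | h
      · left; rw [ht, h]
      · right; rw [ht, h]
    · rintro (h | h) <;> exact (par k hk.2.le).mp (by rw [h]; rfl)
  have hdisj2 : Disjoint
      ((Finset.Ioo 0 r.length).filter (fun k => r.getVert k = Sum.inl i))
      ((Finset.Ioo 0 r.length).filter (fun k => r.getVert k = Sum.inl (i+1))) := by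
    rw [Finset.disjoint_left]
    intro k hk1 hk2
    rw [Finset.mem_filter] at hk1 hk2
    exact my_fin2' i (Sum.inl_injective (hk1.2 ▸ hk2.2))
  have hcard := congrArg Finset.card hevens
  rw [Finset.card_union_of_disjoint hdisj2] at hcard
  omega

theorem completeBipartite_two_not_doublyEulerian' (s : ℕ) (hs : 1 ≤ s) (i : Fin 2)
    (p q : (completeBipartiteGraph (Fin 2) (Fin (2 * s))).Walk (Sum.inl i) (Sum.inl i))
    (hp : p.IsEulerian) (hq : q.IsEulerian) :
    ¬ (∀ k : ℕ, 0 < k → k < p.length →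
      p.getVert k ≠ q.getVert k ∧
      ¬ (completeBipartiteGraph (Fin 2) (Fin (2 * s))).Adj (p.getVert k) (q.getVert k)) := by
  intro hav
  have hqlen : q.length = p.length := by
    have h1 : p.edges.length = ((completeBipartiteGraph (Fin 2) (Fin (2 * s))).edgeFinset).card := by
      rw [← hp.edgesFinset_eq]; rfl
    have h2 : q.edges.length = ((completeBipartiteGraph (Fin 2) (Fin (2 * s))).edgeFinset).card := by
      rw [← hq.edgesFinset_eq]; rfl
    rw [← Walk.length_edges, ← Walk.length_edges, h1, h2]
  obtain ⟨hNa_p, hE_p⟩ := my_walk_counts hs p hp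
  obtain ⟨hNa_q, _⟩ := my_walk_counts hs q hq
  rw [hqlen] at hNa_q
  have par_p := my_parity p (u := Sum.inl i) rfl
  have par_q := my_parity q (u := Sum.inl i) rfl
  have hsplit : (Finset.Ioo 0 p.length).filter (fun k => Even k)
      = (Finset.Ioo 0 p.length).filter (fun k => p.getVert k = Sum.inl i)
        ∪ (Finset.Ioo 0 p.length).filter (fun k => q.getVert k = Sum.inl i) := by
    rw [← Finset.filter_or]
    apply Finset.filter_congr
    intro k hk
    rw [Finset.mem_Ioo] at hk
    constructor
    · intro hek
      have hlp := (par_p k hk.2.le).mpr hek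
      have hlq := (par_q k (by rw [hqlen]; exact hk.2.le)).mpr hek
      rcases Sum.isLeft_iff.mp hlp with ⟨tp, htp⟩
      rcases Sum.isLeft_iff.mp hlq with ⟨tq, htq⟩
      have hne := (hav k hk.1 hk.2).1
      rcases my_fin2 i tp with h | h
      · left; rw [htp, h]
      · right
        rcases my_fin2 i tq with h' | h'
        · rw [htq, h']
        · exfalso; apply hne; rw [htp, htq, h, h']
    · rintro (h | h)
      · exact (par_p k hk.2.le).mp (by rw [h]; rfl)
      · exact (par_q k (by rw [hqlen]; exact hk.2.le)).mp (by rw [h]; rfl)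
  have hdisj : Disjoint
      ((Finset.Ioo 0 p.length).filter (fun k => p.getVert k = Sum.inl i))
      ((Finset.Ioo 0 p.length).filter (fun k => q.getVert k = Sum.inl i)) := by
    rw [Finset.disjoint_left]
    intro k hk1 hk2
    rw [Finset.mem_filter, Finset.mem_Ioo] at hk1 hk2
    exact (hav k hk1.1.1 hk1.1.2).1 (hk1.2.trans hk2.2.symm)
  have hcard := congrArg Finset.card hsplit
  rw [Finset.card_union_of_disjoint hdisj] at hcard
  omega

end AuxLemmas

/-- The complete bipartite graph `K_{2,2s}` (`s ≥ 1`) is not doubly Eulerian: no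
two Eulerian circuits starting at a vertex of the 2-element part are avoiding. -/
theorem completeBipartite_two_not_doublyEulerian (s : ℕ) (hs : 1 ≤ s) (i : Fin 2)
    (p q : (completeBipartiteGraph (Fin 2) (Fin (2 * s))).Walk (Sum.inl i) (Sum.inl i))
    (hp : p.IsEulerian) (hq : q.IsEulerian) :
    ¬ Avoiding (completeBipartiteGraph (Fin 2) (Fin (2 * s))) p q :=
  completeBipartite_two_not_doublyEulerian' s hs i p q hp hq
end

section
/- The graph K*_{2r+1,2r+1} (complete bipartite graph K_{2r+1,2r+1} minus a perfect matching), for r ≥ 2, is doubly Eulerian. -/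
open SimpleGraph

/-- The complete bipartite graph `K_{m,m}` minus a perfect matching: the left
vertex `i` is adjacent to the right vertex `j` exactly when `i ≠ j`. -/
def Kstar (m : ℕ) : SimpleGraph (Fin m ⊕ Fin m) :=
  SimpleGraph.fromRel (fun a b =>
    ∃ i j : Fin m, i ≠ j ∧ a = Sum.inl i ∧ b = Sum.inr j)

namespace KDE

open Sum

variable {V : Type*} {G : SimpleGraph V}

/-! ### Walks from vertex functions -/

def walkOfFn (G : SimpleGraph V) : (v : ℕ → V) → (k : ℕ) →
    (∀ i < k, G.Adj (v i) (v (i+1))) → G.Walk (v 0) (v k)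
  | _, 0, _ => Walk.nil
  | v, (k+1), h => Walk.cons (h 0 (Nat.succ_pos k))
      (walkOfFn G (fun i => v (i+1)) k (fun i hi => h (i+1) (by omega)))

@[simp] lemma length_walkOfFn (v : ℕ → V) (k : ℕ) (h) :
    (walkOfFn G v k h).length = k := by
  induction k generalizing v with
  | zero => rfl
  | succ k ih => simp [walkOfFn, ih]

lemma getVert_walkOfFn (v : ℕ → V) (k : ℕ) (h) (i : ℕ) (hi : i ≤ k) :
    (walkOfFn G v k h).getVert i = v i := by
  induction k generalizing v i with
  | zero => interval_cases i; rfl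
  | succ k ih =>
      cases i with
      | zero => rfl
      | succ i =>
          rw [walkOfFn, Walk.getVert_cons _ _ (Nat.succ_ne_zero i)]
          simpa using ih (fun i => v (i+1)) _ i (by omega)

lemma edges_walkOfFn (v : ℕ → V) (k : ℕ) (h) :
    (walkOfFn G v k h).edges = (List.range k).map (fun i => s(v i, v (i+1))) := by
  induction k generalizing v with
  | zero => rfl
  | succ k ih =>
      rw [walkOfFn, Walk.edges_cons, ih, List.range_succ_eq_map]
      simp [List.map_map, Function.comp_def]

lemma getVert_walkMap {V' : Type*} {G' : SimpleGraph V'} (f : G →g G') {u w : V}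
    (p : G.Walk u w) (i : ℕ) : (p.map f).getVert i = f (p.getVert i) := by
  induction p generalizing i with
  | nil => rfl
  | cons h p ih =>
      cases i with
      | zero => simp
      | succ i => simpa using ih i

/-! ### Adjacency in Kstar -/

@[simp] lemma kadj_ll (M : ℕ) (a b : Fin M) :
    ¬ (Kstar M).Adj (inl a) (inl b) := by
  simp [Kstar, fromRel_adj]

@[simp] lemma kadj_rr (M : ℕ) (a b : Fin M) :
    ¬ (Kstar M).Adj (inr a) (inr b) := by
  simp [Kstar, fromRel_adj]

@[simp] lemma kadj_lr (M : ℕ) (a b : Fin M) :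
    (Kstar M).Adj (inl a) (inr b) ↔ a ≠ b := by
  constructor
  · rintro ⟨hne, (⟨i,j,hij,h1,h2⟩|⟨i,j,hij,h1,h2⟩)⟩
    · cases h1; cases h2; exact fun h => hij (by simpa using h)
    · cases h1
  · intro h
    exact ⟨by simp [funext_iff], Or.inl ⟨a, b, h, rfl, rfl⟩⟩

@[simp] lemma kadj_rl (M : ℕ) (a b : Fin M) :
    (Kstar M).Adj (inr a) (inl b) ↔ b ≠ a := by
  rw [SimpleGraph.adj_comm]; exact kadj_lr M b a

lemma kstar_edge_form (M : ℕ) (e : Sym2 (Fin M ⊕ Fin M))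
    (he : e ∈ (Kstar M).edgeSet) :
    ∃ a b : Fin M, a ≠ b ∧ e = s(inl a, inr b) := by
  induction e with
  | h x y =>
    rw [SimpleGraph.mem_edgeSet] at he
    rcases x with a|a <;> rcases y with b|b
    · exact absurd he (kadj_ll M a b)
    · exact ⟨a, b, (kadj_lr M a b).1 he, rfl⟩
    · exact ⟨b, a, (kadj_rl M a b).1 he, Sym2.eq_swap⟩
    · exact absurd he (kadj_rr M a b)

/-! ### Transport along isomorphisms -/

lemma isEulerian_map [DecidableEq V] (f : G ≃g G) {u : V} (p : G.Walk u u) (hp : p.IsEulerian) :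
    (p.map f.toHom).IsEulerian := by
  rw [Walk.isEulerian_iff] at hp ⊢
  obtain ⟨ht, hc⟩ := hp
  constructor
  · constructor
    rw [Walk.edges_map]
    exact ht.edges_nodup.map (Sym2.map.injective f.injective)
  · intro e he
    obtain ⟨⟨e', he'⟩, hee⟩ := f.mapEdgeSet.surjective ⟨e, he⟩
    rw [Walk.edges_map]
    have : Sym2.map f e' = e := by
      simpa [SimpleGraph.Iso.mapEdgeSet, Subtype.ext_iff] using hee
    exact this ▸ List.mem_map_of_mem (hc e' he')

lemma avoiding_map (f : G ≃g G) {u : V} (p q : G.Walk u u) (h : Avoiding G p q) :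
    Avoiding G (p.map f.toHom) (q.map f.toHom) := by
  intro i hi hlen
  rw [Walk.length_map] at hlen
  obtain ⟨h1, h2⟩ := h i hi hlen
  rw [getVert_walkMap, getVert_walkMap]
  exact ⟨fun hc => h1 (f.injective hc), fun hc => h2 (f.map_adj_iff.mp hc)⟩

lemma transport [DecidableEq V] (f : G ≃g G) (u : V)
    (h : ∃ p q : G.Walk u u, p.IsEulerian ∧ q.IsEulerian ∧ Avoiding G p q) :
    ∃ p q : G.Walk (f u) (f u), p.IsEulerian ∧ q.IsEulerian ∧ Avoiding G p q := by
  obtain ⟨p, q, hp, hq, hpq⟩ := h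
  exact ⟨p.map f.toHom, q.map f.toHom, isEulerian_map f p hp, isEulerian_map f q hq,
    avoiding_map f p q hpq⟩

lemma exists_copy [DecidableEq V] {u u' : V} (huu : u = u')
    (h : ∃ p q : G.Walk u u, p.IsEulerian ∧ q.IsEulerian ∧ Avoiding G p q) :
    ∃ p q : G.Walk u' u', p.IsEulerian ∧ q.IsEulerian ∧ Avoiding G p q := by
  subst huu; exact h

end KDE

namespace KDE

open Sum

/-! ### Modular arithmetic toolkit -/

def z2f (r : ℕ) : ZMod (2*r+1) → Fin (2*r+1) := id

lemma z2f_inj (r : ℕ) : Function.Injective (z2f r) := fun _ _ h => h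

variable {r : ℕ}

lemma cast_eq_iff (a b : ℕ) :
    ((a : ZMod (2*r+1)) = (b : ZMod (2*r+1))) ↔ ((2*r+1:ℕ):ℤ) ∣ (b:ℤ) - (a:ℤ) := by
  rw [ZMod.natCast_eq_natCast_iff]
  exact Nat.modEq_iff_dvd

/-- Resolve a cast equality into the possible small differences. -/
lemma cast_eq_imp (hr : 2 ≤ r) {a b : ℕ} (h : (a : ZMod (2*r+1)) = (b : ZMod (2*r+1)))
    (M e : ℤ) (hdvd : ((2*r+1:ℕ):ℤ) ∣ M) (hid : (b:ℤ) - (a:ℤ) = M + e)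
    (h1 : -(3*((2*r+1:ℕ):ℤ)) < e) (h2 : e < 3*((2*r+1:ℕ):ℤ)) :
    e = 0 ∨ e = ((2*r+1:ℕ):ℤ) ∨ e = -((2*r+1:ℕ):ℤ) ∨
      e = 2*((2*r+1:ℕ):ℤ) ∨ e = -(2*((2*r+1:ℕ):ℤ)) := by
  rw [cast_eq_iff, hid] at h
  have he : ((2*r+1:ℕ):ℤ) ∣ e := (dvd_add_right hdvd).mp h
  set n : ℤ := ((2*r+1:ℕ):ℤ) with hn
  have hn5 : (5:ℤ) ≤ n := by rw [hn]; push_cast; omega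
  obtain ⟨t, ht⟩ := he
  have hs1 : t < 3 := by nlinarith
  have hs2 : -3 < t := by nlinarith
  interval_cases t <;> omega

lemma cast_ne (hr : 2 ≤ r) (a b : ℕ) (M e : ℤ) (hdvd : ((2*r+1:ℕ):ℤ) ∣ M)
    (hid : (b:ℤ) - (a:ℤ) = M + e)
    (h1 : -(3*((2*r+1:ℕ):ℤ)) < e) (h2 : e < 3*((2*r+1:ℕ):ℤ))
    (h0 : e ≠ 0) (hp : e ≠ ((2*r+1:ℕ):ℤ)) (hm : e ≠ -((2*r+1:ℕ):ℤ))
    (hp2 : e ≠ 2*((2*r+1:ℕ):ℤ)) (hm2 : e ≠ -(2*((2*r+1:ℕ):ℤ))) :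
    (a : ZMod (2*r+1)) ≠ (b : ZMod (2*r+1)) := by
  intro h
  rcases cast_eq_imp hr h M e hdvd hid h1 h2 with h'|h'|h'|h'|h' <;> simp_all

lemma cast_eq (a b : ℕ) (M : ℤ) (hdvd : ((2*r+1:ℕ):ℤ) ∣ M)
    (hid : (b:ℤ) - (a:ℤ) = M) :
    (a : ZMod (2*r+1)) = (b : ZMod (2*r+1)) := by
  rw [cast_eq_iff, hid]; exact hdvd

lemma dvd_n_mul (c : ℤ) : ((2*r+1:ℕ):ℤ) ∣ ((2*r+1:ℕ):ℤ) * c := Dvd.intro _ rfl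

/-! ### The circuits -/

def vl (r : ℕ) (k : ℕ) : Fin (2*r+1) ⊕ Fin (2*r+1) := inl (z2f r (k : ZMod (2*r+1)))
def vr' (r : ℕ) (k : ℕ) : Fin (2*r+1) ⊕ Fin (2*r+1) := inr (z2f r (k : ZMod (2*r+1)))

lemma vl_eq_iff (a b : ℕ) : vl r a = vl r b ↔ (a : ZMod (2*r+1)) = b := by
  unfold vl z2f; exact ⟨Sum.inl.inj, fun h => by rw [h]⟩

lemma vr'_eq_iff (a b : ℕ) : vr' r a = vr' r b ↔ (a : ZMod (2*r+1)) = b := by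
  unfold vr' z2f; exact ⟨Sum.inr.inj, fun h => by rw [h]⟩

lemma vl_congr {a b : ℕ} (h : (a : ZMod (2*r+1)) = b) : vl r a = vl r b :=
  (vl_eq_iff a b).2 h

lemma vr'_congr {a b : ℕ} (h : (a : ZMod (2*r+1)) = b) : vr' r a = vr' r b :=
  (vr'_eq_iff a b).2 h

lemma adj_vl_vr' (a b : ℕ) (h : (a : ZMod (2*r+1)) ≠ b) :
    (Kstar (2*r+1)).Adj (vl r a) (vr' r b) := by
  rw [vl, vr', kadj_lr]; exact fun hc => h hc

lemma adj_vr'_vl (a b : ℕ) (h : (a : ZMod (2*r+1)) ≠ b) :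
    (Kstar (2*r+1)).Adj (vr' r a) (vl r b) := by
  rw [vl, vr', kadj_rl]; exact fun hc => h hc.symm

lemma edge_vlvr_eq_iff (a b c d : ℕ) :
    s(vl r a, vr' r b) = s(vl r c, vr' r d) ↔
      ((a : ZMod (2*r+1)) = c ∧ (b : ZMod (2*r+1)) = d) := by
  rw [Sym2.eq_iff]
  constructor
  · rintro (⟨h1, h2⟩ | ⟨h1, h2⟩)
    · exact ⟨(vl_eq_iff a c).1 h1, (vr'_eq_iff b d).1 h2⟩
    · exact absurd h1 (by simp [vl, vr'])
  · rintro ⟨h1, h2⟩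
    exact Or.inl ⟨vl_congr h1, vr'_congr h2⟩

/-- first Eulerian circuit vertex function -/
def vP (r : ℕ) (m : ℕ) : Fin (2*r+1) ⊕ Fin (2*r+1) :=
  if m % 2 = 0 then vl r (m/2) else vr' r (m/2 + 2*(m/2/(2*r+1)) + 2)

/-- second circuit index functions -/
def qe (r : ℕ) (m : ℕ) : ℕ :=
  if 2 ≤ m ∧ m < 2 + (2*r+1)*(r-1) then m + 2*r - 3 else (2*r+1)*r - m
def qo (r : ℕ) (m : ℕ) : ℕ :=
  if 2 ≤ m ∧ m < 2 + (2*r+1)*(r-1) then m + 2*((m-2)/(2*r+1)) else (2*r+1)*r + 1 - m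

def vQ (r : ℕ) (m : ℕ) : Fin (2*r+1) ⊕ Fin (2*r+1) :=
  if m % 2 = 0 then vl r (qe r (m/2)) else vr' r (qo r (m/2))

lemma vP_even (m : ℕ) : vP r (2*m) = vl r m := by
  have h1 : (2*m) % 2 = 0 := by omega
  have h2 : (2*m)/2 = m := by omega
  simp [vP, h1, h2]

lemma vP_odd (m : ℕ) : vP r (2*m+1) = vr' r (m + 2*(m/(2*r+1)) + 2) := by
  have h1 : (2*m+1) % 2 = 1 := by omega
  have h2 : (2*m+1)/2 = m := by omega
  simp [vP, h1, h2]

lemma vQ_even (m : ℕ) : vQ r (2*m) = vl r (qe r m) := by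
  have h1 : (2*m) % 2 = 0 := by omega
  have h2 : (2*m)/2 = m := by omega
  simp [vQ, h1, h2]

lemma vQ_odd (m : ℕ) : vQ r (2*m+1) = vr' r (qo r m) := by
  have h1 : (2*m+1) % 2 = 1 := by omega
  have h2 : (2*m+1)/2 = m := by omega
  simp [vQ, h1, h2]

/-! ### Arithmetic helpers -/

lemma prod_succ (r : ℕ) (hr : 2 ≤ r) :
    (2*r+1)*r = (2*r+1)*(r-1) + (2*r+1) := by
  obtain ⟨s, rfl⟩ : ∃ s, r = s + 2 := ⟨r-2, by omega⟩
  have h : s + 2 - 1 = s + 1 := rfl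
  rw [h]; ring

lemma div_mul_add (q k : ℕ) (hk : k < 2*r+1) : ((2*r+1)*q + k)/(2*r+1) = q := by
  rw [Nat.mul_add_div (by omega)]
  simp [Nat.div_eq_of_lt hk]

/-- decomposition of an index `m < (2r+1)r` -/
lemma decomp (m : ℕ) (hm : m < (2*r+1)*r) :
    ∃ q k, m = (2*r+1)*q + k ∧ k < 2*r+1 ∧ q < r ∧ m / (2*r+1) = q := by
  refine ⟨m/(2*r+1), m % (2*r+1), (Nat.div_add_mod m (2*r+1)).symm, Nat.mod_lt _ (by omega), ?_, rfl⟩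
  by_contra h
  push_neg at h
  have : (2*r+1)*r ≤ (2*r+1)*(m/(2*r+1)) := Nat.mul_le_mul_left _ h
  have h2 : (2*r+1)*(m/(2*r+1)) ≤ m := Nat.mul_div_le m (2*r+1)
  omega

/-- coordinates for the outer region -/
lemma outer_coords (hr : 2 ≤ r) (m : ℕ) (hm : m ≤ (2*r+1)*r)
    (h : ¬(2 ≤ m ∧ m < 2 + (2*r+1)*(r-1))) :
    m ≤ 1 ∨ ∃ k, 2 ≤ k ∧ k ≤ 2*r+1 ∧ m = (2*r+1)*(r-1) + k := by
  have hAB := prod_succ r hr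
  rcases Nat.lt_or_ge m 2 with h'|h'
  · left; omega
  · right
    refine ⟨m - (2*r+1)*(r-1), ?_, ?_, ?_⟩ <;> omega

end KDE

namespace KDE

open Sum

variable {r : ℕ}

/-! ### Integer values of the index functions -/

lemma prod_pred (t : ℕ) (ht : 1 ≤ t) : (2*r+1)*t = (2*r+1)*(t-1) + (2*r+1) := by
  obtain ⟨s, rfl⟩ : ∃ s, t = s + 1 := ⟨t-1, by omega⟩
  have h : s + 1 - 1 = s := rfl
  rw [h]; ring

lemma q_lt_of {m q k t : ℕ} (hqk : m = (2*r+1)*q + k) (h : m < (2*r+1)*t) : q < t := by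
  have h2 : (2*r+1)*q < (2*r+1)*t := by omega
  exact Nat.lt_of_mul_lt_mul_left h2

lemma qeZ_mid (hr : 2 ≤ r) {m : ℕ} (hm : 2 ≤ m ∧ m < 2 + (2*r+1)*(r-1)) :
    ((qe r m : ℕ) : ℤ) = (m:ℤ) + 2*r - 3 := by
  rw [qe, if_pos hm]; omega

lemma qeZ_out {m : ℕ} (hm : m ≤ (2*r+1)*r) (h : ¬(2 ≤ m ∧ m < 2 + (2*r+1)*(r-1))) :
    ((qe r m : ℕ) : ℤ) = (2*(r:ℤ)+1)*r - m := by
  rw [qe, if_neg h]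
  have h1 : (((2*r+1)*r - m : ℕ) : ℤ) = (((2*r+1)*r : ℕ) : ℤ) - (m:ℤ) := by omega
  rw [h1]; push_cast; ring

lemma qoZ_mid {m : ℕ} (hm : 2 ≤ m ∧ m < 2 + (2*r+1)*(r-1)) :
    ((qo r m : ℕ) : ℤ) = (m:ℤ) + 2*(((m-2)/(2*r+1) : ℕ) : ℤ) := by
  rw [qo, if_pos hm]; push_cast; ring

lemma qoZ_out {m : ℕ} (hm : m ≤ (2*r+1)*r + 1) (h : ¬(2 ≤ m ∧ m < 2 + (2*r+1)*(r-1))) :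
    ((qo r m : ℕ) : ℤ) = (2*(r:ℤ)+1)*r + 1 - m := by
  rw [qo, if_neg h]
  have h1 : (((2*r+1)*r + 1 - m : ℕ) : ℤ) = (((2*r+1)*r : ℕ) : ℤ) + 1 - (m:ℤ) := by omega
  rw [h1]; push_cast; ring

/-! ### Adjacency along the circuits -/

lemma hadjP (hr : 2 ≤ r) : ∀ i < 2*((2*r+1)*r),
    (Kstar (2*r+1)).Adj (vP r i) (vP r (i+1)) := by
  intro i hi
  obtain ⟨m, rfl|rfl⟩ := Nat.even_or_odd' i
  · rw [vP_even, vP_odd]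
    obtain ⟨q, k, hqk, hk, hq, hdiv⟩ := decomp (r := r) m (by omega)
    rw [hdiv]
    apply adj_vl_vr'
    refine cast_ne hr _ _ 0 (2*(q:ℤ)+2) (dvd_zero _) (by push_cast; ring) ?_ ?_ ?_ ?_ ?_ ?_ ?_ <;>
      (push_cast; omega)
  · have h2 : 2*m+1+1 = 2*(m+1) := by ring
    rw [h2, vP_even, vP_odd]
    obtain ⟨q, k, hqk, hk, hq, hdiv⟩ := decomp (r := r) m (by omega)
    rw [hdiv]
    apply adj_vr'_vl
    refine cast_ne hr _ _ 0 (-(2*(q:ℤ)+1)) (dvd_zero _) (by push_cast; ring) ?_ ?_ ?_ ?_ ?_ ?_ ?_ <;>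
      (push_cast; omega)

end KDE

namespace KDE

open Sum

variable {r : ℕ}

lemma mid_coords (m : ℕ) (hm : 2 ≤ m ∧ m < 2 + (2*r+1)*(r-1)) :
    ∃ q k, m = (2*r+1)*q + k + 2 ∧ k < 2*r+1 ∧ q < r-1 ∧ (m-2)/(2*r+1) = q := by
  have hd : (2*r+1)*((m-2)/(2*r+1)) + (m-2) % (2*r+1) = m - 2 := Nat.div_add_mod _ _
  refine ⟨(m-2)/(2*r+1), (m-2) % (2*r+1), by omega, Nat.mod_lt _ (by omega), ?_, rfl⟩
  exact q_lt_of (show m - 2 = (2*r+1)*((m-2)/(2*r+1)) + (m-2) % (2*r+1) from by omega) (by omega)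

lemma hadjQ (hr : 2 ≤ r) : ∀ i < 2*((2*r+1)*r),
    (Kstar (2*r+1)).Adj (vQ r i) (vQ r (i+1)) := by
  have hA := prod_succ r hr
  intro i hi
  obtain ⟨m, rfl|rfl⟩ := Nat.even_or_odd' i
  · -- even edge
    rw [vQ_even, vQ_odd]
    apply adj_vl_vr'
    by_cases hm : 2 ≤ m ∧ m < 2 + (2*r+1)*(r-1)
    · obtain ⟨q, k, hqk, hk, hq, hdiv⟩ := mid_coords (r := r) m hm
      refine cast_ne hr _ _ 0 (2*(q:ℤ) - 2*r + 3) (dvd_zero _) ?_ ?_ ?_ ?_ ?_ ?_ ?_ ?_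
      · rw [qoZ_mid hm, qeZ_mid hr hm, hdiv]; push_cast; ring
      all_goals (push_cast <;> omega)
    · refine cast_ne hr _ _ 0 1 (dvd_zero _) ?_ ?_ ?_ ?_ ?_ ?_ ?_ ?_
      · rw [qoZ_out (by omega) hm, qeZ_out (by omega) hm]; ring
      all_goals (push_cast <;> omega)
  · -- odd edge
    have h2 : 2*m+1+1 = 2*(m+1) := by ring
    rw [h2, vQ_odd, vQ_even]
    apply adj_vr'_vl
    by_cases hm : 2 ≤ m ∧ m < 2 + (2*r+1)*(r-1)
    · by_cases hm1 : 2 ≤ m+1 ∧ m+1 < 2 + (2*r+1)*(r-1)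
      · -- mid, mid
        obtain ⟨q, k, hqk, hk, hq, hdiv⟩ := mid_coords (r := r) m hm
        refine cast_ne hr _ _ 0 (2*(r:ℤ) - 2 - 2*q) (dvd_zero _) ?_ ?_ ?_ ?_ ?_ ?_ ?_ ?_
        · rw [qeZ_mid hr hm1, qoZ_mid hm, hdiv]; push_cast; ring
        all_goals (push_cast <;> omega)
      · -- mid, out : m = 1 + (2r+1)(r-1)
        have hmeq : m = 1 + (2*r+1)*(r-1) := by omega
        have hB := prod_pred (r := r) (r-1) (by omega)
        have hB' : r - 1 - 1 = r - 2 := by omega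
        rw [hB'] at hB
        have hq : (m-2)/(2*r+1) = r-2 := by
          rw [show m - 2 = (2*r+1)*(r-2) + 2*r from by omega]
          exact div_mul_add _ _ (by omega)
        have hmz : (m:ℤ) = 1 + (2*(r:ℤ)+1)*((r:ℤ)-1) := by
          have h3 : (m:ℤ) = 1 + (((2*r+1)*(r-1) : ℕ) : ℤ) := by exact_mod_cast hmeq
          rw [h3]; push_cast [Nat.cast_sub (show 1 ≤ r by omega)]; ring
        refine cast_ne hr _ _ (((2*r+1:ℕ):ℤ) * (1 - (r:ℤ))) 2 (dvd_n_mul _) ?_ ?_ ?_ ?_ ?_ ?_ ?_ ?_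
        · rw [qeZ_out (by omega) hm1, qoZ_mid hm, hq]
          have h4 : ((r-2:ℕ):ℤ) = (r:ℤ) - 2 := by omega
          rw [h4]; push_cast
          linear_combination (-2 : ℤ) * hmz
        all_goals (push_cast <;> omega)
    · -- m out
      rcases (show m = 0 ∨ m = 1 ∨ 2 + (2*r+1)*(r-1) ≤ m from by omega) with h0 | h1 | hbig
      · subst h0
        refine cast_ne hr _ _ 0 (-2) (dvd_zero _) ?_ ?_ ?_ ?_ ?_ ?_ ?_ ?_
        · rw [qeZ_out (by omega) (by omega), qoZ_out (by omega) (by omega)]; push_cast; ring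
        all_goals (push_cast <;> omega)
      · subst h1
        have hm1 : 2 ≤ 1+1 ∧ 1+1 < 2 + (2*r+1)*(r-1) := by
          have : 0 < (2*r+1)*(r-1) := Nat.mul_pos (by omega) (by omega)
          omega
        refine cast_ne hr _ _ (((2*r+1:ℕ):ℤ) * (1 - (r:ℤ))) (-2) (dvd_n_mul _) ?_ ?_ ?_ ?_ ?_ ?_ ?_ ?_
        · rw [qeZ_mid hr hm1, qoZ_out (by omega) (by omega)]; push_cast; ring
        all_goals (push_cast <;> omega)
      · refine cast_ne hr _ _ 0 (-2) (dvd_zero _) ?_ ?_ ?_ ?_ ?_ ?_ ?_ ?_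
        · rw [qeZ_out (by omega) (by omega), qoZ_out (by omega) (by omega)]; push_cast; ring
        all_goals (push_cast <;> omega)

end KDE

namespace KDE

open Sum

variable {r : ℕ}

/-! ### The circuit walks -/

lemma vP_zero : vP r 0 = vl r 0 := by simpa using vP_even (r := r) 0

lemma vP_last : vP r (2*((2*r+1)*r)) = vl r 0 := by
  rw [vP_even]
  exact vl_congr (cast_eq _ _ (((2*r+1:ℕ):ℤ) * (-(r:ℤ))) (dvd_n_mul _) (by push_cast; ring))

lemma qe_zero (hr : 2 ≤ r) : qe r 0 = (2*r+1)*r := by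
  rw [qe, if_neg (by omega)]
  omega

lemma qe_last (hr : 2 ≤ r) : qe r ((2*r+1)*r) = 0 := by
  have hA := prod_succ r hr
  rw [qe, if_neg (by omega)]
  omega

lemma vQ_zero (hr : 2 ≤ r) : vQ r 0 = vl r 0 := by
  have h : vQ r (2*0) = vl r (qe r 0) := vQ_even 0
  simp only [Nat.mul_zero] at h
  rw [h, qe_zero hr]
  exact vl_congr (cast_eq _ _ (((2*r+1:ℕ):ℤ) * (-(r:ℤ))) (dvd_n_mul _) (by push_cast; ring))

lemma vQ_last (hr : 2 ≤ r) : vQ r (2*((2*r+1)*r)) = vl r 0 := by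
  rw [vQ_even, qe_last hr]

/-- the two circuits, as closed walks based at `vl r 0`. -/
def circP (hr : 2 ≤ r) : (Kstar (2*r+1)).Walk (vl r 0) (vl r 0) :=
  (walkOfFn _ (vP r) (2*((2*r+1)*r)) (hadjP hr)).copy vP_zero vP_last

def circQ (hr : 2 ≤ r) : (Kstar (2*r+1)).Walk (vl r 0) (vl r 0) :=
  (walkOfFn _ (vQ r) (2*((2*r+1)*r)) (hadjQ hr)).copy (vQ_zero hr) (vQ_last hr)

@[simp] lemma length_circP (hr : 2 ≤ r) : (circP hr).length = 2*((2*r+1)*r) := by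
  rw [circP, Walk.length_copy, length_walkOfFn]

@[simp] lemma length_circQ (hr : 2 ≤ r) : (circQ hr).length = 2*((2*r+1)*r) := by
  rw [circQ, Walk.length_copy, length_walkOfFn]

lemma getVert_circP (hr : 2 ≤ r) (i : ℕ) (hi : i ≤ 2*((2*r+1)*r)) :
    (circP hr).getVert i = vP r i := by
  rw [circP, Walk.getVert_copy, getVert_walkOfFn _ _ _ _ hi]

lemma getVert_circQ (hr : 2 ≤ r) (i : ℕ) (hi : i ≤ 2*((2*r+1)*r)) :
    (circQ hr).getVert i = vQ r i := by
  rw [circQ, Walk.getVert_copy, getVert_walkOfFn _ _ _ _ hi]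

lemma edges_circP (hr : 2 ≤ r) :
    (circP hr).edges = (List.range (2*((2*r+1)*r))).map (fun i => s(vP r i, vP r (i+1))) := by
  rw [circP, Walk.edges_copy, edges_walkOfFn]

lemma edges_circQ (hr : 2 ≤ r) :
    (circQ hr).edges = (List.range (2*((2*r+1)*r))).map (fun i => s(vQ r i, vQ r (i+1))) := by
  rw [circQ, Walk.edges_copy, edges_walkOfFn]

end KDE

namespace KDE

open Sum

variable {r : ℕ}

/-! ### Avoidance -/

lemma vl_ne {a b : ℕ} (h : (a : ZMod (2*r+1)) ≠ b) : vl r a ≠ vl r b :=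
  fun hc => h ((vl_eq_iff a b).1 hc)

lemma vr'_ne {a b : ℕ} (h : (a : ZMod (2*r+1)) ≠ b) : vr' r a ≠ vr' r b :=
  fun hc => h ((vr'_eq_iff a b).1 hc)

lemma not_adj_vl_vl (a b : ℕ) : ¬ (Kstar (2*r+1)).Adj (vl r a) (vl r b) := by
  simp [vl]

lemma not_adj_vr'_vr' (a b : ℕ) : ¬ (Kstar (2*r+1)).Adj (vr' r a) (vr' r b) := by
  simp [vr']

lemma castSub1 (hr : 2 ≤ r) {m k : ℕ} (h : m = (2*r+1)*(r-1) + k) :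
    (m : ℤ) = (2*(r:ℤ)+1)*((r:ℤ)-1) + k := by
  have h3 : (m:ℤ) = (((2*r+1)*(r-1) : ℕ) : ℤ) + k := by exact_mod_cast h
  rw [h3]; push_cast [Nat.cast_sub (show 1 ≤ r by omega)]; ring

lemma avoidPQ (hr : 2 ≤ r) : Avoiding (Kstar (2*r+1)) (circP hr) (circQ hr) := by
  have hA := prod_succ r hr
  intro i hi hlen
  rw [length_circP] at hlen
  rw [getVert_circP hr i (by omega), getVert_circQ hr i (by omega)]
  obtain ⟨m, rfl|rfl⟩ := Nat.even_or_odd' i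
  · -- even positions : both on the left side
    rw [vP_even, vQ_even]
    refine ⟨vl_ne ?_, not_adj_vl_vl _ _⟩
    by_cases hm : 2 ≤ m ∧ m < 2 + (2*r+1)*(r-1)
    · refine cast_ne hr _ _ 0 (2*(r:ℤ)-3) (dvd_zero _) ?_ ?_ ?_ ?_ ?_ ?_ ?_ ?_
      · rw [qeZ_mid hr hm]; push_cast; ring
      all_goals (push_cast <;> omega)
    · rcases (show m = 1 ∨ 2 + (2*r+1)*(r-1) ≤ m from by omega) with h1 | hbig
      · subst h1
        refine cast_ne hr _ _ (((2*r+1:ℕ):ℤ)*((r:ℤ)-1)) (2*(r:ℤ)-1) (dvd_n_mul _) ?_ ?_ ?_ ?_ ?_ ?_ ?_ ?_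
        · rw [qeZ_out (by omega) hm]; push_cast; ring
        all_goals (push_cast <;> omega)
      · obtain ⟨k, hk2, hkle, hkeq⟩ : ∃ k, 2 ≤ k ∧ k ≤ 2*r ∧ m = (2*r+1)*(r-1) + k :=
          ⟨m - (2*r+1)*(r-1), by omega, by omega, by omega⟩
        have hmz := castSub1 hr hkeq
        refine cast_ne hr _ _ (((2*r+1:ℕ):ℤ)*(2-(r:ℤ))) (-2*(k:ℤ)) (dvd_n_mul _) ?_ ?_ ?_ ?_ ?_ ?_ ?_ ?_
        · rw [qeZ_out (by omega) hm]; push_cast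
          linear_combination (-2 : ℤ) * hmz
        all_goals (push_cast <;> omega)
  · -- odd positions : both on the right side
    rw [vP_odd, vQ_odd]
    by_cases hm : 2 ≤ m ∧ m < 2 + (2*r+1)*(r-1)
    · obtain ⟨q, k, hqk, hk, hq, hdiv⟩ := mid_coords (r := r) m hm
      rcases Nat.lt_or_ge (k+2) (2*r+1) with hc | hc
      · have hdq : m/(2*r+1) = q := by
          rw [show m = (2*r+1)*q + (k+2) from by omega]; exact div_mul_add _ _ hc
        rw [hdq]
        refine ⟨vr'_ne ?_, not_adj_vr'_vr' _ _⟩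
        refine cast_ne hr _ _ 0 (-2) (dvd_zero _) ?_ ?_ ?_ ?_ ?_ ?_ ?_ ?_
        · rw [qoZ_mid hm, hdiv]; push_cast; ring
        all_goals (push_cast <;> omega)
      · have hstep : (2*r+1)*(q+1) = (2*r+1)*q + (2*r+1) := by ring
        have hdq : m/(2*r+1) = q + 1 := by
          rw [show m = (2*r+1)*(q+1) + (k+2-(2*r+1)) from by omega]
          exact div_mul_add _ _ (by omega)
        rw [hdq]
        refine ⟨vr'_ne ?_, not_adj_vr'_vr' _ _⟩
        refine cast_ne hr _ _ 0 (-4) (dvd_zero _) ?_ ?_ ?_ ?_ ?_ ?_ ?_ ?_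
        · rw [qoZ_mid hm, hdiv]; push_cast; ring
        all_goals (push_cast <;> omega)
    · rcases (show m = 0 ∨ m = 1 ∨ 2 + (2*r+1)*(r-1) ≤ m from by omega) with h0 | h1 | hbig
      · subst h0
        have hdq : 0/(2*r+1) = 0 := Nat.zero_div _
        rw [hdq]
        refine ⟨vr'_ne ?_, not_adj_vr'_vr' _ _⟩
        refine cast_ne hr _ _ (((2*r+1:ℕ):ℤ)*((r:ℤ)-1)) (2*(r:ℤ)) (dvd_n_mul _) ?_ ?_ ?_ ?_ ?_ ?_ ?_ ?_
        · rw [qoZ_out (by omega) hm]; push_cast; ring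
        all_goals (push_cast <;> omega)
      · subst h1
        have hdq : 1/(2*r+1) = 0 := Nat.div_eq_of_lt (by omega)
        rw [hdq]
        refine ⟨vr'_ne ?_, not_adj_vr'_vr' _ _⟩
        refine cast_ne hr _ _ (((2*r+1:ℕ):ℤ)*((r:ℤ)-1)) (2*(r:ℤ)-2) (dvd_n_mul _) ?_ ?_ ?_ ?_ ?_ ?_ ?_ ?_
        · rw [qoZ_out (by omega) hm]; push_cast; ring
        all_goals (push_cast <;> omega)
      · obtain ⟨k, hk2, hkle, hkeq⟩ : ∃ k, 2 ≤ k ∧ k ≤ 2*r ∧ m = (2*r+1)*(r-1) + k :=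
          ⟨m - (2*r+1)*(r-1), by omega, by omega, by omega⟩
        have hmz := castSub1 hr hkeq
        have hdq : m/(2*r+1) = r-1 := by
          rw [hkeq]; exact div_mul_add _ _ (by omega)
        rw [hdq]
        refine ⟨vr'_ne ?_, not_adj_vr'_vr' _ _⟩
        refine cast_ne hr _ _ (((2*r+1:ℕ):ℤ)*(2-(r:ℤ))) (1-2*(r:ℤ)-2*(k:ℤ)) (dvd_n_mul _) ?_ ?_ ?_ ?_ ?_ ?_ ?_ ?_
        · rw [qoZ_out (by omega) hm]
          have h4 : ((r-1:ℕ):ℤ) = (r:ℤ) - 1 := by omega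
          push_cast [h4]
          linear_combination (-2 : ℤ) * hmz
        all_goals (push_cast <;> omega)

end KDE

namespace KDE

open Sum

variable {V : Type*} {G : SimpleGraph V}

lemma isEulerian_of_coverage [DecidableEq V] [Fintype V] [DecidableRel G.Adj] {u : V}
    (p : G.Walk u u) (hlen : p.edges.length = G.edgeFinset.card)
    (hcov : ∀ e ∈ G.edgeSet, e ∈ p.edges) : p.IsEulerian := by
  have hnd : p.edges.Nodup := by
    have h1 : p.edges.dedup.length = G.edgeFinset.card := by
      rw [← List.card_toFinset]
      congr 1
      apply Finset.Subset.antisymm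
      · intro e he
        rw [List.mem_toFinset] at he
        exact SimpleGraph.mem_edgeFinset.2 (p.edges_subset_edgeSet he)
      · intro e he
        rw [List.mem_toFinset]
        exact hcov e (SimpleGraph.mem_edgeFinset.1 he)
    have h2 := List.Sublist.eq_of_length (List.dedup_sublist p.edges) (by rw [h1, ← hlen])
    rw [← List.dedup_eq_self]
    exact h2
  exact Walk.IsTrail.isEulerian_of_forall_mem ⟨hnd⟩ hcov

lemma card_edgeFinset_kstar (r : ℕ) [DecidableRel (Kstar (2*r+1)).Adj] :
    (Kstar (2*r+1)).edgeFinset.card = 2*((2*r+1)*r) := by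
  classical
  have hbij : (Finset.univ : Finset (Fin (2*r+1))).offDiag.card
      = (Kstar (2*r+1)).edgeFinset.card := by
    apply Finset.card_bij (fun p _ => s(inl p.1, inr p.2))
    · intro p hp
      rw [Finset.mem_offDiag] at hp
      rw [SimpleGraph.mem_edgeFinset, SimpleGraph.mem_edgeSet, kadj_lr]
      exact hp.2.2
    · intro p hp p' hp' h
      rw [Sym2.eq_iff] at h
      rcases h with ⟨h1, h2⟩ | ⟨h1, h2⟩
      · obtain ⟨q1, q2⟩ := p; obtain ⟨q1', q2'⟩ := p'
        simp only [inl.injEq] at h1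
        simp only [inr.injEq] at h2
        simp [h1, h2]
      · simp at h1
    · intro e he
      rw [SimpleGraph.mem_edgeFinset] at he
      obtain ⟨a, b, hab, rfl⟩ := kstar_edge_form _ e he
      exact ⟨(a, b), Finset.mem_offDiag.2 ⟨Finset.mem_univ _, Finset.mem_univ _, hab⟩, rfl⟩
  rw [← hbij, Finset.offDiag_card]
  simp only [Finset.card_univ, Fintype.card_fin]
  have h : (2*r+1)*(2*r+1) = 2*((2*r+1)*r) + (2*r+1) := by ring
  omega

end KDE

namespace KDE

open Sum

variable {r : ℕ}

def f2z (r : ℕ) : Fin (2*r+1) → ZMod (2*r+1) := id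

lemma f2z_inj : Function.Injective (f2z r) := fun _ _ h => h

lemma natCast_val (x : ZMod (2*r+1)) : ((x.val : ℕ) : ZMod (2*r+1)) = x :=
  ZMod.natCast_rightInverse x

lemma inl_eq_vl (a : Fin (2*r+1)) : inl a = vl r ((f2z r a).val) := by
  rw [vl]
  exact congrArg inl (congrArg (z2f r) (natCast_val (f2z r a)).symm)

lemma inr_eq_vr' (a : Fin (2*r+1)) : inr a = vr' r ((f2z r a).val) := by
  rw [vr']
  exact congrArg inr (congrArg (z2f r) (natCast_val (f2z r a)).symm)

lemma covP (hr : 2 ≤ r) : ∀ e ∈ (Kstar (2*r+1)).edgeSet, e ∈ (circP hr).edges := by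
  have hA2 := prod_succ r hr
  intro e he
  obtain ⟨a, b, hab, rfl⟩ := kstar_edge_form _ e he
  rw [edges_circP, List.mem_map]
  set A := (f2z r a).val with hA_def
  set B := (f2z r b).val with hB_def
  set d := (f2z r b - f2z r a).val with hd_def
  have hA : ((A : ℕ) : ZMod (2*r+1)) = f2z r a := natCast_val _
  have hB : ((B : ℕ) : ZMod (2*r+1)) = f2z r b := natCast_val _
  have hd : ((d : ℕ) : ZMod (2*r+1)) = f2z r b - f2z r a := natCast_val _
  have hd0 : d ≠ 0 := by
    intro h
    rw [hd_def, ZMod.val_eq_zero, sub_eq_zero] at h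
    exact hab (f2z_inj h.symm)
  have hdlt : d < 2*r+1 := ZMod.val_lt _
  have hAlt : A < 2*r+1 := ZMod.val_lt _
  have HAB : ((A + d : ℕ) : ZMod (2*r+1)) = ((B : ℕ) : ZMod (2*r+1)) := by
    push_cast
    rw [hA, hd, hB]
    ring
  obtain ⟨t, ht⟩ := (cast_eq_iff (A + d) B).1 HAB
  push_cast at ht
  rcases Nat.even_or_odd d with hev | hod
  · -- even difference: even-indexed edge of P
    obtain ⟨e', he'⟩ : ∃ e', d = 2*e' + 2 := by
      obtain ⟨c, hc⟩ := hev; exact ⟨c - 1, by omega⟩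
    refine ⟨2*((2*r+1)*e' + A), List.mem_range.2 ?_, ?_⟩
    · have h1 : (2*r+1)*e' ≤ (2*r+1)*(r-1) := Nat.mul_le_mul_left _ (by omega)
      omega
    · rw [vP_even, vP_odd, div_mul_add _ _ hAlt, inl_eq_vl, inr_eq_vr', edge_vlvr_eq_iff]
      rw [← hA_def, ← hB_def]
      constructor
      · refine cast_eq _ _ (((2*r+1:ℕ):ℤ) * (-(e':ℤ))) (dvd_n_mul _) ?_
        push_cast; ring
      · rw [show (2*r+1)*e' + A + 2*e' + 2 = (2*r+1)*e' + (A + d) from by omega]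
        refine cast_eq _ _ (((2*r+1:ℕ):ℤ) * (t - (e':ℤ))) (dvd_n_mul _) ?_
        push_cast
        linear_combination ht
  · -- odd difference: odd-indexed edge of P
    obtain ⟨c, hc⟩ := hod
    have hcz : (d:ℤ) = 2*(c:ℤ)+1 := by exact_mod_cast hc
    rcases Nat.eq_zero_or_pos A with hA0 | hA1
    · have hA0z : (A:ℤ) = 0 := by exact_mod_cast hA0
      refine ⟨2*((2*r+1)*c + 2*r)+1, List.mem_range.2 ?_, ?_⟩
      · have h1 : (2*r+1)*c ≤ (2*r+1)*(r-1) := Nat.mul_le_mul_left _ (by omega)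
        omega
      · rw [vP_odd, show 2*((2*r+1)*c + 2*r)+1+1 = 2*(((2*r+1)*c + 2*r)+1) from by ring,
            vP_even, div_mul_add _ _ (show 2*r < 2*r+1 from by omega), Sym2.eq_swap,
            inl_eq_vl, inr_eq_vr', edge_vlvr_eq_iff]
        rw [← hA_def, ← hB_def]
        constructor
        · refine cast_eq _ _ (((2*r+1:ℕ):ℤ) * (-(c:ℤ)-1)) (dvd_n_mul _) ?_
          push_cast
          linear_combination hA0z
        · refine cast_eq _ _ (((2*r+1:ℕ):ℤ) * (t - (c:ℤ) - 1)) (dvd_n_mul _) ?_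
          push_cast
          linear_combination ht + hA0z + hcz
    · refine ⟨2*((2*r+1)*c + (A-1))+1, List.mem_range.2 ?_, ?_⟩
      · have h1 : (2*r+1)*c ≤ (2*r+1)*(r-1) := Nat.mul_le_mul_left _ (by omega)
        omega
      · rw [vP_odd, show 2*((2*r+1)*c + (A-1))+1+1 = 2*(((2*r+1)*c + (A-1))+1) from by ring,
            vP_even, div_mul_add _ _ (show A-1 < 2*r+1 from by omega), Sym2.eq_swap,
            inl_eq_vl, inr_eq_vr', edge_vlvr_eq_iff]
        rw [← hA_def, ← hB_def]
        have hsub : ((A - 1 : ℕ) : ℤ) = (A:ℤ) - 1 := by omega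
        constructor
        · refine cast_eq _ _ (((2*r+1:ℕ):ℤ) * (-(c:ℤ))) (dvd_n_mul _) ?_
          push_cast [hsub]
          ring
        · refine cast_eq _ _ (((2*r+1:ℕ):ℤ) * (t - (c:ℤ))) (dvd_n_mul _) ?_
          push_cast [hsub]
          linear_combination ht + hcz
end KDE

namespace KDE

open Sum

variable {r : ℕ}

lemma lt_prod_of (hr : 2 ≤ r) {q k : ℕ} (hq : q ≤ r-2) (hk : k < 2*r+1) :
    (2*r+1)*q + k < (2*r+1)*(r-1) := by
  have e1 : (2*r+1)*(q+1) ≤ (2*r+1)*(r-1) := Nat.mul_le_mul_left _ (by omega)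
  have e2 : (2*r+1)*(q+1) = (2*r+1)*q + (2*r+1) := by ring
  omega

lemma lt_prod_of' (hr : 2 ≤ r) {q k : ℕ} (hq : q ≤ r-2) (hk : k < 2*r+1)
    (h : ¬(q = r-2 ∧ k = 2*r)) : (2*r+1)*q + k + 1 < (2*r+1)*(r-1) := by
  have e3 := prod_pred (r := r) (r-1) (by omega)
  have e4 : r - 1 - 1 = r - 2 := by omega
  rw [e4] at e3
  rcases Nat.lt_or_ge q (r-2) with h'|h'
  · have e1 : (2*r+1)*(q+1) ≤ (2*r+1)*(r-2) := Nat.mul_le_mul_left _ (by omega)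
    have e2 : (2*r+1)*(q+1) = (2*r+1)*q + (2*r+1) := by ring
    omega
  · have hq2 : q = r-2 := by omega
    subst hq2
    omega

lemma covQ (hr : 2 ≤ r) : ∀ e ∈ (Kstar (2*r+1)).edgeSet, e ∈ (circQ hr).edges := by
  have hA2 := prod_succ r hr
  have hpp : (2*r+1)*(r-1) = (2*r+1)*(r-2) + (2*r+1) := by
    have h := prod_pred (r := r) (r-1) (by omega)
    have h4 : r - 1 - 1 = r - 2 := by omega
    rwa [h4] at h
  intro e he
  obtain ⟨a, b, hab, rfl⟩ := kstar_edge_form _ e he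
  rw [edges_circQ, List.mem_map]
  set A := (f2z r a).val with hA_def
  set B := (f2z r b).val with hB_def
  set d := (f2z r b - f2z r a).val with hd_def
  have hA : ((A : ℕ) : ZMod (2*r+1)) = f2z r a := natCast_val _
  have hB : ((B : ℕ) : ZMod (2*r+1)) = f2z r b := natCast_val _
  have hd : ((d : ℕ) : ZMod (2*r+1)) = f2z r b - f2z r a := natCast_val _
  have hd0 : d ≠ 0 := by
    intro h
    rw [hd_def, ZMod.val_eq_zero, sub_eq_zero] at h
    exact hab (f2z_inj h.symm)
  have hdlt : d < 2*r+1 := ZMod.val_lt _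
  have hAlt : A < 2*r+1 := ZMod.val_lt _
  have hBlt : B < 2*r+1 := ZMod.val_lt _
  have HAB : ((A + d : ℕ) : ZMod (2*r+1)) = ((B : ℕ) : ZMod (2*r+1)) := by
    push_cast
    rw [hA, hd, hB]
    ring
  obtain ⟨t, ht⟩ := (cast_eq_iff (A + d) B).1 HAB
  push_cast at ht
  rcases Nat.even_or_odd d with hev | hod
  · obtain ⟨c, hc⟩ : ∃ c, d = 2*c := by obtain ⟨c, hc⟩ := hev; exact ⟨c, by omega⟩
    rcases Nat.lt_or_ge c 2 with hc1 | hc2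
    · -- d = 2 : odd-indexed outer edge of Q
      have hd2 : d = 2 := by omega
      have hd2z : (d:ℤ) = 2 := by exact_mod_cast hd2
      rcases (show B = 1 ∨ B = 0 ∨ 2 ≤ B from by omega) with hB1 | hB0 | hB2
      · -- B = 1, m = 0
        have hB1z : (B:ℤ) = 1 := by exact_mod_cast hB1
        refine ⟨2*0+1, List.mem_range.2 (by omega), ?_⟩
        rw [vQ_odd, show 2*0+1+1 = 2*(0+1) from by ring, vQ_even, Sym2.eq_swap,
            inl_eq_vl, inr_eq_vr', edge_vlvr_eq_iff, ← hA_def, ← hB_def]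
        constructor
        · refine cast_eq _ _ (((2*r+1:ℕ):ℤ) * (-t-(r:ℤ))) (dvd_n_mul _) ?_
          rw [qeZ_out (by omega) (by omega)]
          push_cast
          linear_combination -ht + hB1z - hd2z
        · refine cast_eq _ _ (((2*r+1:ℕ):ℤ) * (-(r:ℤ))) (dvd_n_mul _) ?_
          rw [qoZ_out (by omega) (by omega)]
          push_cast
          linear_combination hB1z
      · -- B = 0, m = 1
        have hB0z : (B:ℤ) = 0 := by exact_mod_cast hB0
        have hmid2 : 2 ≤ 1+1 ∧ 1+1 < 2 + (2*r+1)*(r-1) := by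
          have : 0 < (2*r+1)*(r-1) := Nat.mul_pos (by omega) (by omega)
          omega
        refine ⟨2*1+1, List.mem_range.2 (by omega), ?_⟩
        rw [vQ_odd, show 2*1+1+1 = 2*(1+1) from by ring, vQ_even, Sym2.eq_swap,
            inl_eq_vl, inr_eq_vr', edge_vlvr_eq_iff, ← hA_def, ← hB_def]
        constructor
        · refine cast_eq _ _ (((2*r+1:ℕ):ℤ) * (-t-1)) (dvd_n_mul _) ?_
          rw [qeZ_mid hr hmid2]
          push_cast
          linear_combination -ht + hB0z - hd2z
        · refine cast_eq _ _ (((2*r+1:ℕ):ℤ) * (-(r:ℤ))) (dvd_n_mul _) ?_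
          rw [qoZ_out (by omega) (by omega)]
          push_cast
          linear_combination hB0z
      · -- 2 ≤ B, m = (2r+1)(r-1) + (2r+2-B)
        have hm_def : ∃ m, m = (2*r+1)*(r-1) + (2*r+1+1 - B) := ⟨_, rfl⟩
        obtain ⟨m, hm⟩ := hm_def
        have hmz : (m:ℤ) = (2*(r:ℤ)+1)*((r:ℤ)-1) + (2*(r:ℤ)+2-(B:ℤ)) := by
          have h1 := castSub1 hr hm
          have h2 : ((2*r+1+1 - B : ℕ):ℤ) = 2*(r:ℤ)+2-(B:ℤ) := by omega
          rw [h1, h2]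
        refine ⟨2*m+1, List.mem_range.2 (by omega), ?_⟩
        rw [vQ_odd, show 2*m+1+1 = 2*(m+1) from by ring, vQ_even, Sym2.eq_swap,
            inl_eq_vl, inr_eq_vr', edge_vlvr_eq_iff, ← hA_def, ← hB_def]
        constructor
        · refine cast_eq _ _ (((2*r+1:ℕ):ℤ) * (-t)) (dvd_n_mul _) ?_
          rw [qeZ_out (by omega) (by omega)]
          push_cast
          linear_combination -ht - hd2z + hmz
        · refine cast_eq _ _ ((0:ℤ)) (dvd_zero _) ?_
          rw [qoZ_out (by omega) (by omega)]
          push_cast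
          linear_combination hmz
    · -- d = 2c, c ≥ 2 : even-indexed middle edge of Q
      have hcz : (d:ℤ) = 2*(c:ℤ) := by exact_mod_cast hc
      have hcr : c ≤ r := by omega
      rcases Nat.lt_or_ge (A+2) (2*r+1) with hA2' | hA2'
      · -- m = (2r+1)(c-2) + A + 4
        have hm_def : ∃ m, m = (2*r+1)*(c-2) + (A + 4) := ⟨_, rfl⟩
        obtain ⟨m, hm⟩ := hm_def
        have hmz : (m:ℤ) = (2*(r:ℤ)+1)*((c:ℤ)-2) + (A:ℤ) + 4 := by
          have h1 : (m:ℤ) = (((2*r+1)*(c-2) : ℕ):ℤ) + ((A:ℤ) + 4) := by exact_mod_cast hm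
          rw [h1]; push_cast [Nat.cast_sub (show 2 ≤ c by omega)]; ring
        have hmmid : 2 ≤ m ∧ m < 2 + (2*r+1)*(r-1) := by
          have := lt_prod_of hr (q := c-2) (k := A+2) (by omega) (by omega)
          omega
        have hdiv : (m-2)/(2*r+1) = c-2 := by
          rw [show m - 2 = (2*r+1)*(c-2) + (A+2) from by omega]
          exact div_mul_add _ _ (by omega)
        refine ⟨2*m, List.mem_range.2 (by omega), ?_⟩
        rw [vQ_even, vQ_odd, inl_eq_vl, inr_eq_vr', edge_vlvr_eq_iff, ← hA_def, ← hB_def]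
        have hc2z : ((c-2 : ℕ):ℤ) = (c:ℤ)-2 := by omega
        constructor
        · refine cast_eq _ _ (((2*r+1:ℕ):ℤ) * (1-(c:ℤ))) (dvd_n_mul _) ?_
          rw [qeZ_mid hr hmmid]
          push_cast
          linear_combination -hmz
        · refine cast_eq _ _ (((2*r+1:ℕ):ℤ) * (t+2-(c:ℤ))) (dvd_n_mul _) ?_
          rw [qoZ_mid hmmid, hdiv]
          push_cast [hc2z]
          linear_combination ht - hmz + hcz
      · -- A+2 ≥ 2r+1 : m = (2r+1)(c-2) + 2 + (A+2-(2r+1))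
        have hm_def : ∃ m, m = (2*r+1)*(c-2) + 2 + (A + 2 - (2*r+1)) := ⟨_, rfl⟩
        obtain ⟨m, hm⟩ := hm_def
        have hmz : (m:ℤ) = (2*(r:ℤ)+1)*((c:ℤ)-2) + 2 + ((A:ℤ) + 2 - (2*(r:ℤ)+1)) := by
          have h1 : (m:ℤ) = (((2*r+1)*(c-2) : ℕ):ℤ) + 2 + ((A + 2 - (2*r+1) : ℕ):ℤ) := by
            exact_mod_cast hm
          rw [h1]
          have h2 : ((A + 2 - (2*r+1) : ℕ):ℤ) = (A:ℤ) + 2 - (2*(r:ℤ)+1) := by omega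
          rw [h2]; push_cast [Nat.cast_sub (show 2 ≤ c by omega)]; ring
        have hmmid : 2 ≤ m ∧ m < 2 + (2*r+1)*(r-1) := by
          have := lt_prod_of hr (q := c-2) (k := A+2-(2*r+1)) (by omega) (by omega)
          omega
        have hdiv : (m-2)/(2*r+1) = c-2 := by
          rw [show m - 2 = (2*r+1)*(c-2) + (A+2-(2*r+1)) from by omega]
          exact div_mul_add _ _ (by omega)
        refine ⟨2*m, List.mem_range.2 (by omega), ?_⟩
        rw [vQ_even, vQ_odd, inl_eq_vl, inr_eq_vr', edge_vlvr_eq_iff, ← hA_def, ← hB_def]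
        have hc2z : ((c-2 : ℕ):ℤ) = (c:ℤ)-2 := by omega
        constructor
        · refine cast_eq _ _ (((2*r+1:ℕ):ℤ) * (2-(c:ℤ))) (dvd_n_mul _) ?_
          rw [qeZ_mid hr hmmid]
          push_cast
          linear_combination -hmz
        · refine cast_eq _ _ (((2*r+1:ℕ):ℤ) * (t+3-(c:ℤ))) (dvd_n_mul _) ?_
          rw [qoZ_mid hmmid, hdiv]
          push_cast [hc2z]
          linear_combination ht - hmz + hcz
  · obtain ⟨c, hc⟩ := hod
    have hcz : (d:ℤ) = 2*(c:ℤ)+1 := by exact_mod_cast hc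
    rcases Nat.eq_zero_or_pos c with hc0 | hc1
    · -- d = 1 : even-indexed outer edge of Q
      have hd1z : (d:ℤ) = 1 := by omega
      rcases (show A = 0 ∨ A = 2*r ∨ (1 ≤ A ∧ A ≤ 2*r-1) from by omega) with hA0 | hA2r | hAmid
      · have hA0z : (A:ℤ) = 0 := by exact_mod_cast hA0
        refine ⟨2*0, List.mem_range.2 (by omega), ?_⟩
        rw [vQ_even, vQ_odd, inl_eq_vl, inr_eq_vr', edge_vlvr_eq_iff, ← hA_def, ← hB_def]
        constructor
        · refine cast_eq _ _ (((2*r+1:ℕ):ℤ) * (-(r:ℤ))) (dvd_n_mul _) ?_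
          rw [qeZ_out (by omega) (by omega)]
          push_cast
          linear_combination hA0z
        · refine cast_eq _ _ (((2*r+1:ℕ):ℤ) * (t-(r:ℤ))) (dvd_n_mul _) ?_
          rw [qoZ_out (by omega) (by omega)]
          push_cast
          linear_combination ht + hA0z + hd1z
      · have hA2rz : (A:ℤ) = 2*(r:ℤ) := by exact_mod_cast hA2r
        refine ⟨2*1, List.mem_range.2 (by omega), ?_⟩
        rw [vQ_even, vQ_odd, inl_eq_vl, inr_eq_vr', edge_vlvr_eq_iff, ← hA_def, ← hB_def]
        constructor
        · refine cast_eq _ _ (((2*r+1:ℕ):ℤ) * (1-(r:ℤ))) (dvd_n_mul _) ?_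
          rw [qeZ_out (by omega) (by omega)]
          push_cast
          linear_combination hA2rz
        · refine cast_eq _ _ (((2*r+1:ℕ):ℤ) * (t+1-(r:ℤ))) (dvd_n_mul _) ?_
          rw [qoZ_out (by omega) (by omega)]
          push_cast
          linear_combination ht + hA2rz + hd1z
      · -- 1 ≤ A ≤ 2r-1 : m = (2r+1)(r-1) + (2r+1-A)
        have hm_def : ∃ m, m = (2*r+1)*(r-1) + (2*r+1 - A) := ⟨_, rfl⟩
        obtain ⟨m, hm⟩ := hm_def
        have hmz : (m:ℤ) = (2*(r:ℤ)+1)*((r:ℤ)-1) + (2*(r:ℤ)+1-(A:ℤ)) := by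
          have h1 := castSub1 hr hm
          have h2 : ((2*r+1 - A : ℕ):ℤ) = 2*(r:ℤ)+1-(A:ℤ) := by omega
          rw [h1, h2]
        refine ⟨2*m, List.mem_range.2 (by omega), ?_⟩
        rw [vQ_even, vQ_odd, inl_eq_vl, inr_eq_vr', edge_vlvr_eq_iff, ← hA_def, ← hB_def]
        constructor
        · refine cast_eq _ _ ((0:ℤ)) (dvd_zero _) ?_
          rw [qeZ_out (by omega) (by omega)]
          push_cast
          linear_combination hmz
        · refine cast_eq _ _ (((2*r+1:ℕ):ℤ) * t) (dvd_n_mul _) ?_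
          rw [qoZ_out (by omega) (by omega)]
          push_cast
          linear_combination ht + hmz + hd1z
    · -- d = 2c+1, c ≥ 1 : odd-indexed middle edge of Q
      have hcr : c ≤ r-1 := by omega
      rcases Nat.lt_or_ge B (2*c) with hBlt' | hBge
      · -- B < 2c : k = B + (2r+1) - 2c, m = (2r+1)(c-1) + 2 + k
        have hm_def : ∃ m, m = (2*r+1)*(c-1) + 2 + (B + (2*r+1) - 2*c) := ⟨_, rfl⟩
        obtain ⟨m, hm⟩ := hm_def
        have hmz : (m:ℤ) = (2*(r:ℤ)+1)*((c:ℤ)-1) + 2 + ((B:ℤ) + (2*(r:ℤ)+1) - 2*(c:ℤ)) := by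
          have h1 : (m:ℤ) = (((2*r+1)*(c-1) : ℕ):ℤ) + 2 + ((B + (2*r+1) - 2*c : ℕ):ℤ) := by
            exact_mod_cast hm
          rw [h1]
          have h2 : ((B + (2*r+1) - 2*c : ℕ):ℤ) = (B:ℤ) + (2*(r:ℤ)+1) - 2*(c:ℤ) := by omega
          rw [h2]; push_cast [Nat.cast_sub (show 1 ≤ c by omega)]; ring
        have hmmid : 2 ≤ m ∧ m < 2 + (2*r+1)*(r-1) := by
          have := lt_prod_of hr (q := c-1) (k := B + (2*r+1) - 2*c) (by omega) (by omega)
          omega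
        have hdiv : (m-2)/(2*r+1) = c-1 := by
          rw [show m - 2 = (2*r+1)*(c-1) + (B + (2*r+1) - 2*c) from by omega]
          exact div_mul_add _ _ (by omega)
        have hc1z : ((c-1 : ℕ):ℤ) = (c:ℤ)-1 := by omega
        refine ⟨2*m+1, List.mem_range.2 (by omega), ?_⟩
        rw [vQ_odd, show 2*m+1+1 = 2*(m+1) from by ring, vQ_even, Sym2.eq_swap,
            inl_eq_vl, inr_eq_vr', edge_vlvr_eq_iff, ← hA_def, ← hB_def]
        refine ⟨?_, ?_⟩
        · -- left vertex : qe (m+1)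
          by_cases hm1 : 2 ≤ m+1 ∧ m+1 < 2 + (2*r+1)*(r-1)
          · refine cast_eq _ _ (((2*r+1:ℕ):ℤ) * (-t-(c:ℤ)-1)) (dvd_n_mul _) ?_
            rw [qeZ_mid hr hm1]
            push_cast
            linear_combination -ht - hcz - hmz
          · have hmeq : m = 1 + (2*r+1)*(r-1) := by omega
            obtain ⟨s, hs⟩ : ∃ s, r - 1 = (c-1) + s := ⟨(r-1)-(c-1), by omega⟩
            have hsplit : (2*r+1)*(r-1) = (2*r+1)*(c-1) + (2*r+1)*s := by rw [hs]; ring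
            have hb : B = 2*c - 1 := by
              rcases (show s = 0 ∨ s = 1 ∨ 2 ≤ s from by omega) with h|h|h
              · subst h; omega
              · subst h; omega
              · have := Nat.mul_le_mul_left (2*r+1) h; omega
            have hbz : (B:ℤ) = 2*(c:ℤ) - 1 := by omega
            refine cast_eq _ _ (((2*r+1:ℕ):ℤ) * ((c:ℤ)-t-(r:ℤ))) (dvd_n_mul _) ?_
            rw [qeZ_out (by omega) hm1]
            push_cast
            linear_combination -ht - hcz + hmz + 2*hbz
        · refine cast_eq _ _ (((2*r+1:ℕ):ℤ) * (-(c:ℤ))) (dvd_n_mul _) ?_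
          rw [qoZ_mid hmmid, hdiv]
          push_cast [hc1z]
          linear_combination -hmz
      · -- B ≥ 2c : k = B - 2c, m = (2r+1)(c-1) + 2 + k
        have hm_def : ∃ m, m = (2*r+1)*(c-1) + 2 + (B - 2*c) := ⟨_, rfl⟩
        obtain ⟨m, hm⟩ := hm_def
        have hmz : (m:ℤ) = (2*(r:ℤ)+1)*((c:ℤ)-1) + 2 + ((B:ℤ) - 2*(c:ℤ)) := by
          have h1 : (m:ℤ) = (((2*r+1)*(c-1) : ℕ):ℤ) + 2 + ((B - 2*c : ℕ):ℤ) := by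
            exact_mod_cast hm
          rw [h1]
          have h2 : ((B - 2*c : ℕ):ℤ) = (B:ℤ) - 2*(c:ℤ) := by omega
          rw [h2]; push_cast [Nat.cast_sub (show 1 ≤ c by omega)]; ring
        have hmmid : 2 ≤ m ∧ m < 2 + (2*r+1)*(r-1) := by
          have := lt_prod_of hr (q := c-1) (k := B - 2*c) (by omega) (by omega)
          omega
        have hdiv : (m-2)/(2*r+1) = c-1 := by
          rw [show m - 2 = (2*r+1)*(c-1) + (B - 2*c) from by omega]
          exact div_mul_add _ _ (by omega)
        have hc1z : ((c-1 : ℕ):ℤ) = (c:ℤ)-1 := by omega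
        refine ⟨2*m+1, List.mem_range.2 (by omega), ?_⟩
        rw [vQ_odd, show 2*m+1+1 = 2*(m+1) from by ring, vQ_even, Sym2.eq_swap,
            inl_eq_vl, inr_eq_vr', edge_vlvr_eq_iff, ← hA_def, ← hB_def]
        refine ⟨?_, ?_⟩
        · by_cases hm1 : 2 ≤ m+1 ∧ m+1 < 2 + (2*r+1)*(r-1)
          · refine cast_eq _ _ (((2*r+1:ℕ):ℤ) * (-t-(c:ℤ))) (dvd_n_mul _) ?_
            rw [qeZ_mid hr hm1]
            push_cast
            linear_combination -ht - hcz - hmz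
          · have hmeq : m = 1 + (2*r+1)*(r-1) := by omega
            obtain ⟨s, hs⟩ : ∃ s, r - 1 = (c-1) + s := ⟨(r-1)-(c-1), by omega⟩
            have hsplit : (2*r+1)*(r-1) = (2*r+1)*(c-1) + (2*r+1)*s := by rw [hs]; ring
            have hb : B = 2*r + 2*c := by
              rcases (show s = 0 ∨ s = 1 ∨ 2 ≤ s from by omega) with h|h|h
              · subst h; omega
              · subst h; omega
              · have := Nat.mul_le_mul_left (2*r+1) h; omega
            have hbz : (B:ℤ) = 2*(r:ℤ) + 2*(c:ℤ) := by omega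
            refine cast_eq _ _ (((2*r+1:ℕ):ℤ) * ((c:ℤ)+1-t-(r:ℤ))) (dvd_n_mul _) ?_
            rw [qeZ_out (by omega) hm1]
            push_cast
            linear_combination -ht - hcz + hmz + 2*hbz
        · refine cast_eq _ _ (((2*r+1:ℕ):ℤ) * (1-(c:ℤ))) (dvd_n_mul _) ?_
          rw [qoZ_mid hmmid, hdiv]
          push_cast [hc1z]
          linear_combination -hmz

end KDE

namespace KDE

open Sum

variable {r : ℕ}

lemma eulP (hr : 2 ≤ r) [DecidableRel (Kstar (2*r+1)).Adj] : (circP hr).IsEulerian := by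
  apply isEulerian_of_coverage _ _ (covP hr)
  rw [Walk.length_edges, length_circP, card_edgeFinset_kstar]

lemma eulQ (hr : 2 ≤ r) [DecidableRel (Kstar (2*r+1)).Adj] : (circQ hr).IsEulerian := by
  apply isEulerian_of_coverage _ _ (covQ hr)
  rw [Walk.length_edges, length_circQ, card_edgeFinset_kstar]

/-- index-shift automorphism on `Fin (2r+1)` -/
def ae (r : ℕ) (c : ZMod (2*r+1)) : Fin (2*r+1) ≃ Fin (2*r+1) where
  toFun x := z2f r (f2z r x + c)
  invFun x := z2f r (f2z r x - c)
  left_inv x := by unfold z2f f2z; exact add_sub_cancel_right (G := ZMod (2*r+1)) _ _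
  right_inv x := by unfold z2f f2z; exact sub_add_cancel (G := ZMod (2*r+1)) _ _

/-- translation automorphism of the graph -/
def shiftIso (r : ℕ) (c : ZMod (2*r+1)) : Kstar (2*r+1) ≃g Kstar (2*r+1) where
  toEquiv := Equiv.sumCongr (ae r c) (ae r c)
  map_rel_iff' := by
    intro x y
    rcases x with x|x <;> rcases y with y|y <;>
      simp [ae, z2f, f2z, kadj_lr, kadj_rl, kadj_ll, kadj_rr]

/-- side-swap automorphism of the graph -/
def swapIso (r : ℕ) : Kstar (2*r+1) ≃g Kstar (2*r+1) where
  toEquiv := Equiv.sumComm _ _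
  map_rel_iff' := by
    intro x y
    rcases x with x|x <;> rcases y with y|y <;>
      simp [kadj_lr, kadj_rl, kadj_ll, kadj_rr, ne_comm]

lemma shiftIso_vl0 (c : ZMod (2*r+1)) : (shiftIso r c) (vl r 0) = inl (z2f r c) := by
  show inl (z2f r (f2z r (z2f r ((0:ℕ):ZMod (2*r+1))) + c)) = inl (z2f r c)
  unfold z2f f2z
  exact congrArg inl (show ((0:ℕ):ZMod (2*r+1)) + c = c by simp)

lemma swapIso_inl (x : Fin (2*r+1)) : (swapIso r) (inl x) = inr x := rfl

end KDE

open KDE Sum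

/-- The graph `K*_{2r+1,2r+1}` (complete bipartite minus a perfect matching),
`r ≥ 2`, is doubly Eulerian. -/
theorem Kstar_doublyEulerian (r : ℕ) (hr : 2 ≤ r) :
    DoublyEulerian (Kstar (2 * r + 1)) := by
  classical
  intro u
  have base : ∃ p q : (Kstar (2*r+1)).Walk (vl r 0) (vl r 0),
      p.IsEulerian ∧ q.IsEulerian ∧ Avoiding (Kstar (2*r+1)) p q :=
    ⟨circP hr, circQ hr, eulP hr, eulQ hr, avoidPQ hr⟩
  rcases u with x | x
  · have h1 := transport (shiftIso r (f2z r x)) _ base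
    apply exists_copy ?_ h1
    rw [shiftIso_vl0]
    rfl
  · have h1 := transport (swapIso r) _ (transport (shiftIso r (f2z r x)) _ base)
    apply exists_copy ?_ h1
    rw [shiftIso_vl0, swapIso_inl]
    rfl
end

section
/- An Eulerian graph with exactly one vertex of degree 4 and all other vertices of degree 2 (edge excess 1) is not doubly Eulerian. -/
open SimpleGraph

section AuxLemmas

variable {V : Type*} {G : SimpleGraph V}

lemma edges_getElem_eq {u v : V} (p : G.Walk u v) (i : ℕ) (h : i < p.length) :
    p.edges[i]'(by rwa [Walk.length_edges]) = s(p.getVert i, p.getVert (i+1)) := by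
  induction p generalizing i with
  | nil => simp at h
  | cons a q ih =>
    cases i with
    | zero => simp [Walk.edges_cons, Walk.getVert_zero, Walk.getVert_cons_succ]
    | succ n =>
      simp only [Walk.edges_cons, Walk.getVert_cons_succ]
      exact ih n (by simpa using h)

lemma trail_prev_ne_next {u v : V} {p : G.Walk u v} (hp : p.IsTrail)
    {j : ℕ} (h1 : 1 ≤ j) (h2 : j < p.length) :
    p.getVert (j-1) ≠ p.getVert (j+1) := by
  intro hcontra
  have hj1 : j - 1 < p.length := lt_of_le_of_lt (Nat.pred_le j) h2
  have e1 := edges_getElem_eq p (j-1) hj1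
  have e2 := edges_getElem_eq p j h2
  rw [Nat.sub_add_cancel h1] at e1
  have : p.edges[j-1]'(by rwa [Walk.length_edges]) = p.edges[j]'(by rwa [Walk.length_edges]) := by
    rw [e1, e2, hcontra, Sym2.eq_swap]
  have := hp.edges_nodup.getElem_inj_iff.mp this
  omega

lemma eq_of_adj_deg2 [Fintype V] [DecidableRel G.Adj] {v a b c : V}
    (hdeg : G.degree v = 2) (ha : G.Adj v a) (hb : G.Adj v b) (hc : G.Adj v c)
    (hac : a ≠ c) (hbc : b ≠ c) : a = b := by
  classical
  have hsub : ({a, c} : Finset V) ⊆ G.neighborFinset v := by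
    intro z hz
    simp only [Finset.mem_insert, Finset.mem_singleton] at hz
    rcases hz with rfl | rfl <;> simp [SimpleGraph.mem_neighborFinset, ha, hc]
  have hcard : ({a, c} : Finset V).card = 2 := by
    rw [Finset.card_insert_of_notMem (by simpa using hac), Finset.card_singleton]
  have heq : ({a, c} : Finset V) = G.neighborFinset v := by
    apply Finset.eq_of_subset_of_card_le hsub
    rw [hcard]; rw [G.card_neighborFinset_eq_degree, hdeg]
  have : b ∈ ({a, c} : Finset V) := heq ▸ (by simpa [SimpleGraph.mem_neighborFinset] using hb)
  simp only [Finset.mem_insert, Finset.mem_singleton] at this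
  tauto

/-- determinism: in a trail, at an interior degree-2 vertex, the next vertex is
the unique neighbor different from the previous one. -/
lemma trail_next_eq [Fintype V] [DecidableRel G.Adj] {u v : V} {p : G.Walk u v}
    (hp : p.IsTrail) {j : ℕ} (h1 : 1 ≤ j) (h2 : j < p.length)
    (hdeg : G.degree (p.getVert j) = 2) {w : V}
    (hw : G.Adj (p.getVert j) w) (hwp : w ≠ p.getVert (j-1)) :
    p.getVert (j+1) = w := by
  have hadj1 : G.Adj (p.getVert j) (p.getVert (j+1)) := p.adj_getVert_succ h2
  have hadj0 : G.Adj (p.getVert j) (p.getVert (j-1)) := by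
    have := p.adj_getVert_succ (i := j - 1) (lt_of_le_of_lt (Nat.pred_le j) h2)
    rw [Nat.sub_add_cancel h1] at this
    exact this.symm
  exact eq_of_adj_deg2 hdeg hadj1 hw hadj0 (trail_prev_ne_next hp h1 h2).symm hwp

/-- forced walk along a degree-2 corridor -/
lemma forced_walk [Fintype V] [DecidableRel G.Adj] (x : V)
    (hother : ∀ y : V, y ≠ x → G.degree y = 2)
    (c : ℕ → V) (n : ℕ)
    (hadj : ∀ j, j < n → G.Adj (c j) (c (j+1)))
    (hne : ∀ j, 0 < j → j < n → c (j-1) ≠ c (j+1))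
    (hnx : ∀ j, 0 < j → j < n → c j ≠ x)
    {a : V} (r : G.Walk a a) (hrt : r.IsTrail) (hrl : n ≤ r.length)
    (h0 : r.getVert 0 = c 0) (h1 : r.getVert 1 = c 1) :
    ∀ j, j ≤ n → r.getVert j = c j := by
  have main : ∀ j, j + 1 ≤ n → r.getVert j = c j ∧ r.getVert (j+1) = c (j+1) := by
    intro j
    induction j with
    | zero => intro _; exact ⟨h0, h1⟩
    | succ i ih =>
      intro hin
      obtain ⟨hi, hi1⟩ := ih (by omega)
      refine ⟨hi1, ?_⟩
      have hdeg : G.degree (r.getVert (i+1)) = 2 := by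
        rw [hi1]; exact hother _ (hnx (i+1) (by omega) (by omega))
      have := trail_next_eq hrt (j := i+1) (by omega) (by omega) hdeg
        (w := c (i+2)) (by rw [hi1]; exact hadj (i+1) (by omega)) ?_
      · exact this
      · rw [Nat.add_sub_cancel, hi]
        have := hne (i+1) (by omega) (by omega)
        simpa using this.symm
  intro j hj
  match j with
  | 0 => exact h0
  | (i+1) => exact (main i hj).2

lemma eulerian_length_eq [Fintype V] [DecidableEq V] [DecidableRel G.Adj]
    {a b a' b' : V} {p : G.Walk a b} {q : G.Walk a' b'}
    (hp : p.IsEulerian) (hq : q.IsEulerian) : p.length = q.length := by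
  classical
  have h1 : p.edges.toFinset = q.edges.toFinset := by
    ext e
    simp [List.mem_toFinset, hp.mem_edges_iff, hq.mem_edges_iff]
  have l1 : p.edges.toFinset.card = p.edges.length := List.toFinset_card_of_nodup hp.isTrail.edges_nodup
  have l2 : q.edges.toFinset.card = q.edges.length := List.toFinset_card_of_nodup hq.isTrail.edges_nodup
  rw [← p.length_edges, ← q.length_edges, ← l1, ← l2, h1]

end AuxLemmas

/-- A connected graph with exactly one vertex of degree 4 and all other vertices
of degree 2 (edge excess 1) is not doubly Eulerian. -/
theorem not_doublyEulerian_one_deg_four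
    {V : Type*} [Fintype V] [DecidableEq V] (G : SimpleGraph V) [DecidableRel G.Adj]
    (hconn : G.Connected) (x : V) (hx : G.degree x = 4)
    (hother : ∀ y : V, y ≠ x → G.degree y = 2) :
    ¬ DoublyEulerian G := by
  intro hDE
  obtain ⟨r0, r0', hr0, -, -⟩ := hDE x
  have hL0pos : 0 < r0.length := by
    by_contra h
    have h0 : r0.edges.length = 0 := by rw [r0.length_edges]; omega
    obtain ⟨y, hxy⟩ : ∃ y, G.Adj x y := by rw [← G.degree_pos_iff_exists_adj]; omega
    have : s(x, y) ∈ r0.edges := hr0.mem_edges_iff.mpr (G.mem_edgeSet.mpr hxy)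
    rw [List.length_eq_zero_iff] at h0
    simp [h0] at this
  have hex : ∃ j, 0 < j ∧ r0.getVert j = x := ⟨r0.length, hL0pos, r0.getVert_length⟩
  set m := Nat.find hex with hmdef
  obtain ⟨hm0, hmx⟩ : 0 < m ∧ r0.getVert m = x := Nat.find_spec hex
  have hmin : ∀ j, 0 < j → j < m → r0.getVert j ≠ x := by
    intro j hj0 hjm hjx
    exact Nat.find_min hex hjm ⟨hj0, hjx⟩
  have hmL : m ≤ r0.length := Nat.find_le ⟨hL0pos, r0.getVert_length⟩
  have hm2 : 2 ≤ m := by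
    by_contra h
    have hm1 : m = 1 := by omega
    have hadj := r0.adj_getVert_succ (i := 0) hL0pos
    rw [r0.getVert_zero, show (0+1 : ℕ) = 1 from rfl, ← hm1, hmx] at hadj
    exact G.loopless.irrefl x hadj
  set s := m / 2 with hsdef
  set t := m - s with htdef
  have hs1 : 1 ≤ s := by omega
  have hsm : s < m := by omega
  have hst : s ≤ t := by omega
  have htm : t ≤ m - 1 := by omega
  set u := r0.getVert s with hudef
  have hune : u ≠ x := hmin s hs1 hsm
  obtain ⟨p, q, hp, hq, hav⟩ := hDE u
  have hpl : p.length = r0.length := eulerian_length_eq hp hr0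
  have hql : q.length = r0.length := eulerian_length_eq hq hr0
  -- every eulerian circuit from u is forced along r0, forwards or backwards
  have key : ∀ (r : G.Walk u u), r.IsEulerian →
      (∀ j, j ≤ t → r.getVert j = r0.getVert (s + j)) ∨
      (∀ j, j ≤ s → r.getVert j = r0.getVert (s - j)) := by
    intro r hr
    have hrl : r.length = r0.length := eulerian_length_eq hr hr0
    have h1adj : G.Adj u (r.getVert 1) := by
      have := r.adj_getVert_succ (i := 0) (by omega)
      rwa [r.getVert_zero] at this
    have hadjp : G.Adj u (r0.getVert (s + 1)) := r0.adj_getVert_succ (by omega)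
    have hadjm : G.Adj u (r0.getVert (s - 1)) := by
      have h := r0.adj_getVert_succ (i := s - 1) (by omega)
      rw [Nat.sub_add_cancel hs1] at h
      exact h.symm
    have hdegu : G.degree u = 2 := hother u hune
    have hne1 : r0.getVert (s - 1) ≠ r0.getVert (s + 1) :=
      trail_prev_ne_next hr0.isTrail hs1 (by omega)
    by_cases hdir : r.getVert 1 = r0.getVert (s - 1)
    · right
      refine forced_walk x hother (fun j => r0.getVert (s - j)) s ?_ ?_ ?_ r hr.isTrail
        (by omega) (by simpa using hudef) (by simpa using hdir)
      · intro j hj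
        have h := r0.adj_getVert_succ (i := s - j - 1) (by omega)
        rw [show s - j - 1 + 1 = s - j by omega] at h
        simpa [show s - (j+1) = s - j - 1 by omega] using h.symm
      · intro j hj0 hjs
        have h := trail_prev_ne_next hr0.isTrail (j := s - j) (by omega) (by omega)
        simpa [show s - (j-1) = s - j + 1 by omega, show s - (j+1) = s - j - 1 by omega]
          using h.symm
      · intro j hj0 hjs
        exact hmin (s - j) (by omega) (by omega)
    · left
      have h1 : r.getVert 1 = r0.getVert (s + 1) :=
        eq_of_adj_deg2 hdegu h1adj hadjp hadjm hdir hne1.symm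
      refine forced_walk x hother (fun j => r0.getVert (s + j)) t ?_ ?_ ?_ r hr.isTrail
        (by omega) (by simpa using hudef) (by simpa using h1)
      · intro j hj
        exact r0.adj_getVert_succ (by omega)
      · intro j hj0 hjt
        have h := trail_prev_ne_next hr0.isTrail (j := s + j) (by omega) (by omega)
        simpa [show s + (j-1) = s + j - 1 by omega, show s + (j+1) = s + j + 1 by omega] using h
      · intro j hj0 hjt
        exact hmin (s + j) (by omega) (by omega)
  have hparity : s + s = m ∨ s + s = m - 1 := by omega
  have hadjlast : G.Adj (r0.getVert (m - 1)) x := by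
    have h := r0.adj_getVert_succ (i := m - 1) (by omega)
    rwa [show m - 1 + 1 = m by omega, hmx] at h
  rcases key p hp with hP | hP <;> rcases key q hq with hQ | hQ
  · -- both forwards: both at x at time t
    refine (hav t (by omega) (by omega)).1 ?_
    rw [hP t le_rfl, hQ t le_rfl, show s + t = m by omega, hmx]
  · -- p forwards, q backwards
    have hqs : q.getVert s = x := by
      rw [hQ s le_rfl, Nat.sub_self, r0.getVert_zero]
    have hps : p.getVert s = r0.getVert (s + s) := hP s hst
    rcases hparity with hpar | hpar
    · refine (hav s (by omega) (by omega)).1 ?_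
      rw [hps, hqs, hpar, hmx]
    · refine (hav s (by omega) (by omega)).2 ?_
      rw [hps, hqs, hpar]
      exact hadjlast
  · -- p backwards, q forwards
    have hps : p.getVert s = x := by
      rw [hP s le_rfl, Nat.sub_self, r0.getVert_zero]
    have hqs : q.getVert s = r0.getVert (s + s) := hQ s hst
    rcases hparity with hpar | hpar
    · refine (hav s (by omega) (by omega)).1 ?_
      rw [hps, hqs, hpar, hmx]
    · refine (hav s (by omega) (by omega)).2 ?_
      rw [hps, hqs, hpar]
      exact hadjlast.symm
  · -- both backwards: both at x at time s
    refine (hav s (by omega) (by omega)).1 ?_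
    rw [hP s le_rfl, hQ s le_rfl]
end

section
/- An Eulerian graph with exactly one vertex of degree 6 and all other vertices of degree 2 is not doubly Eulerian. -/
open SimpleGraph
set_option linter.unusedSectionVars false
set_option maxHeartbeats 1000000

namespace AvoidAux

variable {V : Type*} [Fintype V] [DecidableEq V] {G : SimpleGraph V} [DecidableRel G.Adj]

lemma firstEdge_mem {u v : V} (p : G.Walk u v) (h : 0 < p.length) :
    s(u, p.getVert 1) ∈ p.edges := by
  cases p with
  | nil => simp at h
  | cons h' q => simp [Walk.edges_cons]

lemma trail_no_backtrack {u v : V} {p : G.Walk u v} (hp : p.IsTrail) :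
    ∀ i : ℕ, 1 ≤ i → i + 1 ≤ p.length → p.getVert (i + 1) ≠ p.getVert (i - 1) := by
  induction p with
  | nil => intro i h1 h2; simp at h2
  | @cons u b v h q ih =>
    intro i h1 h2
    match i, h1 with
    | 1, _ =>
      simp only [Walk.getVert_cons_succ]
      intro hcontra
      have hq : 0 < q.length := by simp [Walk.length_cons] at h2; omega
      have hmem := firstEdge_mem q hq
      rw [hcontra] at hmem
      have : s(u, b) ∈ q.edges := by rwa [Sym2.eq_swap] at hmem
      exact ((Walk.isTrail_cons h q).mp hp).2 this
    | (k+2), _ =>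
      have hq : (k+1) + 1 ≤ q.length := by simp [Walk.length_cons] at h2; omega
      have := ih ((Walk.isTrail_cons h q).mp hp).1 (k+1) (by omega) hq
      simpa using this

lemma deg_two_eq_or {c a b z : V} (hdeg : G.degree c = 2) (hab : a ≠ b)
    (ha : G.Adj c a) (hb : G.Adj c b) (hz : G.Adj c z) : z = a ∨ z = b := by
  have hsub : ({a, b} : Finset V) ⊆ G.neighborFinset c := by
    intro y hy
    simp only [Finset.mem_insert, Finset.mem_singleton] at hy
    rcases hy with rfl | rfl <;> simp [SimpleGraph.mem_neighborFinset, ha, hb]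
  have hcard : (G.neighborFinset c).card ≤ ({a, b} : Finset V).card := by
    rw [Finset.card_pair hab, SimpleGraph.card_neighborFinset_eq_degree, hdeg]
  have := Finset.eq_of_subset_of_card_le hsub hcard
  have hz' : z ∈ ({a, b} : Finset V) := by
    rw [this]; simpa [SimpleGraph.mem_neighborFinset] using hz
  simpa using hz'

/-- The neighbor of `c` other than `v` (junk value if none exists). -/
noncomputable def other (G : SimpleGraph V) (c v : V) : V :=
  letI : Nonempty V := ⟨c⟩
  Classical.epsilon fun z => G.Adj c z ∧ z ≠ v

lemma other_spec {c v : V} (hdeg : G.degree c = 2) (h : G.Adj c v) :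
    G.Adj c (other G c v) ∧ other G c v ≠ v := by
  have h2 : 1 < (G.neighborFinset c).card := by
    rw [SimpleGraph.card_neighborFinset_eq_degree, hdeg]; omega
  obtain ⟨z, hz, hzv⟩ := Finset.exists_mem_ne h2 v
  have hex : ∃ z, G.Adj c z ∧ z ≠ v :=
    ⟨z, (SimpleGraph.mem_neighborFinset G c z).mp hz, hzv⟩
  exact Classical.epsilon_spec hex

/-- The forced sequence: start at `x`, go to `y0`, and always continue with
the other neighbor. -/
noncomputable def seq (G : SimpleGraph V) (x y0 : V) : ℕ → V × V
  | 0 => (x, y0)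
  | (k+1) => ((seq G x y0 k).2, other G (seq G x y0 k).2 (seq G x y0 k).1)

noncomputable def w (G : SimpleGraph V) (x y0 : V) (k : ℕ) : V := (seq G x y0 k).1

lemma w_zero (x y0 : V) : w G x y0 0 = x := rfl
lemma w_one (x y0 : V) : w G x y0 1 = y0 := rfl
lemma w_succ_succ (x y0 : V) (k : ℕ) :
    w G x y0 (k+2) = other G (w G x y0 (k+1)) (w G x y0 k) := rfl


variable {x y0 : V}

lemma w_adj (hdeg : ∀ y, y ≠ x → G.degree y = 2) (hxy : G.Adj x y0) :
    ∀ k : ℕ, (∀ i, 0 < i → i ≤ k → w G x y0 i ≠ x) →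
      G.Adj (w G x y0 k) (w G x y0 (k+1)) ∧
      (1 ≤ k → w G x y0 (k+1) ≠ w G x y0 (k-1)) := by
  intro k
  induction k with
  | zero =>
    intro _
    exact ⟨by rw [w_zero, w_one]; exact hxy, by omega⟩
  | succ k ih =>
    intro hk
    have h1 : w G x y0 (k+1) ≠ x := hk (k+1) (by omega) le_rfl
    have hadj : G.Adj (w G x y0 k) (w G x y0 (k+1)) :=
      (ih (fun i hi hik => hk i hi (by omega))).1
    have hspec := other_spec (hdeg _ h1) hadj.symm
    rw [← w_succ_succ] at hspec
    exact ⟨hspec.1, fun _ => by simpa using hspec.2⟩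

lemma w_inj (hdeg : ∀ y, y ≠ x → G.degree y = 2) (hxy : G.Adj x y0) :
    ∀ j : ℕ, (∀ i, 0 < i → i ≤ j → w G x y0 i ≠ x) →
      ∀ i < j, w G x y0 i ≠ w G x y0 j := by
  intro j
  induction j using Nat.strong_induction_on with
  | _ j IH =>
    intro hj i hij heq
    have hj0 : 0 < j := by omega
    rcases Nat.eq_zero_or_pos i with rfl | hi0
    · exact hj j hj0 le_rfl (by rw [← heq, w_zero])
    have hwix : w G x y0 i ≠ x := hj i hi0 (by omega)
    have hAi := w_adj hdeg hxy i (fun m hm hmi => hj m hm (by omega))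
    have hAim := w_adj hdeg hxy (i-1) (fun m hm hmi => hj m hm (by omega))
    have hAjm := w_adj hdeg hxy (j-1) (fun m hm hmi => hj m hm (by omega))
    have hadjjm : G.Adj (w G x y0 (j-1)) (w G x y0 j) := by
      have := hAjm.1; rwa [Nat.sub_add_cancel hj0] at this
    have hadjim : G.Adj (w G x y0 (i-1)) (w G x y0 i) := by
      have := hAim.1; rwa [Nat.sub_add_cancel hi0] at this
    have hne : w G x y0 (i-1) ≠ w G x y0 (i+1) := fun h => (hAi.2 hi0) h.symm
    have hz : G.Adj (w G x y0 i) (w G x y0 (j-1)) := by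
      rw [heq]; exact hadjjm.symm
    rcases deg_two_eq_or (hdeg _ hwix) hne hadjim.symm hAi.1 hz with hc | hc
    · -- w (j-1) = w (i-1)
      have hlt : i - 1 < j - 1 := by omega
      exact IH (j-1) (by omega) (fun m hm hmj => hj m hm (by omega)) (i-1) hlt hc.symm
    · -- w (j-1) = w (i+1)
      rcases Nat.lt_or_ge (i+1) (j-1) with hlt | hge
      · exact IH (j-1) (by omega) (fun m hm hmj => hj m hm (by omega)) (i+1) hlt hc.symm
      rcases Nat.eq_or_lt_of_le hge with heq2 | hlt2
      · -- i + 1 = j - 1, so j = i + 2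
        have hj2 : j = i + 2 := by omega
        have h2 := hAjm.2 (by omega)
        rw [Nat.sub_add_cancel hj0] at h2
        have : j - 1 - 1 = i := by omega
        rw [this] at h2
        exact h2 heq.symm
      · -- i + 1 > j - 1, so i + 1 = j
        have hij1 : i + 1 = j := by omega
        have := hAi.1
        rw [hij1, ← heq] at this
        exact G.loopless.irrefl _ this

lemma forced_walk {u : V} {p : G.Walk u u} (hp : p.IsTrail)
    (hdeg : ∀ y, y ≠ x → G.degree y = 2)
    (f : ℕ → V) (t : ℕ) (hlen : t < p.length)
    (hf0 : f 0 = u)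
    (hadjf : ∀ i < t, G.Adj (f i) (f (i+1)))
    (hnx : ∀ i, 0 < i → i < t → f i ≠ x)
    (hnb : ∀ i, 0 < i → i < t → f (i+1) ≠ f (i-1))
    (h1 : p.getVert 1 = f 1) :
    ∀ i ≤ t, p.getVert i = f i := by
  intro i
  induction i using Nat.strong_induction_on with
  | _ i IH =>
    intro hit
    match i with
    | 0 => simpa using hf0.symm
    | 1 => exact h1
    | (k+2) =>
      have e1 : p.getVert (k+1) = f (k+1) := IH (k+1) (by omega) (by omega)
      have e0 : p.getVert k = f k := IH k (by omega) (by omega)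
      have hfx : f (k+1) ≠ x := hnx (k+1) (by omega) (by omega)
      have hadj1 : G.Adj (f (k+1)) (f (k+2)) := hadjf (k+1) (by omega)
      have hadj0 : G.Adj (f (k+1)) (f k) := (hadjf k (by omega)).symm
      have hne : f k ≠ f (k+2) := fun h => (hnb (k+1) (by omega) (by omega)) (by simpa using h.symm)
      have hz : G.Adj (f (k+1)) (p.getVert (k+2)) := by
        rw [← e1]; exact p.adj_getVert_succ (by omega)
      rcases deg_two_eq_or (hdeg _ hfx) hne hadj0 hadj1 hz with hcase | hcase
      · exfalso
        have hbt := trail_no_backtrack hp (k+1) (by omega) (by omega)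
        exact hbt (by rw [show k+1+1 = k+2 from rfl, show k+1-1 = k from rfl, hcase, ← e0])
      · exact hcase

lemma euler_length {u v : V} {p : G.Walk u v} (hp : p.IsEulerian) :
    p.length = G.edgeFinset.card := by
  classical
  rw [← hp.edgesFinset_eq]
  show p.length = Multiset.card (↑p.edges : Multiset (Sym2 V))
  simp [Walk.length_edges]

end AvoidAux


/-- A connected graph with exactly one vertex of degree 6 and all other vertices
of degree 2 is not doubly Eulerian. -/
theorem not_doublyEulerian_one_deg_six
    {V : Type*} [Fintype V] [DecidableEq V] (G : SimpleGraph V) [DecidableRel G.Adj]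
    (hconn : G.Connected) (x : V) (hx : G.degree x = 6)
    (hother : ∀ y : V, y ≠ x → G.degree y = 2) :
    ¬ DoublyEulerian G := by
  classical
  intro hDE
  obtain ⟨y0, hy0⟩ := Finset.card_pos.mp (show 0 < (G.neighborFinset x).card by
    rw [SimpleGraph.card_neighborFinset_eq_degree, hx]; omega)
  have hxy : G.Adj x y0 := (SimpleGraph.mem_neighborFinset G x y0).mp hy0
  set W := AvoidAux.w G x y0 with hWdef
  -- the forced path from x eventually returns to x
  have hret : ∃ m, 0 < m ∧ W m = x := by
    by_contra hno
    push_neg at hno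
    have hinj : Function.Injective fun i : Fin (Fintype.card V + 1) => W i := by
      intro i j hij
      by_contra hne
      rcases lt_trichotomy i.val j.val with h | h | h
      · exact AvoidAux.w_inj hother hxy j (fun m hm _ => hno m hm) i h hij
      · exact hne (Fin.ext h)
      · exact AvoidAux.w_inj hother hxy i (fun m hm _ => hno m hm) j h hij.symm
    have hcard := Fintype.card_le_of_injective _ hinj
    simp only [Fintype.card_fin] at hcard
    omega
  set a := Nat.find hret with hadef
  have haspec : 0 < a ∧ W a = x := Nat.find_spec hret
  have hax : ∀ m, 0 < m → m < a → W m ≠ x := by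
    intro m hm hma h
    exact Nat.find_min hret hma ⟨hm, h⟩
  have hy0x : y0 ≠ x := hxy.ne'
  have hW1 : W 1 = y0 := rfl
  have hW0 : W 0 = x := rfl
  have ha3 : 3 ≤ a := by
    rcases haspec with ⟨ha0, haX⟩
    have ha1 : a ≠ 1 := fun h => hy0x (by rw [h] at haX; rwa [hW1] at haX)
    have ha2 : a ≠ 2 := by
      intro h
      have h2 : W 2 = AvoidAux.other G (W 1) (W 0) := AvoidAux.w_succ_succ x y0 0
      rw [hW1, hW0] at h2
      have hsp := AvoidAux.other_spec (G := G) (hother y0 hy0x) hxy.symm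
      rw [h] at haX
      rw [h2] at haX
      exact hsp.2 haX
    omega
  -- distinct vertices give a card bound
  have hcardV : a ≤ Fintype.card V := by
    have hinj : Function.Injective fun i : Fin a => W i := by
      intro i j hij
      by_contra hne
      rcases lt_trichotomy i.val j.val with h | h | h
      · exact AvoidAux.w_inj hother hxy j (fun m hm hmj => hax m hm (by omega)) i h hij
      · exact hne (Fin.ext h)
      · exact AvoidAux.w_inj hother hxy i (fun m hm hmj => hax m hm (by omega)) j h hij.symm
    simpa using Fintype.card_le_of_injective _ hinj
  -- edge count
  have hsum : ∑ v, G.degree v = 6 + 2 * (Fintype.card V - 1) := by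
    rw [← Finset.add_sum_erase _ _ (Finset.mem_univ x), hx]
    congr 1
    rw [Finset.sum_congr rfl (fun y hy => hother y (Finset.ne_of_mem_erase hy)),
      Finset.sum_const, Finset.card_erase_of_mem (Finset.mem_univ x), Finset.card_univ,
      smul_eq_mul, mul_comm]
  have hE : G.edgeFinset.card = Fintype.card V + 2 := by
    have h2 := SimpleGraph.sum_degrees_eq_twice_card_edges G
    rw [hsum] at h2
    have hn : 0 < Fintype.card V := Fintype.card_pos_iff.mpr ⟨x⟩
    omega
  set s := (a + 1) / 2 with hsdef
  set t := a - s with htdef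
  have hs1 : 1 ≤ s := by omega
  have hslt : s < a := by omega
  have ht1 : 1 ≤ t := by omega
  have hts : t ≤ s := by omega
  have hst : s + t = a := by omega
  have hd : s - t = 0 ∨ s - t = 1 := by omega
  have hu : W s ≠ x := hax s (by omega) hslt
  have HK : ∀ k, k < a → ∀ i, 0 < i → i ≤ k → W i ≠ x :=
    fun k hk i hi hik => hax i hi (by omega)
  obtain ⟨p, q, hp, hq, hav⟩ := hDE (W s)
  have hlp : p.length = Fintype.card V + 2 := (AvoidAux.euler_length hp).trans (by rw [hE])
  have hlq : q.length = Fintype.card V + 2 := (AvoidAux.euler_length hq).trans (by rw [hE])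
  have hAdj_up : G.Adj (W s) (W (s + 1)) :=
    (AvoidAux.w_adj hother hxy s (HK s hslt)).1
  have hAdj_dn : G.Adj (W s) (W (s - 1)) := by
    have h := (AvoidAux.w_adj hother hxy (s - 1) (HK (s - 1) (by omega))).1
    rw [Nat.sub_add_cancel hs1] at h
    exact h.symm
  have hne_ud : W (s - 1) ≠ W (s + 1) := by
    have h := (AvoidAux.w_adj hother hxy s (HK s hslt)).2 hs1
    exact fun hh => h hh.symm
  -- the key collision argument
  have key : ∀ p' q' : G.Walk (W s) (W s), p'.IsTrail → q'.IsTrail →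
      p'.length = Fintype.card V + 2 → q'.length = Fintype.card V + 2 →
      Avoiding G p' q' → p'.getVert 1 = W (s + 1) → q'.getVert 1 = W (s - 1) → False := by
    intro p' q' hpt hqt hlp' hlq' hav' h1p h1q
    have fup := AvoidAux.forced_walk hpt hother (fun i => W (s + i)) t
      (by omega) (by norm_num)
      (fun i hi => by
        have h := (AvoidAux.w_adj hother hxy (s + i) (HK (s + i) (by omega))).1
        exact h)
      (fun i hi hit => hax (s + i) (by omega) (by omega))
      (fun i hi hit => by
        have h := (AvoidAux.w_adj hother hxy (s + i) (HK (s + i) (by omega))).2 (by omega)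
        have h2 : s + (i - 1) = s + i - 1 := by omega
        simp only [h2]
        exact h)
      h1p
    have fdn := AvoidAux.forced_walk hqt hother (fun i => W (s - i)) t
      (by omega) (by norm_num)
      (fun i hi => by
        have h := (AvoidAux.w_adj hother hxy (s - i - 1) (HK (s - i - 1) (by omega))).1
        have h2 : s - i - 1 + 1 = s - i := by omega
        rw [h2] at h
        have h3 : s - (i + 1) = s - i - 1 := by omega
        simp only [h3]
        exact h.symm)
      (fun i hi hit => hax (s - i) (by omega) (by omega))
      (fun i hi hit => by
        have h := (AvoidAux.w_adj hother hxy (s - i) (HK (s - i) (by omega))).2 (by omega)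
        have h2 : s - (i + 1) = s - i - 1 := by omega
        have h3 : s - (i - 1) = s - i + 1 := by omega
        simp only [h2, h3]
        exact fun hh => h hh.symm)
      h1q
    have hpt' : p'.getVert t = x := by
      have h := fup t le_rfl
      rw [h, hst, haspec.2]
    have hqt' : q'.getVert t = W (s - t) := fdn t le_rfl
    have hAv := hav' t (by omega) (by omega)
    rcases hd with h0 | h1
    · exact hAv.1 (by rw [hpt', hqt', h0, hW0])
    · exact hAv.2 (by rw [hpt', hqt', h1, hW1]; exact hxy)
  -- classify the first steps of p and q
  have hp1adj : G.Adj (W s) (p.getVert 1) := by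
    have h := p.adj_getVert_succ (show 0 < p.length by omega)
    simpa using h
  have hq1adj : G.Adj (W s) (q.getVert 1) := by
    have h := q.adj_getVert_succ (show 0 < q.length by omega)
    simpa using h
  have hp1 := AvoidAux.deg_two_eq_or (hother _ hu) hne_ud hAdj_dn hAdj_up hp1adj
  have hq1 := AvoidAux.deg_two_eq_or (hother _ hu) hne_ud hAdj_dn hAdj_up hq1adj
  have hne1 : p.getVert 1 ≠ q.getVert 1 := (hav 1 one_pos (by omega)).1
  have havsym : Avoiding G q p := by
    intro i h0 hi
    have h := hav i h0 (by omega)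
    exact ⟨h.1.symm, fun hadj => h.2 hadj.symm⟩
  rcases hp1 with hp1 | hp1 <;> rcases hq1 with hq1 | hq1
  · exact hne1 (hp1.trans hq1.symm)
  · exact key q p hq.isTrail hp.isTrail hlq hlp havsym hq1 hp1
  · exact key p q hp.isTrail hq.isTrail hlp hlq hav hp1 hq1
  · exact hne1 (hp1.trans hq1.symm)
end
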